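/- arXiv:2302.07745 — 9 statements merged into one kernel-verified Lean document; each statement's English description precedes it below -/
import Mathlib

section
/- Let m ∈ ℕ, p ∈ (0,2], and φ = {φ_n}_{n=0}^∞ ∈ ℱ. Define Ψ₁(r) = p·((1−r^m)/(1+r^m))·φ₀(r) − 2Φ₁(r) and let R₁ be the minimal root of Ψ₁(r) = 0 in (0,1). Suppose Ψ₁(r) < 0 for all r in some interval (R₁, R₁+ε) with ε > 0. Then for every r ∈ (R₁, R₁+ε) there exist f ∈ ℬ (with Taylor coefficients a_n), ω ∈ ℬ_m, and z ∈ 𝔻 with |z| = r such that |f(ω(z))|^p·φ₀(r) + Σ_{n=1}^∞ |a_n|φ_n(r) + Σ_{n=1}^∞ |a_n|²·[φ_{2n}(r)/(1+|a₀|) + Φ_{2n+1}(r)] > φ₀(r); in fact one may take ω(z) = z^m and f(z) = (z+a)/(1+az) with a ∈ [0,1) sufficiently close to 1. -/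
open Filter Topology
set_option maxHeartbeats 2000000

lemma iterDeriv_pow_aux (m : ℕ) : ∀ k, k ≤ m →
    iteratedDeriv k (fun z : ℂ => z ^ m) = fun z => (m.descFactorial k : ℂ) * z ^ (m - k) := by
  intro k
  induction k with
  | zero => intro _; simp
  | succ k ih =>
    intro hk
    rw [iteratedDeriv_succ, ih (by omega)]
    funext z
    rw [deriv_const_mul _ ((differentiable_pow _).differentiableAt)]
    rw [deriv_pow_field]
    have h1 : m - k - 1 = m - (k + 1) := by omega
    have h2 : (m.descFactorial (k+1) : ℂ) = (m.descFactorial k : ℂ) * (m - k : ℕ) := by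
      rw [Nat.descFactorial_succ]; push_cast; ring
    rw [h1, h2]; ring



/-- Theorem 1 of the paper, sharpness part.
If `Ψ₁(r) < 0` on some interval `(R₁, R₁+ε)` to the right of the minimal root `R₁`,
then for every `r` in that interval there are `f ∈ ℬ`, `ω ∈ ℬ_m` and `z` with `|z| = r`
for which the Bohr-type quantity exceeds `φ₀(r)`; so the radius `R₁` cannot be improved. -/
theorem stmt_1
    (m : ℕ) (hm : 1 ≤ m) (p : ℝ) (hp0 : 0 < p) (hp2 : p ≤ 2)
    -- φ ∈ ℱ
    (φ : ℕ → ℝ → ℝ)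
    (hφc : ∀ n, ContinuousOn (φ n) (Set.Ico (0:ℝ) 1))
    (hφnn : ∀ n, ∀ r ∈ Set.Ico (0:ℝ) 1, 0 ≤ φ n r)
    (hφsum : ∀ r ∈ Set.Ico (0:ℝ) 1, Summable fun n => φ n r)
    (hφloc : TendstoLocallyUniformlyOn
      (fun N r => ∑ n ∈ Finset.range N, φ n r)
      (fun r => ∑' n, φ n r) Filter.atTop (Set.Ico (0:ℝ) 1))
    -- Ψ₁ and its minimal root R₁ in (0,1)
    (Ψ : ℝ → ℝ)
    (hΨ : ∀ r : ℝ, Ψ r = p * ((1 - r ^ m) / (1 + r ^ m)) * φ 0 r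
            - 2 * ∑' n : ℕ, φ (n + 1) r)
    (R₁ : ℝ) (hR₁ : R₁ ∈ Set.Ioo (0:ℝ) 1) (hroot : Ψ R₁ = 0)
    (hmin : ∀ r ∈ Set.Ioo (0:ℝ) 1, Ψ r = 0 → R₁ ≤ r)
    -- Ψ₁ < 0 on the interval (R₁, R₁ + ε) ⊆ (R₁, 1)
    (ε : ℝ) (hε : 0 < ε) (hRε : R₁ + ε ≤ 1)
    (hΨneg : ∀ r : ℝ, R₁ < r → r < R₁ + ε → Ψ r < 0) :
    ∀ r : ℝ, R₁ < r → r < R₁ + ε →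
      ∃ (f : ℂ → ℂ) (a : ℕ → ℂ) (ω : ℂ → ℂ) (z : ℂ),
        (∀ w ∈ Metric.ball (0:ℂ) 1, HasSum (fun n => a n * w ^ n) (f w)) ∧
        (∀ w ∈ Metric.ball (0:ℂ) 1, ‖f w‖ ≤ 1) ∧
        DifferentiableOn ℂ ω (Metric.ball (0:ℂ) 1) ∧
        (∀ w ∈ Metric.ball (0:ℂ) 1, ‖ω w‖ ≤ 1) ∧
        (∀ k < m, iteratedDeriv k ω 0 = 0) ∧
        iteratedDeriv m ω 0 ≠ 0 ∧
        z ∈ Metric.ball (0:ℂ) 1 ∧ ‖z‖ = r ∧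
        φ 0 r < ‖f (ω z)‖ ^ p * φ 0 r
          + (∑' n : ℕ, ‖a (n + 1)‖ * φ (n + 1) r)
          + (∑' n : ℕ, ‖a (n + 1)‖ ^ 2 *
              (φ (2 * (n + 1)) r / (1 + ‖a 0‖)
                + ∑' k : ℕ, φ (2 * (n + 1) + 1 + k) r)) := by
  intro r hr1 hr2
  have hr0 : 0 < r := lt_trans hR₁.1 hr1
  have hrlt1 : r < 1 := lt_of_lt_of_le hr2 hRε
  have hrI : r ∈ Set.Ico (0:ℝ) 1 := ⟨hr0.le, hrlt1⟩
  set ρ : ℝ := r ^ m with hρdef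
  have hρ0 : 0 < ρ := pow_pos hr0 m
  have hρ1 : ρ < 1 := pow_lt_one₀ hr0.le hrlt1 (by omega)
  set c₀ : ℝ := φ 0 r with hc₀def
  have hc₀ : 0 ≤ c₀ := hφnn 0 r hrI
  set Φ₁ : ℝ := ∑' n : ℕ, φ (n + 1) r with hΦ₁def
  have hΨr : p * (1 - ρ) / (1 + ρ) * c₀ < 2 * Φ₁ := by
    have h := hΨneg r hr1 hr2
    rw [hΨ r] at h
    have h2 : p * ((1 - ρ) / (1 + ρ)) * c₀ - 2 * Φ₁ < 0 := h
    have h3 : p * ((1 - ρ) / (1 + ρ)) * c₀ = p * (1 - ρ) / (1 + ρ) * c₀ := by ring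
    linarith
  have hS1 : Summable (fun n => φ (n + 1) r) :=
    (summable_nat_add_iff 1).mpr (hφsum r hrI)
  -- the partial sum function S
  set S : ℝ → ℝ := fun a => ∑' n : ℕ, a ^ n * φ (n + 1) r with hSdef
  -- limit of S as a → 1⁻
  have hIoo : Set.Ioo (0:ℝ) 1 ∈ 𝓝[<] (1:ℝ) :=
    Ioo_mem_nhdsLT_of_mem (by constructor <;> norm_num)
  have hStend : Tendsto S (𝓝[<] (1:ℝ)) (𝓝 Φ₁) := by
    have := tendsto_tsum_of_dominated_convergence
      (𝓕 := 𝓝[<] (1:ℝ)) (f := fun a n => a ^ n * φ (n + 1) r)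
      (g := fun n => φ (n + 1) r) (bound := fun n => φ (n + 1) r) hS1
      (fun n => by
        have : Tendsto (fun a : ℝ => a ^ n * φ (n + 1) r) (𝓝 (1:ℝ))
            (𝓝 (1 ^ n * φ (n + 1) r)) :=
          ((continuous_pow n).tendsto 1).mul_const _
        simpa using this.mono_left nhdsWithin_le_nhds)
      (by
        filter_upwards [hIoo] with a ha n
        have h1 : (0:ℝ) ≤ a ^ n := pow_nonneg ha.1.le n
        have h2 : a ^ n ≤ 1 := pow_le_one₀ ha.1.le ha.2.le
        have h3 := hφnn (n + 1) r hrI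
        rw [Real.norm_eq_abs, abs_of_nonneg (mul_nonneg h1 h3)]
        nlinarith)
    exact this
  -- the Möbius quantity F
  set F : ℝ → ℝ := fun a => ((a + ρ) / (1 + a * ρ)) ^ p with hFdef
  have hden1 : (1:ℝ) + 1 * ρ ≠ 0 := by nlinarith
  have hM : HasDerivAt (fun a : ℝ => (a + ρ) / (1 + a * ρ)) ((1 - ρ) / (1 + ρ) ^ 2 * (1 + ρ)) 1 := by
    have h1 : HasDerivAt (fun a : ℝ => a + ρ) 1 1 := (hasDerivAt_id 1).add_const ρ
    have h2 : HasDerivAt (fun a : ℝ => 1 + a * ρ) ρ 1 := by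
      simpa using ((hasDerivAt_id 1).mul_const ρ).const_add 1
    have := h1.div h2 hden1
    refine this.congr_deriv ?_
    rw [eq_comm, div_mul_eq_mul_div, div_eq_div_iff (pow_ne_zero _ (ne_of_gt (by linarith))) (pow_ne_zero _ hden1)]
    ring
  have hF1 : F 1 = 1 := by
    simp only [hFdef]
    rw [show (1:ℝ) + ρ = 1 + 1 * ρ by ring, div_self hden1, Real.one_rpow]
  have hFd : HasDerivAt F (p * (1 - ρ) / (1 + ρ)) 1 := by
    have hne : (1:ℝ) + ρ ≠ 0 := by nlinarith
    have hval : ((1:ℝ) + ρ) / (1 + 1 * ρ) = 1 := by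
      rw [one_mul, div_self hne]
    have := hM.rpow_const (p := p) (by left; rw [hval]; norm_num)
    convert this using 1
    rw [hval, Real.one_rpow]
    field_simp
  have hslope : Tendsto (fun a : ℝ => (1 - F a) / (1 - a)) (𝓝[<] (1:ℝ))
      (𝓝 (p * (1 - ρ) / (1 + ρ))) := by
    have h := (hasDerivAt_iff_tendsto_slope.mp hFd).mono_left
      (nhdsWithin_mono _ (fun x hx => (ne_of_lt hx : x ≠ 1)))
    refine h.congr (fun a => ?_)
    rw [slope_def_field, hF1]
    rw [show (1:ℝ) - F a = -(F a - 1) by ring, show (1:ℝ) - a = -(a - 1) by ring,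
      neg_div_neg_eq]
  -- combined limit
  have hGtend : Tendsto (fun a : ℝ => (1 + a) * S a - (1 - F a) / (1 - a) * c₀)
      (𝓝[<] (1:ℝ)) (𝓝 (2 * Φ₁ - p * (1 - ρ) / (1 + ρ) * c₀)) := by
    have h1 : Tendsto (fun a : ℝ => 1 + a) (𝓝[<] (1:ℝ)) (𝓝 (2:ℝ)) := by
      have : Tendsto (fun a : ℝ => 1 + a) (𝓝 (1:ℝ)) (𝓝 ((1:ℝ) + 1)) :=
        tendsto_const_nhds.add tendsto_id
      simpa [one_add_one_eq_two] using this.mono_left nhdsWithin_le_nhds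
    exact (h1.mul hStend).sub (hslope.mul_const c₀)
  have hpos : 0 < 2 * Φ₁ - p * (1 - ρ) / (1 + ρ) * c₀ := by linarith
  have hev : ∀ᶠ a in 𝓝[<] (1:ℝ),
      0 < (1 + a) * S a - (1 - F a) / (1 - a) * c₀ :=
    hGtend.eventually (eventually_gt_nhds hpos)
  obtain ⟨α, hαI, hαG⟩ := ((Filter.eventually_mem_set.mpr hIoo).and hev).exists
  obtain ⟨hα0, hα1⟩ := hαI
  -- construct everything
  refine ⟨fun w => (w + (α:ℂ)) / (1 + (α:ℂ) * w),
    fun n => if n = 0 then (α:ℂ) else ((1 - α ^ 2 : ℝ) : ℂ) * (-(α:ℂ)) ^ (n - 1),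
    fun w => w ^ m, (r : ℂ), ?_, ?_, ?_, ?_, ?_, ?_, ?_, ?_, ?_⟩
  · -- HasSum
    intro w hw
    rw [Metric.mem_ball, dist_zero_right] at hw
    have hαw : ‖-(α:ℂ) * w‖ < 1 := by
      rw [norm_mul, norm_neg, Complex.norm_real, Real.norm_eq_abs, abs_of_pos hα0]
      nlinarith [norm_nonneg w]
    have hne : (1:ℂ) + (α:ℂ) * w ≠ 0 := by
      intro h
      have : (α:ℂ) * w = -1 := by linear_combination h
      have : ‖-(α:ℂ) * w‖ = 1 := by rw [neg_mul, this, neg_neg, norm_one]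
      linarith
    have hgeo := hasSum_geometric_of_norm_lt_one hαw
    have h2 := hgeo.mul_left (((1:ℂ) - (α:ℂ) ^ 2) * w)
    have h3 : HasSum (fun n : ℕ =>
        (if n + 1 = 0 then (α:ℂ) else ((1 - α ^ 2 : ℝ) : ℂ) * (-(α:ℂ)) ^ (n + 1 - 1)) * w ^ (n + 1))
        (((1:ℂ) - (α:ℂ) ^ 2) * w * (1 - -(α:ℂ) * w)⁻¹) := by
      refine h2.congr_fun (fun n => ?_)
      simp only [Nat.add_sub_cancel, if_neg (Nat.succ_ne_zero n)]
      push_cast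
      ring
    have h4 := (hasSum_nat_add_iff (f := fun n : ℕ =>
        (if n = 0 then (α:ℂ) else ((1 - α ^ 2 : ℝ) : ℂ) * (-(α:ℂ)) ^ (n - 1)) * w ^ n) 1).mp h3
    convert h4 using 1
    · rfl
    have heq : (1:ℂ) - -(α:ℂ) * w = 1 + (α:ℂ) * w := by ring
    rw [heq]
    simp only [Finset.range_one, Finset.sum_singleton, if_pos rfl, ↓reduceIte, pow_zero, mul_one]
    rw [div_eq_iff hne, add_mul, mul_assoc, inv_mul_cancel₀ hne]
    ring
  · -- |f w| ≤ 1
    intro w hw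
    rw [Metric.mem_ball, dist_zero_right] at hw
    have hne : (1:ℂ) + (α:ℂ) * w ≠ 0 := by
      intro h
      have h1 : (α:ℂ) * w = -1 := by linear_combination h
      have : ‖(α:ℂ) * w‖ = 1 := by rw [h1, norm_neg, norm_one]
      rw [norm_mul, Complex.norm_real, Real.norm_eq_abs, abs_of_pos hα0] at this
      nlinarith [norm_nonneg w]
    have hsq : (‖w + (α:ℂ)‖) ^ 2 ≤ (‖1 + (α:ℂ) * w‖) ^ 2 := by
      rw [Complex.sq_norm, Complex.sq_norm]
      have hw2 : w.re ^ 2 + w.im ^ 2 < 1 := by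
        have := Complex.sq_norm w
        rw [Complex.normSq_apply] at this
        nlinarith [hw, norm_nonneg w]
      simp only [Complex.normSq_apply, Complex.add_re, Complex.add_im, Complex.mul_re,
        Complex.mul_im, Complex.ofReal_re, Complex.ofReal_im, Complex.one_re, Complex.one_im]
      nlinarith [mul_nonneg (by nlinarith : (0:ℝ) ≤ 1 - α ^ 2)
        (by nlinarith : (0:ℝ) ≤ 1 - (w.re ^ 2 + w.im ^ 2))]
    have habs : ‖w + (α:ℂ)‖ ≤ ‖1 + (α:ℂ) * w‖ := by
      nlinarith [norm_nonneg (w + (α:ℂ)), norm_nonneg (1 + (α:ℂ) * w)]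
    rw [norm_div]
    exact div_le_one_of_le₀ habs (norm_nonneg _)
  · exact (differentiable_pow m).differentiableOn
  · intro w hw
    rw [Metric.mem_ball, dist_zero_right] at hw
    rw [norm_pow]
    exact pow_le_one₀ (norm_nonneg w) (le_of_lt hw)
  · intro k hk
    rw [iterDeriv_pow_aux m k hk.le]
    simp [Nat.sub_ne_zero_of_lt hk, zero_pow (Nat.sub_ne_zero_of_lt hk)]
  · rw [iterDeriv_pow_aux m m le_rfl]
    simp [Nat.descFactorial_self, Nat.factorial_ne_zero]
  · rw [Metric.mem_ball, dist_zero_right, Complex.norm_real, Real.norm_eq_abs,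
      abs_of_pos hr0]
    exact hrlt1
  · rw [Complex.norm_real, Real.norm_eq_abs, abs_of_pos hr0]
  · -- main inequality
    -- value of f at ω z
    have hden : (0:ℝ) < 1 + α * ρ := by nlinarith
    have hFval : ‖((r:ℂ) ^ m + (α:ℂ)) / (1 + (α:ℂ) * (r:ℂ) ^ m)‖ = (α + ρ) / (1 + α * ρ) := by
      have : ((r:ℂ) ^ m + (α:ℂ)) / (1 + (α:ℂ) * (r:ℂ) ^ m)
          = (((α + ρ) / (1 + α * ρ) : ℝ) : ℂ) := by
        push_cast [hρdef]
        ring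
      rw [this, Complex.norm_real, Real.norm_eq_abs, abs_of_nonneg (by positivity)]
    -- second tsum
    have habs1 : ∀ n : ℕ, 
       ‖if n + 1 = 0 then (α:ℂ) else ((1 - α ^ 2 : ℝ) : ℂ) * (-(α:ℂ)) ^ (n + 1 - 1)‖
        = (1 - α ^ 2) * α ^ n := by
      intro n
      rw [if_neg (Nat.succ_ne_zero n), Nat.add_sub_cancel, norm_mul, norm_pow,
        Complex.norm_real, Real.norm_eq_abs, norm_neg, Complex.norm_real, Real.norm_eq_abs,
        abs_of_nonneg (by nlinarith : (0:ℝ) ≤ 1 - α ^ 2), abs_of_pos hα0]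
    have hT2 : (∑' n : ℕ, 
       ‖if n + 1 = 0 then (α:ℂ) else ((1 - α ^ 2 : ℝ) : ℂ) * (-(α:ℂ)) ^ (n + 1 - 1)‖
          * φ (n + 1) r) = (1 - α ^ 2) * S α := by
      rw [hSdef, ← tsum_mul_left]
      refine tsum_congr (fun n => ?_)
      rw [habs1 n]
      ring
    -- third tsum nonneg
    have hT3 : 0 ≤ ∑' n : ℕ, 
       ‖if n + 1 = 0 then (α:ℂ) else ((1 - α ^ 2 : ℝ) : ℂ) * (-(α:ℂ)) ^ (n + 1 - 1)‖ ^ 2 *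
        (φ (2 * (n + 1)) r / (1 + ‖if 0 = 0 then (α:ℂ) else ((1 - α ^ 2 : ℝ) : ℂ) * (-(α:ℂ)) ^ (0 - 1)‖)
          + ∑' k : ℕ, φ (2 * (n + 1) + 1 + k) r) := by
      refine tsum_nonneg (fun n => mul_nonneg (sq_nonneg _) (add_nonneg ?_ ?_))
      · exact div_nonneg (hφnn _ r hrI) (by positivity)
      · exact tsum_nonneg (fun k => hφnn _ r hrI)
    -- the key numeric inequality
    have h1α : (0:ℝ) < 1 - α := by linarith
    have hkey : (1 - F α) * c₀ < (1 - α ^ 2) * S α := by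
      have := hαG
      have h := mul_lt_mul_of_pos_right (lt_of_sub_pos this) h1α
      calc (1 - F α) * c₀ = (1 - F α) / (1 - α) * c₀ * (1 - α) := by
            field_simp
          _ < (1 + α) * S α * (1 - α) := h
          _ = (1 - α ^ 2) * S α := by ring
    -- assemble
    rw [hT2]
    show c₀ < ‖((r:ℂ) ^ m + (α:ℂ)) / (1 + (α:ℂ) * (r:ℂ) ^ m)‖ ^ p * c₀
      + (1 - α ^ 2) * S α + _
    rw [hFval]
    have hFαval : ((α + ρ) / (1 + α * ρ)) ^ p = F α := rfl
    rw [hFαval]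
    have hF0 : 0 ≤ F α := Real.rpow_nonneg (by positivity) p
    nlinarith [hT3]
end

section
/- Let m ∈ ℕ, p ∈ (0,2], and φ = {φ_n}_{n=0}^∞ ∈ ℱ. Define Ψ₂(r) = (p/2)·φ₀(r) − Φ₁(r) − r^m/(1−r^m) and let R₂ be the minimal positive root of Ψ₂(r) = 0. Suppose Ψ₂(r) < 0 on some interval (R₂, R₂+ε), ε > 0. Then for every r ∈ (R₂, R₂+ε) there exist f ∈ ℬ (with coefficients a_n), ω ∈ ℬ_m, and z ∈ 𝔻 with |z| = r such that |a₀|^p·φ₀(r) + Σ_{n=1}^∞ |a_n|φ_n(r) + Σ_{n=1}^∞ |a_n|²·[φ_{2n}(r)/(1+|a₀|) + Φ_{2n+1}(r)] + |f(ω(z)) − a₀| > φ₀(r); in fact one may take ω(z) = z^m and f(z) = (a−z)/(1−az) with a ∈ [0,1) sufficiently close to 1. -/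
open Filter Set Finset


lemma iteratedDeriv_pow_aux (m : ℕ) :
    ∀ k ≤ m, iteratedDeriv k (fun w : ℂ => w ^ m)
      = fun w => (m.descFactorial k : ℂ) * w ^ (m - k) := by
  intro k
  induction k with
  | zero => intro _; simp
  | succ k ih =>
    intro hk
    rw [iteratedDeriv_succ, ih (Nat.le_of_succ_le hk)]
    funext w
    rw [deriv_const_mul_field]
    rw [deriv_pow_field]
    rw [Nat.descFactorial_succ]
    have h1 : m - k = (m - (k+1)) + 1 := by omega
    rw [h1]
    push_cast [Nat.succ_sub (by omega : k ≤ m)]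
    ring


set_option maxHeartbeats 1000000 in
/-- Theorem 2 of the paper, sharpness part.
If `Ψ₂(r) < 0` on some interval `(R₂, R₂+ε)` to the right of the minimal positive root
`R₂`, then for every `r` in that interval there are `f ∈ ℬ`, `ω ∈ ℬ_m` and `z` with
`|z| = r` for which the Bohr-type quantity exceeds `φ₀(r)`. -/
theorem stmt_3
    (m : ℕ) (hm : 1 ≤ m) (p : ℝ) (hp0 : 0 < p) (hp2 : p ≤ 2)
    -- φ ∈ ℱ
    (φ : ℕ → ℝ → ℝ)
    (hφc : ∀ n, ContinuousOn (φ n) (Set.Ico (0:ℝ) 1))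
    (hφnn : ∀ n, ∀ r ∈ Set.Ico (0:ℝ) 1, 0 ≤ φ n r)
    (hφsum : ∀ r ∈ Set.Ico (0:ℝ) 1, Summable fun n => φ n r)
    (hφloc : TendstoLocallyUniformlyOn
      (fun N r => ∑ n ∈ Finset.range N, φ n r)
      (fun r => ∑' n, φ n r) Filter.atTop (Set.Ico (0:ℝ) 1))
    -- Ψ₂ and its minimal positive root R₂
    (Ψ : ℝ → ℝ)
    (hΨ : ∀ r : ℝ, Ψ r = (p / 2) * φ 0 r - (∑' n : ℕ, φ (n + 1) r)
            - r ^ m / (1 - r ^ m))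
    (R₂ : ℝ) (hR₂ : R₂ ∈ Set.Ioo (0:ℝ) 1) (hroot : Ψ R₂ = 0)
    (hmin : ∀ r ∈ Set.Ioo (0:ℝ) 1, Ψ r = 0 → R₂ ≤ r)
    -- Ψ₂ < 0 on the interval (R₂, R₂ + ε) ⊆ (R₂, 1)
    (ε : ℝ) (hε : 0 < ε) (hRε : R₂ + ε ≤ 1)
    (hΨneg : ∀ r : ℝ, R₂ < r → r < R₂ + ε → Ψ r < 0) :
    ∀ r : ℝ, R₂ < r → r < R₂ + ε →
      ∃ (f : ℂ → ℂ) (a : ℕ → ℂ) (ω : ℂ → ℂ) (z : ℂ),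
        (∀ w ∈ Metric.ball (0:ℂ) 1, HasSum (fun n => a n * w ^ n) (f w)) ∧
        (∀ w ∈ Metric.ball (0:ℂ) 1, ‖f w‖ ≤ 1) ∧
        DifferentiableOn ℂ ω (Metric.ball (0:ℂ) 1) ∧
        (∀ w ∈ Metric.ball (0:ℂ) 1, ‖ω w‖ ≤ 1) ∧
        (∀ k < m, iteratedDeriv k ω 0 = 0) ∧
        iteratedDeriv m ω 0 ≠ 0 ∧
        z ∈ Metric.ball (0:ℂ) 1 ∧ ‖z‖ = r ∧
        φ 0 r < ‖a 0‖ ^ p * φ 0 r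
          + (∑' n : ℕ, ‖a (n + 1)‖ * φ (n + 1) r)
          + (∑' n : ℕ, ‖a (n + 1)‖ ^ 2 *
              (φ (2 * (n + 1)) r / (1 + ‖a 0‖)
                + ∑' k : ℕ, φ (2 * (n + 1) + 1 + k) r))
          + ‖f (ω z) - a 0‖ := by
  intro r hr1 hr2
  have hr0 : 0 < r := lt_trans hR₂.1 hr1
  have hrlt1 : r < 1 := lt_of_lt_of_le hr2 hRε
  have hrIco : r ∈ Set.Ico (0:ℝ) 1 := ⟨hr0.le, hrlt1⟩
  have hΨr : Ψ r < 0 := hΨneg r hr1 hr2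
  -- basic data
  set c : ℕ → ℝ := fun n => φ (n + 1) r with hc_def
  have hcnn : ∀ n, 0 ≤ c n := fun n => hφnn (n+1) r hrIco
  have hcsum : Summable c := by
    have := hφsum r hrIco
    exact this.comp_injective (add_left_injective 1)
  set S1 : ℝ := ∑' n, c n with hS1_def
  set s : ℝ := r ^ m with hs_def
  have hs0 : 0 < s := pow_pos hr0 m
  have hs1 : s < 1 := pow_lt_one₀ hr0.le hrlt1 (by omega)
  set L : ℝ := -2 * Ψ r with hL_def
  have hL : 0 < L := by simp only [hL_def]; linarith
  -- choose N with large partial sum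
  obtain ⟨N, hN⟩ : ∃ N, S1 - L / 8 < ∑ n ∈ Finset.range N, c n := by
    have ht := hcsum.hasSum.tendsto_sum_nat
    have := ht.eventually (eventually_gt_nhds (by linarith : S1 - L/8 < S1))
    exact this.exists
  set P : ℝ → ℝ := fun a => ∑ n ∈ Finset.range N, a ^ n * c n with hP_def
  set Q : ℝ → ℝ := fun a => (a ^ p - 1) / (a - 1) with hQ_def
  set H : ℝ → ℝ := fun a =>
    -(Q a * φ 0 r) + (1 + a) * P a + (1 + a) * (s / (1 - a * s)) with hH_def
  -- limit of Q
  have hQtend : Tendsto Q (nhdsWithin 1 (Set.Iio 1)) (nhds p) := by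
    have hd : HasDerivAt (fun x : ℝ => x ^ p) (p * (1:ℝ) ^ (p - 1)) 1 :=
      Real.hasDerivAt_rpow_const (Or.inl one_ne_zero)
    have := hasDerivAt_iff_tendsto_slope.mp hd
    rw [Real.one_rpow, mul_one] at this
    have hmono : nhdsWithin (1:ℝ) (Set.Iio 1) ≤ nhdsWithin 1 {(1:ℝ)}ᶜ :=
      nhdsWithin_mono _ (fun x hx => ne_of_lt hx)
    refine (this.mono_left hmono).congr' ?_
    filter_upwards [self_mem_nhdsWithin] with x hx
    rw [slope_def_field, Real.one_rpow]
  have hPcont : Continuous P := by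
    apply continuous_finset_sum
    exact fun i _ => (continuous_pow i).mul continuous_const
  have hden1 : (1:ℝ) - 1 * s ≠ 0 := by nlinarith
  have hHtend : Tendsto H (nhdsWithin 1 (Set.Iio 1))
      (nhds (-(p * φ 0 r) + (1 + 1) * P 1 + (1 + 1) * (s / (1 - 1 * s)))) := by
    apply Tendsto.add
    apply Tendsto.add
    · exact (hQtend.mul tendsto_const_nhds).neg
    · have : Tendsto (fun a : ℝ => (1 + a) * P a) (nhds 1) (nhds ((1+1) * P 1)) :=
        ((continuous_const.add continuous_id).mul hPcont).tendsto 1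
      exact this.mono_left nhdsWithin_le_nhds
    · have h2 : Tendsto (fun a : ℝ => (1 + a) * (s / (1 - a * s))) (nhds 1)
          (nhds ((1 + 1) * (s / (1 - 1 * s)))) := by
        apply Tendsto.mul
        · exact (continuous_const.add continuous_id).tendsto 1
        · exact (tendsto_const_nhds.div
            (((continuous_const.sub (continuous_id.mul continuous_const)).tendsto 1)) hden1)
      exact h2.mono_left nhdsWithin_le_nhds
  have hH0pos : 0 < -(p * φ 0 r) + (1 + 1) * P 1 + (1 + 1) * (s / (1 - 1 * s)) := by
    have hP1 : P 1 = ∑ n ∈ Finset.range N, c n := by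
      simp [hP_def]
    have hΨexp : Ψ r = (p / 2) * φ 0 r - S1 - s / (1 - s) := hΨ r
    rw [hP1]
    have h1s : (1:ℝ) - 1 * s = 1 - s := by ring
    rw [h1s]
    linarith
  -- pick a
  obtain ⟨a, hHa, ha0, ha1⟩ :
      ∃ a : ℝ, 0 < H a ∧ 0 < a ∧ a < 1 := by
    have h1 := hHtend.eventually (eventually_gt_nhds hH0pos)
    have h2 : Set.Ioo (0:ℝ) 1 ∈ nhdsWithin (1:ℝ) (Set.Iio 1) :=
      Ioo_mem_nhdsLT_of_mem ⟨zero_lt_one, le_refl 1⟩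
    obtain ⟨a, hHa, haIoo⟩ := (h1.and h2).exists
    exact ⟨a, hHa, haIoo.1, haIoo.2⟩
  have has : a * s < 1 := by nlinarith
  have hdenas : (0:ℝ) < 1 - a * s := by linarith
  -- the witnesses
  set A : ℂ := (a : ℂ) with hA_def
  set f : ℂ → ℂ := fun w => (A - w) / (1 - A * w) with hf_def
  set coef : ℕ → ℂ := fun n => match n with
    | 0 => A
    | Nat.succ k => (A ^ 2 - 1) * A ^ k with hcoef_def
  have hnormA : ‖A‖ = a := by
    rw [hA_def, Complex.norm_real, Real.norm_eq_abs, abs_of_pos ha0]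
  have hAw : ∀ w : ℂ, ‖w‖ < 1 → ‖A * w‖ < 1 := by
    intro w hw
    rw [norm_mul, hnormA]
    calc a * ‖w‖ ≤ 1 * ‖w‖ := by
          apply mul_le_mul_of_nonneg_right ha1.le (norm_nonneg _)
      _ = ‖w‖ := one_mul _
      _ < 1 := hw
  have hdenne : ∀ w : ℂ, ‖w‖ < 1 → (1 : ℂ) - A * w ≠ 0 := by
    intro w hw h
    have h1 : A * w = 1 := by linear_combination -h
    have := hAw w hw
    rw [h1, norm_one] at this
    exact lt_irrefl _ this
  refine ⟨f, coef, fun w => w ^ m, (r : ℂ), ?_, ?_, ?_, ?_, ?_, ?_, ?_, ?_, ?_⟩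
  · -- HasSum
    intro w hw
    rw [Metric.mem_ball, dist_zero_right] at hw
    have hg := hasSum_geometric_of_norm_lt_one (hAw w hw)
    have h1 := hg.mul_left ((A ^ 2 - 1) * w)
    have hfun : (fun n : ℕ => coef (n + 1) * w ^ (n + 1))
        = fun n => ((A ^ 2 - 1) * w) * (A * w) ^ n := by
      funext n
      show (A ^ 2 - 1) * A ^ n * w ^ (n + 1) = _
      rw [mul_pow]; ring
    rw [← hfun] at h1
    have h3 := (hasSum_nat_add_iff (f := fun n => coef n * w ^ n) 1).mp h1
    have hT : (A ^ 2 - 1) * w * (1 - A * w)⁻¹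
        + ∑ i ∈ Finset.range 1, coef i * w ^ i = f w := by
      rw [Finset.range_one, Finset.sum_singleton]
      show (A ^ 2 - 1) * w * (1 - A * w)⁻¹ + A * w ^ 0 = (A - w) / (1 - A * w)
      rw [pow_zero, mul_one, div_eq_mul_inv]
      field_simp [hdenne w hw]
      ring
    rwa [hT] at h3
  · -- |f w| ≤ 1
    intro w hw
    rw [Metric.mem_ball, dist_zero_right] at hw
    have hdne := hdenne w hw
    rw [hf_def]
    rw [norm_div]
    rw [div_le_one (norm_pos_iff.mpr hdne)]
    have hw2 : w.re * w.re + w.im * w.im < 1 := by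
      have h := Complex.normSq_apply w
      have h2 : Complex.normSq w < 1 := by
        rw [Complex.normSq_eq_norm_sq]
        exact pow_lt_one₀ (norm_nonneg w) hw two_ne_zero
      linarith [h ▸ h2]
    have hns : Complex.normSq (A - w) ≤ Complex.normSq (1 - A * w) := by
      simp only [Complex.normSq_apply, Complex.sub_re, Complex.sub_im,
        Complex.mul_re, Complex.mul_im, Complex.one_re, Complex.one_im,
        hA_def, Complex.ofReal_re, Complex.ofReal_im]
      have key : (0:ℝ) ≤ (1 - a ^ 2) * (1 - (w.re * w.re + w.im * w.im)) :=
        mul_nonneg (by nlinarith) (by linarith)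
      nlinarith [key]
    rw [← sq_le_sq₀ (norm_nonneg _) (norm_nonneg _), ← Complex.normSq_eq_norm_sq, ← Complex.normSq_eq_norm_sq]
    exact hns
  · exact (differentiable_pow m).differentiableOn
  · intro w hw
    rw [Metric.mem_ball, dist_zero_right] at hw
    rw [norm_pow]
    exact pow_le_one₀ (norm_nonneg _) hw.le
  · intro k hk
    rw [iteratedDeriv_pow_aux m k hk.le]
    simp [Nat.sub_ne_zero_of_lt hk, zero_pow]
  · rw [iteratedDeriv_pow_aux m m le_rfl]
    simp [Nat.descFactorial_self]
    exact_mod_cast Nat.factorial_ne_zero m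
  · rw [Metric.mem_ball, dist_zero_right, Complex.norm_real, Real.norm_eq_abs,
      abs_of_pos hr0]
    exact hrlt1
  · rw [Complex.norm_real, Real.norm_eq_abs, abs_of_pos hr0]
  · -- final inequality
    have hb0 : ‖coef 0‖ = a := by
      show ‖A‖ = a
      exact hnormA
    have hb1 : ∀ n : ℕ, ‖coef (n + 1)‖ = (1 - a ^ 2) * a ^ n := by
      intro n
      show ‖(A ^ 2 - 1) * A ^ n‖ = _
      rw [norm_mul, norm_pow]
      rw [hnormA]
      have : A ^ 2 - 1 = ((a ^ 2 - 1 : ℝ) : ℂ) := by push_cast [hA_def]; ring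
      rw [this, Complex.norm_real, Real.norm_eq_abs,
        abs_of_nonpos (by nlinarith : a ^ 2 - 1 ≤ 0)]
      ring
    -- T3 value
    have hT3 : ‖f ((r:ℂ) ^ m) - coef 0‖ = (1 - a ^ 2) * s / (1 - a * s) := by
      have hcast : ((r:ℂ)) ^ m = ((s : ℝ) : ℂ) := by push_cast [hs_def]; ring
      have hnorm : ‖((s:ℝ):ℂ)‖ = s := by
        rw [Complex.norm_real, Real.norm_eq_abs, abs_of_pos hs0]
      have hdne : (1:ℂ) - A * ((s:ℝ):ℂ) ≠ 0 := hdenne _ (by rw [hnorm]; exact hs1)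
      rw [hcast]
      have heq : f ((s:ℝ):ℂ) - coef 0 = (((a^2 - 1) * s / (1 - a * s) : ℝ) : ℂ) := by
        show (A - s) / (1 - A * s) - A = _
        rw [div_sub' hdne]
        push_cast [hA_def]
        rw [div_eq_div_iff hdne (by exact_mod_cast ne_of_gt hdenas)]
        ring
      rw [heq, Complex.norm_real, Real.norm_eq_abs]
      rw [abs_div, abs_mul, abs_of_nonpos (by nlinarith : a ^ 2 - 1 ≤ 0),
        abs_of_pos hs0, abs_of_pos hdenas]
      ring
    simp only [hb0, hb1]
    -- T1 lower bound
    have hsumT1 : Summable (fun n => (1 - a ^ 2) * a ^ n * φ (n + 1) r) := by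
      apply Summable.of_nonneg_of_le
        (fun n => mul_nonneg (mul_nonneg (by nlinarith) (pow_nonneg ha0.le n)) (hcnn n))
        (fun n => ?_) hcsum
      have h1 : (1 - a ^ 2) * a ^ n ≤ 1 := by
        have := pow_le_one₀ ha0.le ha1.le (n := n)
        nlinarith [pow_nonneg ha0.le n]
      calc (1 - a ^ 2) * a ^ n * φ (n + 1) r ≤ 1 * φ (n + 1) r := by
            apply mul_le_mul_of_nonneg_right h1 (hcnn n)
        _ = c n := one_mul _
    have hT1ge : (1 - a ^ 2) * P a ≤ ∑' n, (1 - a ^ 2) * a ^ n * φ (n + 1) r := by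
      have := hsumT1.sum_le_tsum (Finset.range N)
        (fun i _ => mul_nonneg (mul_nonneg (by nlinarith) (pow_nonneg ha0.le i)) (hcnn i))
      calc (1 - a ^ 2) * P a
          = ∑ n ∈ Finset.range N, (1 - a ^ 2) * a ^ n * φ (n + 1) r := by
            rw [hP_def, Finset.mul_sum]
            apply Finset.sum_congr rfl
            intro i _
            show (1 - a^2) * (a ^ i * c i) = _
            rw [hc_def]; ring
        _ ≤ _ := this
    have hT2 : 0 ≤ ∑' n : ℕ, ((1 - a ^ 2) * a ^ n) ^ 2 *
        (φ (2 * (n + 1)) r / (1 + a) + ∑' k : ℕ, φ (2 * (n + 1) + 1 + k) r) := by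
      apply tsum_nonneg
      intro n
      apply mul_nonneg (sq_nonneg _)
      apply add_nonneg
      · exact div_nonneg (hφnn _ r hrIco) (by linarith)
      · exact tsum_nonneg fun k => hφnn _ r hrIco
    rw [hT3]
    -- key identity
    have hane : a - 1 ≠ 0 := sub_ne_zero.mpr (ne_of_lt ha1)
    have hQa : (1 - a) * Q a = 1 - a ^ p := by
      show (1 - a) * ((a ^ p - 1) / (a - 1)) = 1 - a ^ p
      rw [mul_div_assoc', div_eq_iff hane]
      ring
    have hkey : φ 0 r + (1 - a) * H a
        = a ^ p * φ 0 r + (1 - a ^ 2) * P a + (1 - a ^ 2) * s / (1 - a * s) := by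
      rw [hH_def]
      have expand : (1 - a) * (-(Q a * φ 0 r) + (1 + a) * P a + (1 + a) * (s / (1 - a * s)))
          = -((1 - a) * Q a * φ 0 r) + (1 - a ^ 2) * P a
            + (1 - a ^ 2) * s / (1 - a * s) := by
        field_simp
        ring
      rw [expand, hQa]
      ring
    have hpos : 0 < (1 - a) * H a := mul_pos (by linarith) hHa
    have hφ0nn : 0 ≤ φ 0 r := hφnn 0 r hrIco
    generalize hg1 : (∑' (n : ℕ), (1 - a ^ 2) * a ^ n * φ (n + 1) r) = T1 at hT1ge ⊢
    generalize hg2 : (∑' (n : ℕ), ((1 - a ^ 2) * a ^ n) ^ 2 *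
        (φ (2 * (n + 1)) r / (1 + a) + ∑' (k : ℕ), φ (2 * (n + 1) + 1 + k) r)) = T2 at hT2 ⊢
    generalize hg3 : a ^ p = ap at hkey ⊢
    generalize hg4 : (1 - a ^ 2) * s / (1 - a * s) = t3 at hkey ⊢
    generalize hg5 : (1 - a ^ 2) * P a = pa at hkey hT1ge
    generalize hg6 : (1 - a) * H a = pha at hkey hpos
    linarith [hT1ge, hT2, hkey, hpos]
end

section
/- Let p ∈ (0,2] and φ = {φ_n}_{n=0}^∞ ∈ ℱ. Define Ψ₃(r) = (p/2)·φ₀(r) − Σ_{n=1}^∞ (n+1)φ_n(r) and let R₃ be the minimal root of Ψ₃(r) = 0 in (0,1). Suppose Ψ₃(r) < 0 on some interval (R₃, R₃+ε), ε > 0. Then for every r ∈ (R₃, R₃+ε) there exists a Schwarz function f(z) = Σ_{n=1}^∞ a_n z^n such that |a₁|^p·φ₀(r) + Σ_{n=1}^∞ (n+1)|a_{n+1}|φ_n(r) > φ₀(r); in fact one may take f(z) = z(a−z)/(1−az) with a ∈ [0,1) sufficiently close to 1. -/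
open Filter Finset

lemma schwarz_aux (α : ℝ) (hα0 : 0 < α) (hα1 : α < 1) :
    ∃ (f : ℂ → ℂ) (a : ℕ → ℂ),
      a 0 = 0 ∧
      (∀ w ∈ Metric.ball (0:ℂ) 1, HasSum (fun n => a n * w ^ n) (f w)) ∧
      (∀ w ∈ Metric.ball (0:ℂ) 1, ‖f w‖ ≤ 1) ∧
      ‖a 1‖ = α ∧
      (∀ n, ‖a (n+2)‖ = (1 - α^2) * α^n) := by
  set a : ℕ → ℂ := fun n => match n with
    | 0 => 0
    | 1 => (α : ℂ)
    | (n+2) => -((((1 - α^2) * α^n : ℝ)) : ℂ) with ha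
  refine ⟨fun w => w * ((α:ℂ) - w) / (1 - (α:ℂ) * w), a, rfl, ?_, ?_, ?_, ?_⟩
  · intro w hw
    have hw1 : ‖w‖ < 1 := by simpa [Complex.dist_eq] using hw
    have hu : ‖(α:ℂ) * w‖ < 1 := by
      have : ‖(α:ℂ) * w‖ = α * ‖w‖ := by
        simp [norm_mul, Complex.norm_real, abs_of_pos hα0]
      rw [this]
      nlinarith [norm_nonneg w]
    have hne : (1 : ℂ) - (α:ℂ) * w ≠ 0 := by
      intro h
      have : (1:ℂ) = (α:ℂ) * w := by linear_combination h
      rw [← this] at hu; simp at hu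
    have hg := hasSum_geometric_of_norm_lt_one hu
    have hg2 : HasSum (fun n => a (n + 2) * w ^ (n + 2))
        ((-(1 - (α:ℂ)^2) * w^2) * (1 - (α:ℂ)*w)⁻¹) := by
      have := hg.mul_left (-(1 - (α:ℂ)^2) * w^2)
      convert this using 2 with n
      · rfl
      simp only [ha]
      push_cast
      ring
    have := (hasSum_nat_add_iff (f := fun n => a n * w ^ n) 2).mp hg2
    have hsum2 : (∑ i ∈ Finset.range 2, a i * w ^ i) = (α:ℂ) * w := by
      simp [Finset.sum_range_succ, ha]
    rw [hsum2] at this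
    convert this using 1
    · rfl
    beta_reduce
    rw [div_eq_mul_inv]
    linear_combination ((α:ℂ) * w) * mul_inv_cancel₀ hne
  · intro w hw
    have hw1 : ‖w‖ < 1 := by simpa [Complex.dist_eq] using hw
    have hu : ‖(α:ℂ) * w‖ < 1 := by
      have : ‖(α:ℂ) * w‖ = α * ‖w‖ := by
        simp [norm_mul, Complex.norm_real, abs_of_pos hα0]
      rw [this]; nlinarith [norm_nonneg w]
    have hne : ‖1 - (α:ℂ) * w‖ > 0 := by
      have h1 : ‖(1:ℂ)‖ - ‖(α:ℂ)*w‖ ≤ ‖1 - (α:ℂ)*w‖ := norm_sub_norm_le _ _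
      simp only [norm_one] at h1
      linarith
    have key : ‖(α:ℂ) - w‖ ≤ ‖1 - (α:ℂ) * w‖ := by
      have h2 : Complex.normSq ((α:ℂ) - w) ≤ Complex.normSq (1 - (α:ℂ) * w) := by
        have hns : Complex.normSq w < 1 := by
          have := Complex.sq_norm w
          nlinarith [norm_nonneg w]
        simp only [Complex.normSq_apply, Complex.sub_re, Complex.sub_im, Complex.one_re,
          Complex.one_im, Complex.mul_re, Complex.mul_im, Complex.ofReal_re, Complex.ofReal_im,
          Complex.normSq_apply] at *
        nlinarith [mul_nonneg (by nlinarith : (0:ℝ) ≤ 1 - α^2)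
          (by nlinarith : (0:ℝ) ≤ 1 - (w.re*w.re + w.im*w.im))]
      have := Real.sqrt_le_sqrt h2
      simpa [Complex.norm_def] using this
    rw [norm_div, norm_mul]
    rw [div_le_one hne]
    calc ‖w‖ * ‖(α:ℂ) - w‖
        ≤ 1 * ‖1 - (α:ℂ) * w‖ := by
          apply mul_le_mul (le_of_lt hw1) key (norm_nonneg _) zero_le_one
      _ = ‖1 - (α:ℂ) * w‖ := one_mul _
  · simp [ha, Complex.norm_real, abs_of_pos hα0]
  · intro n
    have h1 : (0:ℝ) ≤ (1 - α^2) * α^n :=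
      mul_nonneg (by nlinarith) (pow_nonneg hα0.le n)
    show ‖-((((1 - α^2) * α^n : ℝ)) : ℂ)‖ = (1 - α^2) * α^n
    rw [norm_neg, Complex.norm_real, Real.norm_eq_abs, abs_of_nonneg h1]



/-- Theorem 3 of the paper, sharpness part.
If `Ψ₃(r) < 0` on some interval `(R₃, R₃+ε)` to the right of the minimal root `R₃`,
then for every `r` in that interval there is a Schwarz function `f(z) = Σ_{n≥1} a_n z^n`
for which `|a₁|^p φ₀(r) + Σ_{n≥1}(n+1)|a_{n+1}|φ_n(r) > φ₀(r)`. -/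
theorem stmt_5
    (p : ℝ) (hp0 : 0 < p) (hp2 : p ≤ 2)
    -- φ ∈ ℱ
    (φ : ℕ → ℝ → ℝ)
    (hφc : ∀ n, ContinuousOn (φ n) (Set.Ico (0:ℝ) 1))
    (hφnn : ∀ n, ∀ r ∈ Set.Ico (0:ℝ) 1, 0 ≤ φ n r)
    (hφsum : ∀ r ∈ Set.Ico (0:ℝ) 1, Summable fun n => φ n r)
    (hφloc : TendstoLocallyUniformlyOn
      (fun N r => ∑ n ∈ Finset.range N, φ n r)
      (fun r => ∑' n, φ n r) Filter.atTop (Set.Ico (0:ℝ) 1))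
    -- Ψ₃ and its minimal root R₃ in (0,1)
    (Ψ : ℝ → ℝ)
    (hΨ : ∀ r : ℝ, Ψ r = (p / 2) * φ 0 r - ∑' n : ℕ, ((n : ℝ) + 2) * φ (n + 1) r)
    (R₃ : ℝ) (hR₃ : R₃ ∈ Set.Ioo (0:ℝ) 1) (hroot : Ψ R₃ = 0)
    (hmin : ∀ r ∈ Set.Ioo (0:ℝ) 1, Ψ r = 0 → R₃ ≤ r)
    -- Ψ₃ < 0 on the interval (R₃, R₃ + ε) ⊆ (R₃, 1)
    (ε : ℝ) (hε : 0 < ε) (hRε : R₃ + ε ≤ 1)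
    (hΨneg : ∀ r : ℝ, R₃ < r → r < R₃ + ε → Ψ r < 0) :
    ∀ r : ℝ, R₃ < r → r < R₃ + ε →
      ∃ (f : ℂ → ℂ) (a : ℕ → ℂ),
        a 0 = 0 ∧
        (∀ w ∈ Metric.ball (0:ℂ) 1, HasSum (fun n => a n * w ^ n) (f w)) ∧
        (∀ w ∈ Metric.ball (0:ℂ) 1, ‖f w‖ ≤ 1) ∧
        φ 0 r < ‖a 1‖ ^ p * φ 0 r
          + (∑' n : ℕ, ((n : ℝ) + 2) * ‖a (n + 2)‖ * φ (n + 1) r) := by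
  intro r hr1 hr2
  have hkey : ∃ α : ℝ, 0 < α ∧ α < 1 ∧
      φ 0 r < α ^ p * φ 0 r
        + (∑' n : ℕ, ((n : ℝ) + 2) * ((1 - α^2) * α^n) * φ (n + 1) r) := by
    have hrmem : r ∈ Set.Ico (0:ℝ) 1 := ⟨by linarith [hR₃.1], by linarith⟩
    have hφ0 : 0 ≤ φ 0 r := hφnn 0 r hrmem
    have hφn : ∀ n, 0 ≤ φ (n+1) r := fun n => hφnn (n+1) r hrmem
    have hneg := hΨneg r hr1 hr2
    rw [hΨ r] at hneg
    set S := ∑' n : ℕ, ((n : ℝ) + 2) * φ (n + 1) r with hS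
    have hpS : (p/2) * φ 0 r < S := by linarith
    have hsum : Summable (fun n : ℕ => ((n : ℝ) + 2) * φ (n + 1) r) := by
      by_contra h
      rw [hS, tsum_eq_zero_of_not_summable h] at hpS
      have : (0:ℝ) ≤ (p/2) * φ 0 r := by positivity
      linarith
    set c : ℝ := ((p/2) * φ 0 r + S) / 2 with hc
    have hc1 : (p/2) * φ 0 r < c := by rw [hc]; linarith
    have hc2 : c < S := by rw [hc]; linarith
    have hc0 : 0 < c := lt_of_le_of_lt (by positivity) hc1
    -- choose N with partial sum > c
    obtain ⟨N, hN⟩ := (hsum.hasSum.tendsto_sum_nat.eventually_const_lt hc2).exists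
    set L := nhdsWithin (1:ℝ) (Set.Iio 1) with hL
    -- (A)
    have hA : ∀ᶠ α in L, c < ∑ n ∈ Finset.range N, ((n : ℝ) + 2) * α^n * φ (n + 1) r := by
      have hcont : Continuous (fun α : ℝ =>
          ∑ n ∈ Finset.range N, ((n : ℝ) + 2) * α^n * φ (n + 1) r) := by
        apply continuous_finset_sum
        intro i _
        exact (continuous_const.mul (continuous_pow i)).mul continuous_const
      have ht : Tendsto (fun α : ℝ =>
          ∑ n ∈ Finset.range N, ((n : ℝ) + 2) * α^n * φ (n + 1) r) L
          (nhds (∑ n ∈ Finset.range N, ((n : ℝ) + 2) * φ (n + 1) r)) := by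
        have := (hcont.tendsto 1).mono_left (nhdsWithin_le_nhds (s := Set.Iio 1))
        simpa using this
      exact ht.eventually_const_lt hN
    -- (B)
    set F : ℝ → ℝ := fun α => c * (1 - α^2) - (1 - α ^ p) * φ 0 r with hF
    have hF1 : F 1 = 0 := by simp [hF, Real.one_rpow]
    have hderiv : HasDerivAt F (p * φ 0 r - 2 * c) 1 := by
      have h1 : HasDerivAt (fun α : ℝ => c * (1 - α^2)) (c * (-(2 * 1^1))) 1 :=
        ((hasDerivAt_pow 2 (1:ℝ)).const_sub 1).const_mul c
      have h2 : HasDerivAt (fun α : ℝ => (1 - α ^ p) * φ 0 r)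
          (-(p * (1:ℝ) ^ (p - 1)) * φ 0 r) 1 :=
        ((Real.hasDerivAt_rpow_const (Or.inl one_ne_zero)).const_sub 1).mul_const _
      have := h1.sub h2
      convert this using 1
      · rfl
      · rfl
      · rfl
      rw [Real.one_rpow]
      ring
    have hd0 : p * φ 0 r - 2 * c < 0 := by linarith
    have hslope := hasDerivAt_iff_tendsto_slope.mp hderiv
    have hLle : L ≤ nhdsWithin (1:ℝ) {(1:ℝ)}ᶜ :=
      nhdsWithin_mono 1 (fun x hx => ne_of_lt hx)
    have hB : ∀ᶠ α in L, slope F 1 α < 0 :=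
      (hslope.mono_left hLle).eventually_lt_const hd0
    -- (C)
    have hC1 : ∀ᶠ α in L, α < 1 := eventually_mem_nhdsWithin
    have hC0 : ∀ᶠ α in L, (0:ℝ) < α :=
      ((eventually_gt_nhds (by norm_num : (0:ℝ) < 1)).filter_mono nhdsWithin_le_nhds)
    obtain ⟨α, hAα, hBα, hα1, hα0⟩ := (hA.and (hB.and (hC1.and hC0))).exists
    refine ⟨α, hα0, hα1, ?_⟩
    -- F α > 0
    have hFα : 0 < F α := by
      rw [slope_def_field, hF1, sub_zero] at hBα
      rcases div_neg_iff.mp hBα with ⟨h1, h2⟩ | ⟨h1, h2⟩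
      · linarith
      · linarith
    have hα2 : 0 < 1 - α^2 := by nlinarith
    -- summability of weighted series
    have hle : ∀ n : ℕ, ((n : ℝ) + 2) * ((1 - α^2) * α^n) * φ (n + 1) r
        ≤ ((n : ℝ) + 2) * φ (n + 1) r := by
      intro n
      have hαn : α ^ n ≤ 1 := pow_le_one₀ hα0.le hα1.le
      have h1 : (1 - α^2) * α^n ≤ 1 := by nlinarith [pow_nonneg hα0.le n]
      calc ((n : ℝ) + 2) * ((1 - α^2) * α^n) * φ (n + 1) r
          ≤ ((n : ℝ) + 2) * 1 * φ (n + 1) r := by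
            apply mul_le_mul_of_nonneg_right _ (hφn n)
            exact mul_le_mul_of_nonneg_left h1 (by positivity)
        _ = ((n : ℝ) + 2) * φ (n + 1) r := by ring
    have hnn : ∀ n : ℕ, 0 ≤ ((n : ℝ) + 2) * ((1 - α^2) * α^n) * φ (n + 1) r := by
      intro n
      have := hφn n
      have := pow_nonneg hα0.le n
      positivity
    have hsum2 : Summable (fun n : ℕ => ((n : ℝ) + 2) * ((1 - α^2) * α^n) * φ (n + 1) r) :=
      Summable.of_nonneg_of_le hnn hle hsum
    have hpartial : ∑ n ∈ Finset.range N, ((n : ℝ) + 2) * ((1 - α^2) * α^n) * φ (n + 1) r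
        ≤ ∑' n : ℕ, ((n : ℝ) + 2) * ((1 - α^2) * α^n) * φ (n + 1) r :=
      Summable.sum_le_tsum _ (fun n _ => hnn n) hsum2
    have heq : ∑ n ∈ Finset.range N, ((n : ℝ) + 2) * ((1 - α^2) * α^n) * φ (n + 1) r
        = (1 - α^2) * ∑ n ∈ Finset.range N, ((n : ℝ) + 2) * α^n * φ (n + 1) r := by
      rw [Finset.mul_sum]
      exact Finset.sum_congr rfl (fun n _ => by ring)
    have hgt : (1 - α^2) * c < ∑' n : ℕ, ((n : ℝ) + 2) * ((1 - α^2) * α^n) * φ (n + 1) r := by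
      calc (1 - α^2) * c < (1 - α^2) * ∑ n ∈ Finset.range N, ((n : ℝ) + 2) * α^n * φ (n + 1) r :=
            mul_lt_mul_of_pos_left hAα hα2
        _ = _ := heq.symm
        _ ≤ _ := hpartial
    have hexp : (1 - α ^ p) * φ 0 r = φ 0 r - α ^ p * φ 0 r := by ring
    rw [hF] at hFα
    simp only at hFα
    nlinarith [hFα, hgt]
  obtain ⟨α, hα0, hα1, hαkey⟩ := hkey
  obtain ⟨f, a, ha0, hsum, hbd, habs1, habs2⟩ := schwarz_aux α hα0 hα1
  refine ⟨f, a, ha0, hsum, hbd, ?_⟩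
  rw [habs1]
  have : (∑' n : ℕ, ((n : ℝ) + 2) * ‖a (n + 2)‖ * φ (n + 1) r)
      = ∑' n : ℕ, ((n : ℝ) + 2) * ((1 - α^2) * α^n) * φ (n + 1) r :=
    tsum_congr fun n => by rw [habs2 n]
  rw [this]
  exact hαkey
end

section
/- Let m ∈ ℕ, p ∈ (0,2], λ ∈ (0,∞), and let R_{λ,m} be the minimal root in [0,1] of p(1−r^m)/(1+r^m) − 2λr/(1−r) = 0. Then for every r with R_{λ,m} < r < 1 there exist f ∈ ℬ (with coefficients a_n), ω ∈ ℬ_m, and z ∈ 𝔻 with |z| = r such that |f(ω(z))|^p + λ·[Σ_{n=1}^∞ |a_n|r^n + (1/(1+|a₀|) + r/(1−r))·Σ_{n=1}^∞ |a_n|²r^{2n}] > 1; in fact one may take ω(z) = z^m and f(z) = (z+a)/(1+az) for any a ∈ [0,1). -/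
open scoped Topology

lemma itd_pow (m : ℕ) (k : ℕ) :
    iteratedDeriv k (fun z : ℂ => z ^ m) = fun z => (m.descFactorial k : ℂ) * z ^ (m - k) := by
  induction k with
  | zero => simp
  | succ k ih =>
    rw [iteratedDeriv_succ, ih]
    funext z
    rw [deriv_const_mul _ (differentiableAt_pow _), deriv_pow_field]
    rw [Nat.descFactorial_succ]
    push_cast
    rw [Nat.sub_sub]
    ring

lemma exceeds_left {F : ℝ → ℝ} {D : ℝ} (hF : HasDerivAt F D 1) (hD : D < 0) (hF1 : F 1 = 1) :
    ∃ a : ℝ, 0 < a ∧ a < 1 ∧ 1 < F a := by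
  have h := hasDerivAt_iff_tendsto_slope.mp hF
  have h2 : ∀ᶠ a in 𝓝[≠] (1:ℝ), slope F 1 a < 0 := h.eventually (eventually_lt_nhds hD)
  have h3 : ∀ᶠ a in 𝓝[<] (1:ℝ), slope F 1 a < 0 :=
    h2.filter_mono (nhdsWithin_mono 1 (fun x hx => ne_of_lt hx))
  have h4 : Set.Ioo (0:ℝ) 1 ∈ 𝓝[<] (1:ℝ) :=
    Ioo_mem_nhdsLT_of_mem (by constructor <;> norm_num)
  obtain ⟨a, hsl, ha0, ha1⟩ := (h3.and h4).exists
  refine ⟨a, ha0, ha1, ?_⟩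
  rw [slope_def_field] at hsl
  have hden : a - 1 < 0 := by linarith
  have : 0 < F a - F 1 := by
    rcases div_neg_iff.mp hsl with ⟨hp, hn⟩ | ⟨hn, hp⟩
    · linarith
    · linarith
  linarith [hF1 ▸ this]

lemma deriv_F (r c p lam : ℝ) (hc0 : 0 < c) (hc1 : c < 1) (hr0 : 0 < r) (hr1 : r < 1) :
    HasDerivAt (fun a : ℝ => ((c + a)/(1 + a*c)) ^ p
        + lam * ((1-a^2)*r/(1-a*r) + (1/(1+a) + r/(1-r)) * ((1-a^2)^2*r^2/(1-a^2*r^2))))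
      (p * ((1-c)/(1+c)) - 2*lam*(r/(1-r))) 1 := by
  have h1c : (0:ℝ) < 1 + c := by linarith
  have h1r : (0:ℝ) < 1 - r := by linarith
  have h1r2 : (0:ℝ) < 1 - r^2 := by nlinarith
  have hu : HasDerivAt (fun a : ℝ => (c + a)/(1 + a*c)) ((1-c)/(1+c)) 1 := by
    have hn : HasDerivAt (fun a : ℝ => c + a) 1 1 := (hasDerivAt_id 1).const_add c
    have hd : HasDerivAt (fun a : ℝ => 1 + a*c) c 1 := by
      simpa using ((hasDerivAt_id 1).mul_const c).const_add 1
    have := hn.div hd (by nlinarith)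
    refine this.congr_deriv ?_
    field_simp
    ring
  have hu1 : (c + (1:ℝ))/(1 + 1*c) = 1 := by
    rw [one_mul, add_comm c 1]
    exact div_self (by linarith)
  have hU : HasDerivAt (fun a : ℝ => ((c + a)/(1 + a*c)) ^ p) (p * ((1-c)/(1+c))) 1 := by
    have := hu.rpow_const (p := p) (Or.inl (by rw [hu1]; norm_num))
    convert this using 1
    rw [hu1, Real.one_rpow]
    ring
  have hv : HasDerivAt (fun a : ℝ => (1-a^2)*r/(1-a*r)) (-(2*(r/(1-r)))) 1 := by
    have hn : HasDerivAt (fun a : ℝ => (1-a^2)*r) (-(2*1^1)*r) 1 :=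
      ((hasDerivAt_pow 2 1).const_sub 1).mul_const r
    have hd : HasDerivAt (fun a : ℝ => 1 - a*r) (-(1*r)) 1 :=
      ((hasDerivAt_id 1).mul_const r).const_sub 1
    have := hn.div hd (by simp; linarith)
    refine this.congr_deriv ?_
    field_simp
    ring
  have hq : HasDerivAt (fun a : ℝ => (1-a^2)^2*r^2/(1-a^2*r^2))
      (((2:ℕ) * (1-(1:ℝ)^2)^(2-1) * (-(2*1^1)) * r^2 * (1-1^2*r^2)
        - (1-(1:ℝ)^2)^2*r^2 * (-(2*1^1*r^2))) / (1-1^2*r^2)^2) 1 := by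
    have hn : HasDerivAt (fun a : ℝ => (1-a^2)^2*r^2)
        ((2:ℕ) * (1-(1:ℝ)^2)^(2-1) * (-(2*1^1)) * r^2) 1 :=
      (((hasDerivAt_pow 2 1).const_sub 1).pow 2).mul_const (r^2)
    have hd : HasDerivAt (fun a : ℝ => 1 - a^2*r^2) (-(2*1^1*r^2)) 1 :=
      ((hasDerivAt_pow 2 1).mul_const (r^2)).const_sub 1
    exact hn.div hd (by simp; nlinarith)
  have hc1' : HasDerivAt (fun a : ℝ => 1/(1+a) + r/(1-r))
      ((0 * (1+1) - 1 * 1)/(1+1)^2) 1 := by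
    have hn : HasDerivAt (fun _ : ℝ => (1:ℝ)) 0 1 := hasDerivAt_const 1 1
    have hd : HasDerivAt (fun a : ℝ => 1 + a) 1 1 := by
      simpa using (hasDerivAt_id 1).const_add (1:ℝ)
    exact (hn.div hd (by norm_num)).add_const (r/(1-r))
  have hw : HasDerivAt
      (fun a : ℝ => (1/(1+a) + r/(1-r)) * ((1-a^2)^2*r^2/(1-a^2*r^2))) 0 1 := by
    have := hc1'.mul hq
    refine this.congr_deriv ?_
    norm_num
  have := hU.add ((hv.add hw).const_mul lam)
  refine this.congr_deriv ?_
  ring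

def mcoef (b : ℂ) : ℕ → ℂ
  | 0 => b
  | (k+1) => (1 - b^2) * (-b)^k

@[simp] lemma mcoef_zero (b : ℂ) : mcoef b 0 = b := rfl
@[simp] lemma mcoef_succ (b : ℂ) (k : ℕ) : mcoef b (k+1) = (1 - b^2) * (-b)^k := rfl

set_option maxHeartbeats 1000000

/-- Theorem 5 of the paper, sharpness part.
With `R_{λ,m}` the minimal root in `[0,1]` of `p(1−r^m)/(1+r^m) − 2λr/(1−r) = 0`,
for every `r` with `R_{λ,m} < r < 1` there exist `f ∈ ℬ`, `ω ∈ ℬ_m` and `z` with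
`|z| = r` such that `|f(ω(z))|^p + λ[B₁(f,r) + A(f₀,r)] > 1`. -/
theorem stmt_9
    (m : ℕ) (hm : 1 ≤ m) (p : ℝ) (hp0 : 0 < p) (hp2 : p ≤ 2)
    (lam : ℝ) (hlam : 0 < lam)
    -- R the minimal root in [0,1] of p(1-r^m)/(1+r^m) - 2λ r/(1-r) = 0
    (R : ℝ) (hR : R ∈ Set.Icc (0:ℝ) 1)
    (hroot : p * ((1 - R ^ m) / (1 + R ^ m)) - 2 * lam * (R / (1 - R)) = 0)
    (hmin : ∀ r ∈ Set.Icc (0:ℝ) 1,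
      p * ((1 - r ^ m) / (1 + r ^ m)) - 2 * lam * (r / (1 - r)) = 0 → R ≤ r) :
    ∀ r : ℝ, R < r → r < 1 →
      ∃ (f : ℂ → ℂ) (a : ℕ → ℂ) (ω : ℂ → ℂ) (z : ℂ),
        (∀ w ∈ Metric.ball (0:ℂ) 1, HasSum (fun n => a n * w ^ n) (f w)) ∧
        (∀ w ∈ Metric.ball (0:ℂ) 1, ‖f w‖ ≤ 1) ∧
        DifferentiableOn ℂ ω (Metric.ball (0:ℂ) 1) ∧
        (∀ w ∈ Metric.ball (0:ℂ) 1, ‖ω w‖ ≤ 1) ∧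
        (∀ k < m, iteratedDeriv k ω 0 = 0) ∧
        iteratedDeriv m ω 0 ≠ 0 ∧
        z ∈ Metric.ball (0:ℂ) 1 ∧ ‖z‖ = r ∧
        1 < ‖f (ω z)‖ ^ p
          + lam * ((∑' n : ℕ, ‖a (n + 1)‖ * r ^ (n + 1))
              + (1 / (1 + ‖a 0‖) + r / (1 - r)) *
                  ∑' n : ℕ, ‖a (n + 1)‖ ^ 2 * r ^ (2 * (n + 1))) := by
  intro r hRr hr1
  have hr0 : 0 < r := lt_of_le_of_lt hR.1 hRr
  have hR1 : R < 1 := hRr.trans hr1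
  have hmne : m ≠ 0 := by omega
  have hc0 : 0 < r ^ m := pow_pos hr0 m
  have hc1 : r ^ m < 1 := pow_lt_one₀ hr0.le hr1 hmne
  -- the equation value at r is negative
  have hg_neg : p * ((1 - r^m)/(1 + r^m)) - 2*lam*(r/(1-r)) < 0 := by
    have hRm : R ^ m < r ^ m := pow_lt_pow_left₀ hRr hR.1 hmne
    have hRm0 : 0 ≤ R ^ m := pow_nonneg hR.1 m
    have h1 : (1 - r^m)/(1 + r^m) < (1 - R^m)/(1 + R^m) := by
      rw [div_lt_div_iff₀ (by linarith) (by linarith)]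
      nlinarith
    have h2 : R/(1-R) < r/(1-r) := by
      rw [div_lt_div_iff₀ (by linarith) (by linarith)]
      nlinarith
    have e1 := mul_lt_mul_of_pos_left h1 hp0
    have e2 := mul_lt_mul_of_pos_left h2 (show (0:ℝ) < 2*lam by linarith)
    linarith
  -- value at a = 1 is 1
  have hF1 : ((r^m + (1:ℝ))/(1 + 1*r^m)) ^ p
      + lam * ((1-(1:ℝ)^2)*r/(1-1*r) + (1/(1+(1:ℝ)) + r/(1-r)) *
        ((1-(1:ℝ)^2)^2*r^2/(1-(1:ℝ)^2*r^2))) = 1 := by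
    have hb : (r^m + (1:ℝ))/(1 + 1*r^m) = 1 := by
      rw [one_mul, add_comm]
      exact div_self (by linarith)
    rw [hb, Real.one_rpow]
    norm_num
  obtain ⟨a, ha0, ha1, hFa⟩ :=
    exceeds_left (deriv_F r (r^m) p lam hc0 hc1 hr0 hr1) hg_neg hF1
  have hbabs : ‖(a : ℂ)‖ = a := by
    rw [Complex.norm_real, Real.norm_eq_abs, abs_of_pos ha0]
  have ha2 : 0 < 1 - a^2 := by nlinarith
  have hone_sub : ‖(1 - (a:ℂ)^2)‖ = 1 - a^2 := by
    have : (1:ℂ) - (a:ℂ)^2 = ((1 - a^2 : ℝ) : ℂ) := by push_cast; ring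
    rw [this, Complex.norm_real, Real.norm_eq_abs, abs_of_pos ha2]
  have hne : ∀ w : ℂ, ‖w‖ < 1 → (1:ℂ) + (a:ℂ)*w ≠ 0 := by
    intro w hw h
    have h1 : (a:ℂ)*w = -1 := by linear_combination h
    have h2 : ‖(a:ℂ)*w‖ = 1 := by rw [h1]; simp
    rw [norm_mul, hbabs] at h2
    nlinarith [norm_nonneg w]
  refine ⟨fun w => (w + (a:ℂ))/(1 + (a:ℂ)*w), mcoef (a:ℂ),
    fun w => w ^ m, (r : ℂ), ?_, ?_, ?_, ?_, ?_, ?_, ?_, ?_, ?_⟩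
  · -- HasSum
    intro w hw
    rw [Metric.mem_ball, dist_zero_right] at hw
    have hwabs : ‖w‖ < 1 := hw
    have hbw : ‖-((a:ℂ)*w)‖ < 1 := by
      rw [norm_neg]
      show ‖(a:ℂ)*w‖ < 1
      rw [norm_mul, hbabs]
      nlinarith [norm_nonneg w]
    have hgeo := hasSum_geometric_of_norm_lt_one hbw
    have h2 := hgeo.mul_left ((1 - (a:ℂ)^2) * w)
    have hfun : (fun n : ℕ => (1 - (a:ℂ)^2) * w * (-((a:ℂ)*w))^n)
        = fun n : ℕ => mcoef (a:ℂ) (n+1) * w^(n+1) := by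
      funext n
      rw [mcoef_succ, show -((a:ℂ)*w) = (-(a:ℂ))*w by ring, mul_pow, pow_succ]
      ring
    rw [hfun] at h2
    have h3 := (hasSum_nat_add_iff (f := fun n : ℕ => mcoef (a:ℂ) n * w ^ n) 1).mp h2
    convert h3 using 1
    · rfl
    have hnz := hne w hwabs
    rw [Finset.sum_range_one, mcoef_zero, pow_zero, mul_one, sub_neg_eq_add]
    rw [← div_eq_mul_inv, div_add' _ _ _ hnz]
    congr 1
    ring
  · -- bounded by 1
    intro w hw
    rw [Metric.mem_ball, dist_zero_right] at hw
    have hwabs : ‖w‖ < 1 := hw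
    have hnz := hne w hwabs
    show ‖(w + (a:ℂ))/(1 + (a:ℂ)*w)‖ ≤ 1
    rw [norm_div, div_le_one (norm_pos_iff.mpr hnz)]
    have hwsq : w.re^2 + w.im^2 < 1 := by
      have := Complex.sq_norm w
      rw [Complex.normSq_apply] at this
      nlinarith [norm_nonneg w]
    rw [Complex.norm_def, Complex.norm_def]
    apply Real.sqrt_le_sqrt
    simp only [Complex.normSq_apply, Complex.add_re, Complex.add_im, Complex.mul_re,
      Complex.mul_im, Complex.one_re, Complex.one_im, Complex.ofReal_re, Complex.ofReal_im]
    nlinarith [sq_nonneg w.re, sq_nonneg w.im]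
  · exact (differentiable_pow m).differentiableOn
  · intro w hw
    rw [Metric.mem_ball, dist_zero_right] at hw
    show ‖w ^ m‖ ≤ 1
    rw [norm_pow]
    exact pow_le_one₀ (norm_nonneg w) (le_of_lt hw)
  · intro k hk
    rw [itd_pow]
    simp [zero_pow (Nat.sub_ne_zero_of_lt hk)]
  · rw [itd_pow]
    simp [Nat.descFactorial_self, Nat.factorial_ne_zero]
  · rw [Metric.mem_ball, dist_zero_right]
    show ‖(r : ℂ)‖ < 1
    rw [Complex.norm_real, Real.norm_eq_abs, abs_of_pos hr0]
    exact hr1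
  · rw [Complex.norm_real, Real.norm_eq_abs, abs_of_pos hr0]
  · -- the inequality
    have har : a * r < 1 := by nlinarith
    have har2 : a^2 * r^2 < 1 := by nlinarith
    have hfv : ‖((r:ℂ)^m + (a:ℂ))/(1 + (a:ℂ)*(r:ℂ)^m)‖ = (r^m + a)/(1 + a*r^m) := by
      have : ((r:ℂ)^m + (a:ℂ))/(1 + (a:ℂ)*(r:ℂ)^m) = (((r^m + a)/(1 + a*r^m) : ℝ) : ℂ) := by
        push_cast
        ring
      rw [this, Complex.norm_real, Real.norm_eq_abs,
        abs_of_pos (div_pos (by linarith) (by nlinarith))]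
    have hT1 : ∑' n : ℕ, ‖mcoef (a:ℂ) (n+1)‖ * r ^ (n+1)
        = (1-a^2)*r/(1-a*r) := by
      have key : ∀ n : ℕ, ‖mcoef (a:ℂ) (n+1)‖ * r ^ (n+1)
          = ((1-a^2)*r) * (a*r)^n := by
        intro n
        rw [mcoef_succ, norm_mul, norm_pow, norm_neg, hone_sub, hbabs,
          mul_pow, pow_succ]
        ring
      rw [tsum_congr key, tsum_mul_left,
        tsum_geometric_of_lt_one (by positivity) har, div_eq_mul_inv]
    have hT2 : ∑' n : ℕ, ‖mcoef (a:ℂ) (n+1)‖ ^ 2 * r ^ (2*(n+1))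
        = (1-a^2)^2*r^2/(1-a^2*r^2) := by
      have key : ∀ n : ℕ, ‖mcoef (a:ℂ) (n+1)‖ ^ 2 * r ^ (2*(n+1))
          = ((1-a^2)^2*r^2) * (a^2*r^2)^n := by
        intro n
        rw [mcoef_succ, norm_mul, norm_pow, norm_neg, hone_sub, hbabs]
        rw [mul_pow, mul_pow, ← pow_mul, ← pow_mul, pow_mul r]
        ring
      rw [tsum_congr key, tsum_mul_left,
        tsum_geometric_of_lt_one (by positivity) har2, div_eq_mul_inv]
    show 1 < ‖((r:ℂ)^m + (a:ℂ))/(1 + (a:ℂ)*(r:ℂ)^m)‖ ^ p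
      + lam * ((∑' n : ℕ, ‖mcoef (a:ℂ) (n+1)‖ * r ^ (n+1))
          + (1 / (1 + ‖mcoef (a:ℂ) 0‖) + r / (1-r)) *
              ∑' n : ℕ, ‖mcoef (a:ℂ) (n+1)‖ ^ 2 * r ^ (2*(n+1)))
    rw [hfv, hT1, hT2, mcoef_zero, hbabs]
    exact hFa
end

section
/- Let f(z) = Σ_{n=0}^∞ a_n z^n be analytic on 𝔻 with |f(z)| ≤ 1, let p ∈ (0,2], m, q ∈ ℕ with q ≥ 2 and 0 < m < q, ω ∈ ℬ_m, and λ ∈ (0,∞). Define Ψ₅(r) = 2λ·r^{q+m}/(1−r^q) − p(1−r^m)/(1+r^m) and let R be the minimal positive root of Ψ₅(r) = 0 in [0,1]. Then for every z ∈ 𝔻 with |z| = r ≤ R one has |f(ω(z))|^p + λ·Σ_{k=1}^∞ |a_{qk+m}|·r^{qk+m} ≤ 1. -/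
open Complex Metric Filter Finset

noncomputable def mser (a : ℕ → ℂ) : FormalMultilinearSeries ℂ ℂ ℂ :=
  fun n => ContinuousMultilinearMap.mkPiRing ℂ (Fin n) (a n)

lemma mser_apply (a : ℕ → ℂ) (n : ℕ) (z : ℂ) : (mser a n) (fun _ => z) = a n * z ^ n := by
  simp [mser, ContinuousMultilinearMap.mkPiRing_apply, smul_eq_mul]; ring

lemma mser_coeff (a : ℕ → ℂ) (n : ℕ) : (mser a).coeff n = a n := by
  simpa using mser_apply a n 1

lemma hasFPS_of_hasSum {g : ℂ → ℂ} {a : ℕ → ℂ}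
    (hg : ∀ z ∈ ball (0:ℂ) 1, HasSum (fun n => a n * z ^ n) (g z)) :
    HasFPowerSeriesOnBall g (mser a) 0 1 := by
  refine ⟨?_, one_pos, ?_⟩
  · refine ENNReal.le_of_forall_nnreal_lt fun r hr => ?_
    have hr1 : (r : ℝ) < 1 := by exact_mod_cast hr
    have hmem : ((r : ℝ) : ℂ) ∈ ball (0:ℂ) 1 := by
      simp [mem_ball_zero_iff, _root_.abs_of_nonneg r.2, hr1]
    have hsum := (hg _ hmem).summable
    have ht : Tendsto (fun n => ‖a n * ((r:ℝ):ℂ) ^ n‖) atTop (nhds 0) := by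
      simpa using hsum.tendsto_atTop_zero.norm
    refine FormalMultilinearSeries.le_radius_of_isBigO (p := mser a) (r := r) ?_
    have : (fun n => ‖a n * ((r:ℝ):ℂ) ^ n‖) = fun n => ‖mser a n‖ * (r:ℝ) ^ n := by
      funext n
      simp [mser, ContinuousMultilinearMap.norm_mkPiRing, norm_mul, norm_pow,
        Complex.norm_real, _root_.abs_of_nonneg r.2]
    rw [this] at ht
    exact ht.isBigO_one ℝ
  · intro y hy
    have hy' : y ∈ ball (0:ℂ) 1 := by
      rwa [← ENNReal.ofReal_one, Metric.emetric_ball] at hy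
    have := hg y hy'
    simp only [zero_add]
    convert this using 2 with n
    · rfl
    exact mser_apply a n y


-- key algebra: |c - w| ≤ |1 - conj c * w| when |c| ≤ 1, |w| ≤ 1
lemma mobius_num_le_den {c w : ℂ} (hc : ‖c‖ ≤ 1) (hw : ‖w‖ ≤ 1) :
    ‖c - w‖ ≤ ‖1 - (starRingEnd ℂ) c * w‖ := by
  have h1 : Complex.normSq c ≤ 1 := by
    rw [← Complex.sq_norm]; nlinarith [norm_nonneg c]
  have h2 : Complex.normSq w ≤ 1 := by
    rw [← Complex.sq_norm]; nlinarith [norm_nonneg w]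
  have key : Complex.normSq (c - w) ≤ Complex.normSq (1 - (starRingEnd ℂ) c * w) := by
    have e1 : Complex.normSq (1 - (starRingEnd ℂ) c * w) - Complex.normSq (c - w)
        = (1 - Complex.normSq c) * (1 - Complex.normSq w) := by
      simp [Complex.normSq_apply, Complex.sub_re, Complex.sub_im, Complex.mul_re,
        Complex.mul_im, Complex.conj_re, Complex.conj_im]
      ring
    nlinarith [e1]
  have := Real.sqrt_le_sqrt key
  simpa [Complex.norm_def] using this

lemma mobius_den_ne {c w : ℂ} (hc : ‖c‖ < 1) (hw : ‖w‖ ≤ 1) :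
    1 - (starRingEnd ℂ) c * w ≠ 0 := by
  intro h
  have : ‖(starRingEnd ℂ) c * w‖ = 1 := by
    have : (starRingEnd ℂ) c * w = 1 := by linear_combination -h
    simp [this]
  rw [norm_mul, Complex.norm_conj] at this
  nlinarith [mul_le_of_le_one_right (norm_nonneg c) hw]

lemma const_of_abs_eq_one {F : ℂ → ℂ} (hFd : DifferentiableOn ℂ F (ball 0 1))
    (hFb : ∀ z ∈ ball (0:ℂ) 1, ‖F z‖ ≤ 1)
    (hc : ‖F 0‖ = 1) : Set.EqOn F (Function.const ℂ (F 0)) (ball 0 1) := by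
  apply Complex.eqOn_of_isPreconnected_of_isMaxOn_norm (convex_ball (0:ℂ) 1).isPreconnected
    isOpen_ball hFd (mem_ball_self one_pos)
  intro z hz
  simp only [Function.comp, Set.mem_setOf_eq, hc]
  exact hFb z hz

-- Möbius transform bundle
lemma mobius_G {F : ℂ → ℂ} (hFd : DifferentiableOn ℂ F (ball 0 1))
    (hFb : ∀ z ∈ ball (0:ℂ) 1, ‖F z‖ ≤ 1)
    (hc : ‖F 0‖ < 1) :
    ∃ G : ℂ → ℂ, DifferentiableOn ℂ G (ball 0 1) ∧ G 0 = 0 ∧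
      (∀ z ∈ ball (0:ℂ) 1, ‖G z‖ ≤ 1) ∧
      (∀ z ∈ ball (0:ℂ) 1,
        ‖F 0 - F z‖ = ‖G z‖ * ‖1 - (starRingEnd ℂ) (F 0) * F z‖) ∧
      HasDerivAt G (-(deriv F 0) / (1 - (starRingEnd ℂ) (F 0) * F 0)) 0 := by
  set c := F 0 with hcdef
  set G : ℂ → ℂ := fun z => (c - F z) / (1 - (starRingEnd ℂ) c * F z) with hG
  have hden : ∀ z ∈ ball (0:ℂ) 1, 1 - (starRingEnd ℂ) c * F z ≠ 0 := fun z hz =>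
    mobius_den_ne hc (hFb z hz)
  have h0m : (0:ℂ) ∈ ball (0:ℂ) 1 := mem_ball_self one_pos
  refine ⟨G, ?_, ?_, ?_, ?_, ?_⟩
  · exact DifferentiableOn.div ((differentiableOn_const c).sub hFd)
      ((differentiableOn_const 1).sub ((differentiableOn_const _).mul hFd)) hden
  · simp [hG, hcdef]
  · intro z hz
    rw [hG]
    simp only [norm_div]
    rw [div_le_one (norm_pos_iff.mpr (hden z hz))]
    exact mobius_num_le_den hc.le (hFb z hz)
  · intro z hz
    rw [hG, norm_div, div_mul_cancel₀]
    exact norm_ne_zero_iff.mpr (hden z hz)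
  · have hFa : HasDerivAt F (deriv F 0) 0 :=
      ((hFd 0 h0m).differentiableAt (isOpen_ball.mem_nhds h0m)).hasDerivAt
    have hnum : HasDerivAt (fun z => c - F z) (-(deriv F 0)) 0 := by
      exact hFa.const_sub c
    have hdenom : HasDerivAt (fun z => 1 - (starRingEnd ℂ) c * F z)
        (-((starRingEnd ℂ) c * deriv F 0)) 0 := by
      exact (hFa.const_mul _).const_sub 1
    have := hnum.div hdenom (hden 0 h0m)
    have hne : (1 - (starRingEnd ℂ) c * c) ≠ 0 := by
      have h' := hden 0 h0m; rwa [← hcdef] at h'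
    rw [← hcdef] at this
    exact this.congr_deriv (by rw [sub_self, zero_mul, sub_zero, pow_two, mul_div_mul_right _ _ hne])

lemma pick_deriv_zero {F : ℂ → ℂ} (hFd : DifferentiableOn ℂ F (ball 0 1))
    (hFb : ∀ z ∈ ball (0:ℂ) 1, ‖F z‖ ≤ 1) :
    ‖deriv F 0‖ ≤ 1 - ‖F 0‖ ^ 2 := by
  have h0m : (0:ℂ) ∈ ball (0:ℂ) 1 := mem_ball_self one_pos
  have hc1 : ‖F 0‖ ≤ 1 := hFb 0 h0m
  rcases eq_or_lt_of_le hc1 with heq | hlt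
  · have hconst := const_of_abs_eq_one hFd hFb heq
    have hev : F =ᶠ[nhds (0:ℂ)] fun _ => F 0 := by
      filter_upwards [isOpen_ball.mem_nhds h0m] with x hx using hconst hx
    have : deriv F 0 = 0 := by
      rw [hev.deriv_eq]; exact deriv_const 0 (F 0)
    simp [this, heq]
  · obtain ⟨G, hGd, hG0, hGb, habs, hGder⟩ := mobius_G hFd hFb hlt
    have hder1 : ‖deriv G 0‖ ≤ 1 := by
      refine le_of_forall_pos_le_add fun ε hε => ?_
      have hmaps : Set.MapsTo G (ball 0 1) (ball (G 0) (1 + ε)) := by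
        intro x hx
        rw [hG0, mem_ball_zero_iff]
        calc ‖G x‖ ≤ 1 := hGb x hx
        _ < 1 + ε := by linarith
      have := Complex.norm_deriv_le_div_of_mapsTo_ball hGd (hmaps.mono_right ball_subset_closedBall) one_pos
      simpa using this
    have hrel : deriv G 0 = -(deriv F 0) / (1 - (starRingEnd ℂ) (F 0) * F 0) := hGder.deriv
    have hnsq : (1 : ℂ) - (starRingEnd ℂ) (F 0) * F 0 = ((1 - ‖F 0‖ ^ 2 : ℝ) : ℂ) := by
      rw [Complex.sq_norm]
      simp [Complex.normSq_eq_conj_mul_self]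
    have hpos : (0:ℝ) ≤ 1 - ‖F 0‖ ^ 2 := by nlinarith [norm_nonneg (F 0)]
    have habs' : ‖deriv G 0‖ * (1 - ‖F 0‖ ^ 2) = ‖deriv F 0‖ := by
      rw [hrel, norm_div, hnsq, norm_neg]
      rw [Complex.norm_real, Real.norm_of_nonneg hpos]
      rcases eq_or_lt_of_le hpos with h | h
      · exfalso; nlinarith [norm_nonneg (F 0)]
      · field_simp
    nlinarith [norm_nonneg (deriv G 0), hder1, hpos]

lemma schwarz_pick {F : ℂ → ℂ} (hFd : DifferentiableOn ℂ F (ball 0 1))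
    (hFb : ∀ z ∈ ball (0:ℂ) 1, ‖F z‖ ≤ 1) :
    ∀ z ∈ ball (0:ℂ) 1,
      ‖F z‖ * (1 + ‖F 0‖ * ‖z‖)
        ≤ ‖F 0‖ + ‖z‖ := by
  intro z hz
  have h0m : (0:ℂ) ∈ ball (0:ℂ) 1 := mem_ball_self one_pos
  have hc1 : ‖F 0‖ ≤ 1 := hFb 0 h0m
  have ht0 : (0:ℝ) ≤ ‖z‖ := norm_nonneg z
  have ht1 : ‖z‖ ≤ 1 := by
    have := mem_ball_zero_iff.mp hz
    simpa using this.le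
  rcases eq_or_lt_of_le hc1 with heq | hlt
  · have hconst := const_of_abs_eq_one hFd hFb heq
    have : F z = F 0 := hconst hz
    rw [this, heq]
    ring_nf
    nlinarith
  · obtain ⟨G, hGd, hG0, hGb, habs, hGder⟩ := mobius_G hFd hFb hlt
    have hGz : ‖G z‖ ≤ ‖z‖ := by
      refine le_of_forall_pos_le_add fun ε hε => ?_
      have hmaps : Set.MapsTo G (ball 0 1) (ball (G 0) (1 + ε)) := by
        intro x hx
        rw [hG0, mem_ball_zero_iff]
        calc ‖G x‖ ≤ 1 := hGb x hx
        _ < 1 + ε := by linarith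
      have := Complex.dist_le_div_mul_dist_of_mapsTo_ball hGd (hmaps.mono_right ball_subset_closedBall) hz
      rw [hG0] at this
      simp only [dist_zero_right, div_one, Complex.dist_eq, sub_zero] at this
      calc ‖G z‖ ≤ (1 + ε) * ‖z‖ := this
      _ = ‖z‖ + ε * ‖z‖ := by ring
      _ ≤ ‖z‖ + ε := by nlinarith
    -- key numerical inequality
    set b := ‖F 0‖
    set s := ‖F z‖
    set t := ‖z‖
    have hb0 : 0 ≤ b := norm_nonneg _
    have hs0 : 0 ≤ s := norm_nonneg _
    have hs1 : s ≤ 1 := hFb z hz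
    have hkey : ‖F 0 - F z‖ ≤ t * ‖1 - (starRingEnd ℂ) (F 0) * F z‖ := by
      rw [habs z hz]
      exact mul_le_mul_of_nonneg_right hGz (norm_nonneg _)
    have h1 : Complex.normSq (F 0 - F z) ≤ t^2 * Complex.normSq (1 - (starRingEnd ℂ) (F 0) * F z) := by
      rw [← Complex.sq_norm, ← Complex.sq_norm]
      calc ‖F 0 - F z‖ ^ 2 ≤ (t * ‖1 - (starRingEnd ℂ) (F 0) * F z‖)^2 := by
            apply pow_le_pow_left₀ (norm_nonneg _) hkey
      _ = t^2 * ‖1 - (starRingEnd ℂ) (F 0) * F z‖ ^ 2 := by ring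
    set e := ((starRingEnd ℂ) (F 0) * F z).re with he_def
    have hb2 : b^2 = (F 0).re^2 + (F 0).im^2 := by
      rw [show b = ‖F 0‖ from rfl, Complex.sq_norm, Complex.normSq_apply]; ring
    have hs2 : s^2 = (F z).re^2 + (F z).im^2 := by
      rw [show s = ‖F z‖ from rfl, Complex.sq_norm, Complex.normSq_apply]; ring
    have hexp1 : Complex.normSq (F 0 - F z) = b^2 + s^2 - 2*e := by
      rw [hb2, hs2]
      simp only [Complex.normSq_apply, Complex.sub_re, Complex.sub_im, he_def, Complex.mul_re,
        Complex.mul_im, Complex.conj_re, Complex.conj_im]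
      ring
    have hexp2 : Complex.normSq (1 - (starRingEnd ℂ) (F 0) * F z) = 1 + b^2*s^2 - 2*e := by
      rw [hb2, hs2]
      simp only [Complex.normSq_apply, Complex.sub_re, Complex.sub_im, he_def, Complex.mul_re,
        Complex.mul_im, Complex.conj_re, Complex.conj_im, Complex.one_re, Complex.one_im]
      ring
    have he_abs : |e| ≤ b * s := by
      calc |e| ≤ ‖(starRingEnd ℂ) (F 0) * F z‖ := Complex.abs_re_le_norm _
      _ = b * s := by rw [norm_mul, Complex.norm_conj]
    rw [hexp1, hexp2] at h1
    have he_up := (abs_le.mp he_abs).2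
    clear_value b s t e
    clear hexp1 hexp2 hkey habs hGder he_abs he_def hGz
    have h2 : s^2*(1-t^2*b^2) + b^2 - t^2 ≤ 2*e*(1-t^2) := by nlinarith [h1]
    have h3 : 2*e*(1-t^2) ≤ 2*(b*s)*(1-t^2) := by
      have htt : (0:ℝ) ≤ 1 - t^2 := by nlinarith
      nlinarith [mul_le_mul_of_nonneg_right he_up htt]
    have key : ((1+b*t)*s - (b+t)) * ((1-b*t)*s - (b-t)) ≤ 0 := by nlinarith [h2, h3]
    have hbs1 : b * s ≤ 1 := mul_le_one₀ hc1 hs0 hs1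
    nlinarith [key, mul_nonneg ht0 (by linarith : (0:ℝ) ≤ 1 - b*s)]

-- Wiener slice: the function w ↦ ∑ a_{Nk} w^k is bounded by 1 on the disk
lemma wiener_slice {g : ℂ → ℂ} {a : ℕ → ℂ}
    (hg : ∀ z ∈ ball (0:ℂ) 1, HasSum (fun n => a n * z ^ n) (g z))
    (hgb : ∀ z ∈ ball (0:ℂ) 1, ‖g z‖ ≤ 1)
    {N : ℕ} (hN : 0 < N) :
    ∀ w ∈ ball (0:ℂ) 1, ∃ S, HasSum (fun k => a (N*k) * w ^ k) S ∧ ‖S‖ ≤ 1 := by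
  intro w hw
  have h0m : (0:ℂ) ∈ ball (0:ℂ) 1 := mem_ball_self one_pos
  rcases eq_or_ne w 0 with rfl | hw0
  · refine ⟨a 0, ?_, ?_⟩
    · have : HasSum (fun k => a (N*k) * (0:ℂ) ^ k) (a (N*0) * (0:ℂ)^0) := by
        apply hasSum_single
        intro k hk
        simp [zero_pow hk]
      simpa using this
    · have h1 : HasSum (fun n => a n * (0:ℂ) ^ n) (a 0 * (0:ℂ)^0) := by
        apply hasSum_single
        intro k hk
        simp [zero_pow hk]
      have h2 := hg 0 h0m
      have : g 0 = a 0 := by simpa using (h1.unique h2).symm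
      rw [← this]; exact hgb 0 h0m
  · set z : ℂ := Complex.exp (Complex.log w / N) with hzdef
    have hzN : z ^ N = w := by
      rw [hzdef, ← Complex.exp_nat_mul]
      rw [mul_div_cancel₀ _ (by exact_mod_cast hN.ne' : (N:ℂ) ≠ 0)]
      exact Complex.exp_log hw0
    have hz1 : ‖z‖ < 1 := by
      by_contra h
      push_neg at h
      have : (1:ℝ) ≤ ‖w‖ := by
        calc (1:ℝ) ≤ ‖z‖ ^ N := one_le_pow₀ h
        _ = ‖z ^ N‖ := (norm_pow _ _).symm
        _ = ‖w‖ := by rw [hzN]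
      have := mem_ball_zero_iff.mp hw
      linarith
    set ζ : ℂ := Complex.exp (2 * Real.pi * Complex.I / N) with hζdef
    have hζprim : IsPrimitiveRoot ζ N := Complex.isPrimitiveRoot_exp N hN.ne'
    have hζN : ζ ^ N = 1 := hζprim.pow_eq_one
    have hζabs : ‖ζ‖ = 1 := by
      have h1 : ‖ζ‖ ^ N = 1 := by
        rw [← norm_pow, hζN, norm_one]
      rcases (pow_eq_one_iff_cases.mp h1) with h | h | h
      · omega
      · exact h
      · exfalso; nlinarith [norm_nonneg ζ, h.1]
    have hmem : ∀ j : ℕ, ζ ^ j * z ∈ ball (0:ℂ) 1 := by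
      intro j
      rw [mem_ball_zero_iff, norm_mul, norm_pow, hζabs, one_pow, one_mul]
      exact hz1
    -- sum over rotations
    have hsum : HasSum (fun n => ∑ j ∈ range N, a n * (ζ ^ j * z) ^ n)
        (∑ j ∈ range N, g (ζ ^ j * z)) := by
      exact hasSum_sum fun j _ => hg _ (hmem j)
    have hgeom : ∀ n : ℕ, (∑ j ∈ range N, (ζ ^ n) ^ j) = if N ∣ n then (N:ℂ) else 0 := by
      intro n
      by_cases h : N ∣ n
      · obtain ⟨k, rfl⟩ := h
        simp [pow_mul, hζN, one_pow]
      · have hne : ζ ^ n ≠ 1 := fun hcon => h (hζprim.dvd_of_pow_eq_one n hcon)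
        rw [geom_sum_eq hne, if_neg h]
        have : (ζ ^ n) ^ N = 1 := by rw [← pow_mul, mul_comm, pow_mul, hζN, one_pow]
        rw [this, sub_self, zero_div]
    have hsum2 : HasSum (fun n => a n * z ^ n * (if N ∣ n then (N:ℂ) else 0))
        (∑ j ∈ range N, g (ζ ^ j * z)) := by
      convert hsum using 2 with n
      rw [← hgeom n, Finset.mul_sum]
      congr 1 with j
      rw [mul_pow, ← pow_mul, Nat.mul_comm n j, pow_mul]
      ring
    set S := (∑ j ∈ range N, g (ζ ^ j * z)) with hSdef
    have hinj : Function.Injective (fun k => N * k) := fun x y h => by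
      simpa [Nat.mul_right_inj hN.ne'] using h
    have hvanish : ∀ n ∉ Set.range (fun k => N * k), a n * z ^ n * (if N ∣ n then (N:ℂ) else 0) = 0 := by
      intro n hn
      rw [if_neg, mul_zero]
      intro ⟨k, hk⟩
      exact hn ⟨k, hk.symm⟩
    have hsum3 : HasSum (fun k => a (N*k) * w ^ k * N) S := by
      have h5 := (hinj.hasSum_iff hvanish).mpr hsum2
      have heq : (fun k => a (N*k) * w ^ k * N) =
          ((fun n => a n * z ^ n * (if N ∣ n then (N:ℂ) else 0)) ∘ (fun k => N * k)) := by
        funext k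
        simp only [Function.comp_apply]
        rw [if_pos ⟨k, rfl⟩, pow_mul, hzN]
      rw [heq]
      exact h5
    refine ⟨S / N, ?_, ?_⟩
    · have hNC : (N:ℂ) ≠ 0 := by exact_mod_cast hN.ne'
      have h6 := hsum3.div_const N
      simpa [mul_div_cancel_right₀ _ hNC] using h6
    · rw [norm_div, Complex.norm_natCast]
      rw [div_le_one (by exact_mod_cast hN)]
      calc ‖S‖ ≤ ∑ j ∈ range N, ‖g (ζ ^ j * z)‖ := by
            simpa using norm_sum_le (range N) (fun j => g (ζ ^ j * z))
      _ ≤ ∑ j ∈ range N, 1 := Finset.sum_le_sum fun j _ => hgb _ (hmem j)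
      _ = N := by simp

-- Schur-type coefficient bound
lemma schur_coeff {g : ℂ → ℂ} {a : ℕ → ℂ}
    (hg : ∀ z ∈ ball (0:ℂ) 1, HasSum (fun n => a n * z ^ n) (g z))
    (hgb : ∀ z ∈ ball (0:ℂ) 1, ‖g z‖ ≤ 1)
    {N : ℕ} (hN : 0 < N) :
    ‖a N‖ ≤ 1 - ‖a 0‖ ^ 2 := by
  set b : ℕ → ℂ := fun k => a (N * k) with hbdef
  set F : ℂ → ℂ := fun w => ∑' k, b k * w ^ k with hFdef
  have hW := wiener_slice hg hgb hN
  have hFsum : ∀ w ∈ ball (0:ℂ) 1, HasSum (fun k => b k * w ^ k) (F w) := by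
    intro w hw
    obtain ⟨S, hS, _⟩ := hW w hw
    have : F w = S := hS.tsum_eq
    rw [this]; exact hS
  have hFb : ∀ w ∈ ball (0:ℂ) 1, ‖F w‖ ≤ 1 := by
    intro w hw
    obtain ⟨S, hS, hSb⟩ := hW w hw
    rw [show F w = S from hS.tsum_eq]; exact hSb
  have hFPS : HasFPowerSeriesOnBall F (mser b) 0 1 := hasFPS_of_hasSum hFsum
  have hFd : DifferentiableOn ℂ F (ball 0 1) := by
    have h := hFPS.differentiableOn
    exact h.mono fun x hx => by
      rw [← ENNReal.ofReal_one, Metric.emetric_ball]; exact hx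
  have hF0 : F 0 = a 0 := by
    have := hFPS.hasFPowerSeriesAt.coeff_zero (fun _ => 1)
    rw [← this, mser_apply]
    simp [hbdef]
  have hFderiv : deriv F 0 = a N := by
    have := hFPS.hasFPowerSeriesAt.deriv
    rw [this, mser_apply]
    simp [hbdef]
  have := pick_deriv_zero hFd hFb
  rwa [hFderiv, hF0] at this

lemma schwarz_pow : ∀ (m : ℕ) (g : ℂ → ℂ) (P : FormalMultilinearSeries ℂ ℂ ℂ),
    HasFPowerSeriesAt g P 0 → DifferentiableOn ℂ g (ball 0 1) →
    (∀ z ∈ ball (0:ℂ) 1, ‖g z‖ ≤ 1) →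
    (∀ k < m, P.coeff k = 0) →
    ∀ z ∈ ball (0:ℂ) 1, ‖g z‖ ≤ ‖z‖ ^ m := by
  intro m
  induction m with
  | zero => intro g P _ _ hgb _ z hz; simpa using hgb z hz
  | succ m ih =>
    intro g P hP hgd hgb hcoeff z hz
    have hg0 : g 0 = 0 := by
      have h0 : P.coeff 0 = g 0 := hP.coeff_zero _
      rw [hcoeff 0 (Nat.succ_pos m)] at h0
      exact h0.symm
    set g' : ℂ → ℂ := dslope g 0 with hg'def
    have hP' : HasFPowerSeriesAt g' P.fslope 0 := hP.has_fpower_series_dslope_fslope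
    have hg'd : DifferentiableOn ℂ g' (ball 0 1) :=
      (differentiableOn_dslope (ball_mem_nhds _ one_pos)).mpr hgd
    have hg'b : ∀ x ∈ ball (0:ℂ) 1, ‖g' x‖ ≤ 1 := by
      intro x hx
      refine le_of_forall_pos_le_add fun ε hε => ?_
      have hmaps : Set.MapsTo g (ball 0 1) (ball (g 0) (1 + ε)) := by
        intro y hy
        rw [hg0, mem_ball_zero_iff]
        calc ‖g y‖ ≤ 1 := hgb y hy
        _ < 1 + ε := by linarith
      have := Complex.norm_dslope_le_div_of_mapsTo_ball hgd (hmaps.mono_right ball_subset_closedBall) hx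
      simpa using this
    have hcoeff' : ∀ k < m, P.fslope.coeff k = 0 := by
      intro k hk
      rw [FormalMultilinearSeries.coeff_fslope]
      exact hcoeff (k+1) (by omega)
    have hIH := ih g' P.fslope hP' hg'd hg'b hcoeff' z hz
    rcases eq_or_ne z 0 with rfl | hz0
    · simp [hg0, zero_pow (Nat.succ_ne_zero m)]
    · have : g z = z * g' z := by
        rw [hg'def, dslope_of_ne _ hz0, slope_def_field]
        field_simp [hg0]
        rw [hg0, sub_zero, sub_zero]; ring
      rw [this, norm_mul, pow_succ]
      calc ‖z‖ * ‖g' z‖ ≤ ‖z‖ * ‖z‖ ^ m :=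
            mul_le_mul_of_nonneg_left hIH (norm_nonneg z)
      _ = ‖z‖ ^ m * ‖z‖ := by ring

-- bound for ω ∈ ℬ_m
lemma omega_pow_bound {ω : ℂ → ℂ} {m : ℕ}
    (hωd : DifferentiableOn ℂ ω (Metric.ball (0:ℂ) 1))
    (hωb : ∀ z ∈ Metric.ball (0:ℂ) 1, ‖ω z‖ ≤ 1)
    (hω0 : ∀ k < m, iteratedDeriv k ω 0 = 0) :
    ∀ z ∈ Metric.ball (0:ℂ) 1, ‖ω z‖ ≤ ‖z‖ ^ m := by
  have hd2 : DifferentiableOn ℂ ω (closedBall (0:ℂ) (((1:NNReal)/2 : NNReal) : ℝ)) := by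
    apply hωd.mono
    apply closedBall_subset_ball
    norm_num
  have hPS : HasFPowerSeriesOnBall ω (cauchyPowerSeries ω 0 (((1:NNReal)/2 : NNReal) : ℝ)) 0 (((1:NNReal)/2 : NNReal) : ENNReal) :=
    hd2.hasFPowerSeriesOnBall (by norm_num)
  set P := cauchyPowerSeries ω 0 (((1:NNReal)/2 : NNReal) : ℝ) with hPdef
  have hcoeff : ∀ k < m, P.coeff k = 0 := by
    intro k hk
    have hfact := hPS.factorial_smul (1:ℂ) k
    rw [← iteratedDeriv_eq_iteratedFDeriv] at hfact
    rw [hω0 k hk] at hfact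
    have h2 : (k.factorial : ℕ) • P.coeff k = 0 := hfact
    rw [nsmul_eq_mul] at h2
    have hfne : (k.factorial : ℂ) ≠ 0 := by exact_mod_cast k.factorial_ne_zero
    exact (mul_eq_zero.mp h2).resolve_left hfne
  exact schwarz_pow m ω P hPS.hasFPowerSeriesAt hωd hωb hcoeff

lemma rpow_bound {y pp : ℝ} (hy0 : 0 ≤ y) (hy1 : y ≤ 1) (hp0 : 0 < pp) (hp2 : pp ≤ 2) :
    y ^ pp ≤ 1 - pp/2 * (1 - y^2) := by
  have h1 : y ^ pp = (y^2) ^ (pp/2) := by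
    rw [← Real.rpow_natCast y 2, ← Real.rpow_mul hy0]
    congr 1
    push_cast
    ring
  rw [h1]
  have hb := rpow_one_add_le_one_add_mul_self (s := y^2 - 1) (by nlinarith)
    (by linarith : 0 ≤ pp/2) (by linarith : pp/2 ≤ 1)
  calc (y^2) ^ (pp/2) = (1 + (y^2 - 1)) ^ (pp/2) := by ring_nf
  _ ≤ 1 + pp/2 * (y^2 - 1) := hb
  _ = 1 - pp/2 * (1 - y^2) := by ring

lemma psi_facts
    (pp : ℝ) (hp0 : 0 < pp) (m q : ℕ) (hq : 2 ≤ q) (hm : 0 < m)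
    (lam : ℝ) (hlam : 0 < lam)
    (Ψ : ℝ → ℝ)
    (hΨ : ∀ r : ℝ, Ψ r = 2 * lam * (r ^ (q + m) / (1 - r ^ q))
            - pp * ((1 - r ^ m) / (1 + r ^ m)))
    (R : ℝ) (hRpos : 0 < R) (hR1 : R ≤ 1) (hroot : Ψ R = 0)
    (hmin : ∀ r : ℝ, 0 < r → r ≤ 1 → Ψ r = 0 → R ≤ r) :
    R < 1 ∧ ∀ r : ℝ, 0 ≤ r → r ≤ R → Ψ r ≤ 0 := by
  have hqne : q ≠ 0 := by omega
  have hΨ0 : Ψ 0 = -pp := by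
    rw [hΨ]
    rw [zero_pow (by omega : q + m ≠ 0), zero_pow hqne, zero_pow hm.ne']
    norm_num
  -- continuity of Ψ on [0,x] for x < 1
  have hcont : ∀ x : ℝ, 0 ≤ x → x < 1 → ContinuousOn Ψ (Set.Icc 0 x) := by
    intro x hx0 hx1
    apply ContinuousOn.congr (f := fun r : ℝ => 2 * lam * (r ^ (q + m) / (1 - r ^ q))
            - pp * ((1 - r ^ m) / (1 + r ^ m)))
    · apply ContinuousOn.sub
      · apply continuousOn_const.mul
        apply ContinuousOn.div (continuous_pow _).continuousOn
          (continuousOn_const.sub (continuous_pow _).continuousOn)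
        intro y hy
        have h1 : y ^ q < 1 := pow_lt_one₀ hy.1 (lt_of_le_of_lt hy.2 hx1) hqne
        intro hcon
        simp only [Pi.sub_apply] at hcon
        rw [sub_eq_zero] at hcon
        linarith [hcon]
      · apply continuousOn_const.mul
        apply ContinuousOn.div (continuousOn_const.sub (continuous_pow _).continuousOn)
          (continuousOn_const.add (continuous_pow _).continuousOn)
        intro y hy
        have h1 : 0 ≤ y ^ m := pow_nonneg hy.1 m
        intro hcon
        simp only [Pi.add_apply] at hcon
        nlinarith
    · intro y _
      exact hΨ y
  -- a root below any point where Ψ is positive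
  have hrootbelow : ∀ x : ℝ, 0 ≤ x → x < 1 → 0 < Ψ x → ∃ s, 0 < s ∧ s ≤ x ∧ Ψ s = 0 := by
    intro x hx0 hx1 hΨx
    have hsub := intermediate_value_Icc hx0 (hcont x hx0 hx1)
    have h0mem : (0:ℝ) ∈ Set.Icc (Ψ 0) (Ψ x) := by
      constructor
      · rw [hΨ0]; linarith
      · linarith
    obtain ⟨s, hs, hΨs⟩ := hsub h0mem
    refine ⟨s, ?_, hs.2, hΨs⟩
    rcases eq_or_lt_of_le hs.1 with rfl | h
    · rw [hΨ0] at hΨs; linarith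
    · exact h
  -- a point where Ψ is positive, below 1
  obtain ⟨r₀, hr₀mem, hr₀pos⟩ : ∃ r₀ : ℝ, ((1/2 : ℝ) < r₀ ∧ r₀ < 1) ∧
      0 < 2*lam*r₀^(q+m) - pp*(1-r₀^q) := by
    have hval : (0:ℝ) < 2*lam*(1:ℝ)^(q+m) - pp*(1-(1:ℝ)^q) := by simp; linarith
    have h1 : {r : ℝ | 0 < 2*lam*r^(q+m) - pp*(1-r^q)} ∈ nhds (1:ℝ) := by
      apply (isOpen_lt continuous_const (by fun_prop)).mem_nhds
      exact hval
    have h2 : Set.Ioi (1/2 : ℝ) ∈ nhds (1:ℝ) := Ioi_mem_nhds (by norm_num)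
    have h3 := Filter.inter_mem (Filter.inter_mem
      (mem_nhdsWithin_of_mem_nhds h1) (mem_nhdsWithin_of_mem_nhds h2))
      (self_mem_nhdsWithin (s := Set.Iio (1:ℝ)))
    obtain ⟨r₀, ⟨hA, hB⟩, hC⟩ := Filter.nonempty_of_mem h3
    exact ⟨r₀, ⟨hB, hC⟩, hA⟩
  have hr₀0 : (0:ℝ) < r₀ := by linarith [hr₀mem.1]
  have hden : (0:ℝ) < 1 - r₀^q := by
    have : r₀^q < 1 := pow_lt_one₀ hr₀0.le hr₀mem.2 hqne
    linarith
  have hΨr₀ : 0 < Ψ r₀ := by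
    rw [hΨ]
    have hmden : (0:ℝ) < 1 + r₀^m := by positivity
    have h4 : pp * ((1-r₀^m)/(1+r₀^m)) ≤ pp := by
      have : (1-r₀^m)/(1+r₀^m) ≤ 1 := by
        rw [div_le_one hmden]
        nlinarith [pow_nonneg hr₀0.le m]
      nlinarith
    have h5 : 2*lam*(r₀^(q+m)/(1-r₀^q)) - pp = (2*lam*r₀^(q+m) - pp*(1-r₀^q))/(1-r₀^q) := by
      field_simp
    have h6 : 0 < 2*lam*(r₀^(q+m)/(1-r₀^q)) - pp := by
      rw [h5]
      exact div_pos hr₀pos hden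
    linarith
  obtain ⟨s, hs0, hs1, hsroot⟩ := hrootbelow r₀ hr₀0.le hr₀mem.2 hΨr₀
  have hRlt1 : R < 1 := lt_of_le_of_lt (hmin s hs0 (by linarith [hr₀mem.2]) hsroot)
    (lt_of_le_of_lt hs1 hr₀mem.2)
  refine ⟨hRlt1, ?_⟩
  intro r hr0 hrR
  by_contra hcon
  push_neg at hcon
  obtain ⟨s', hs'0, hs'1, hs'root⟩ := hrootbelow r hr0 (lt_of_le_of_lt hrR hRlt1) hcon
  have : R ≤ s' := hmin s' hs'0 (by linarith [lt_of_le_of_lt (hs'1.trans hrR) hRlt1]) hs'root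
  have : s' = r := le_antisymm hs'1 (le_trans hrR this)
  rw [this] at hs'root
  linarith

lemma diffOn_of_hasSum {g : ℂ → ℂ} {a : ℕ → ℂ}
    (hg : ∀ z ∈ ball (0:ℂ) 1, HasSum (fun n => a n * z ^ n) (g z)) :
    DifferentiableOn ℂ g (ball 0 1) := by
  have h := (hasFPS_of_hasSum hg).differentiableOn
  exact h.mono fun x hx => by
    rw [← ENNReal.ofReal_one, Metric.emetric_ball]; exact hx


set_option maxHeartbeats 1000000 in

/-- Theorem 6 of the paper, positive part.
Let `Ψ₅(r) = 2λ r^{q+m}/(1−r^q) − p(1−r^m)/(1+r^m)` and let `R` be its minimal positive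
root in `[0,1]`. Then for `f ∈ ℬ`, `ω ∈ ℬ_m` and `|z| = r ≤ R`:
`|f(ω(z))|^p + λ Σ_{k≥1} |a_{qk+m}| r^{qk+m} ≤ 1`. -/
theorem stmt_10
    (p : ℝ) (hp0 : 0 < p) (hp2 : p ≤ 2)
    (m q : ℕ) (hq : 2 ≤ q) (hm : 0 < m) (hmq : m < q)
    (lam : ℝ) (hlam : 0 < lam)
    -- Ψ₅ and its minimal positive root R in [0,1]
    (Ψ : ℝ → ℝ)
    (hΨ : ∀ r : ℝ, Ψ r = 2 * lam * (r ^ (q + m) / (1 - r ^ q))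
            - p * ((1 - r ^ m) / (1 + r ^ m)))
    (R : ℝ) (hRpos : 0 < R) (hR1 : R ≤ 1) (hroot : Ψ R = 0)
    (hmin : ∀ r : ℝ, 0 < r → r ≤ 1 → Ψ r = 0 → R ≤ r)
    -- f ∈ ℬ with Taylor coefficients a
    (f : ℂ → ℂ) (a : ℕ → ℂ)
    (hf : ∀ z ∈ Metric.ball (0:ℂ) 1, HasSum (fun n => a n * z ^ n) (f z))
    (hfb : ∀ z ∈ Metric.ball (0:ℂ) 1, ‖f z‖ ≤ 1)
    -- ω ∈ ℬ_m
    (ω : ℂ → ℂ)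
    (hωd : DifferentiableOn ℂ ω (Metric.ball (0:ℂ) 1))
    (hωb : ∀ z ∈ Metric.ball (0:ℂ) 1, ‖ω z‖ ≤ 1)
    (hω0 : ∀ k < m, iteratedDeriv k ω 0 = 0)
    (hωm : iteratedDeriv m ω 0 ≠ 0) :
    ∀ (z : ℂ) (r : ℝ), z ∈ Metric.ball (0:ℂ) 1 → ‖z‖ = r → r ≤ R →
      ‖f (ω z)‖ ^ p
        + lam * ∑' k : ℕ, ‖a (q * (k + 1) + m)‖ * r ^ (q * (k + 1) + m)
      ≤ 1 := by
  intro z r hz hzr hrR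
  obtain ⟨hRlt1, hpsineg⟩ := psi_facts p hp0 m q hq hm lam hlam Ψ hΨ R hRpos hR1 hroot hmin
  subst hzr
  set r := ‖z‖ with hrdef
  have hr0 : 0 ≤ r := norm_nonneg z
  have hr1 : r < 1 := by have := mem_ball_zero_iff.mp hz; exact this
  set u := r ^ m with hudef
  have hu0 : 0 ≤ u := pow_nonneg hr0 m
  have hu1 : u < 1 := pow_lt_one₀ hr0 hr1 hm.ne'
  -- ω bound
  set w := ω z with hwdef
  have hwb : ‖w‖ ≤ u := omega_pow_bound hωd hωb hω0 z hz
  have hwball : w ∈ ball (0:ℂ) 1 := by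
    rw [mem_ball_zero_iff]
    exact lt_of_le_of_lt hwb hu1
  -- f basics
  have hfd : DifferentiableOn ℂ f (ball 0 1) := diffOn_of_hasSum hf
  have hf0 : f 0 = a 0 := by
    have h1 : HasSum (fun n => a n * (0:ℂ) ^ n) (a 0 * (0:ℂ)^0) := by
      apply hasSum_single
      intro k hk
      simp [zero_pow hk]
    have h2 := hf 0 (mem_ball_self one_pos)
    simpa using (h2.unique h1)
  set b := ‖a 0‖ with hbdef
  have hb0 : 0 ≤ b := norm_nonneg _
  have hb1 : b ≤ 1 := by
    rw [hbdef, ← hf0]; exact hfb 0 (mem_ball_self one_pos)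
  have hb2 : 0 ≤ 1 - b^2 := by nlinarith
  -- Schwarz–Pick bound on |f(w)|
  set x := ‖f w‖ with hxdef
  have hx0 : 0 ≤ x := norm_nonneg _
  have hsp : x * (1 + b * ‖w‖) ≤ b + ‖w‖ := by
    have := schwarz_pick hfd hfb w hwball
    rwa [hf0] at this
  set t := ‖w‖ with htdef
  have ht0 : 0 ≤ t := norm_nonneg _
  set y := (b + u) / (1 + b * u) with hydef
  have hbu : (0:ℝ) < 1 + b * u := by nlinarith
  have hbt : (0:ℝ) < 1 + b * t := by nlinarith
  have hy0 : 0 ≤ y := by rw [hydef]; positivity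
  have hy1 : y ≤ 1 := by
    rw [hydef, div_le_one hbu]; nlinarith
  have hxy : x ≤ y := by
    have h1 : x ≤ (b + t) / (1 + b * t) := by
      rw [le_div_iff₀ hbt]; exact hsp
    have h2 : (b + t) / (1 + b * t) ≤ (b + u) / (1 + b * u) := by
      rw [div_le_div_iff₀ hbt hbu]; nlinarith
    exact h1.trans (h2.trans_eq rfl)
  clear_value r u w x t y
  -- power bound
  have hxp : x ^ p ≤ 1 - p/2 * ((1 - b^2) * (1 - u) / (1 + u)) := by
    have hA : x ^ p ≤ y ^ p := Real.rpow_le_rpow hx0 hxy hp0.le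
    have hB : y ^ p ≤ 1 - p/2 * (1 - y^2) := rpow_bound hy0 hy1 hp0 hp2
    have hy2 : 1 - y^2 = (1 - b^2) * (1 - u^2) / ((1 + b*u)^2) := by
      rw [hydef]; field_simp; ring
    have hC : (1 - b^2) * (1 - u) / (1 + u) ≤ 1 - y^2 := by
      rw [hy2, div_le_div_iff₀ (by linarith) (by positivity)]
      nlinarith [mul_nonneg (mul_nonneg hb2 (by linarith : (0:ℝ) ≤ 1 - u))
        (mul_nonneg (mul_nonneg hu0 (by linarith : (0:ℝ) ≤ 1 - b))
          (by nlinarith : (0:ℝ) ≤ 2 + u + b*u))]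
    have hD : p/2 * ((1 - b^2) * (1 - u) / (1 + u)) ≤ p/2 * (1 - y^2) :=
      mul_le_mul_of_nonneg_left hC (by linarith)
    linarith
  -- sum bound
  have hrq0 : 0 ≤ r ^ q := pow_nonneg hr0 q
  have hrq1 : r ^ q < 1 := pow_lt_one₀ hr0 hr1 (by omega)
  have hgeo : Summable (fun k : ℕ => (1 - b^2) * r^(q+m) * (r^q)^k) :=
    (summable_geometric_of_lt_one hrq0 hrq1).mul_left _
  have hexp : ∀ k : ℕ, r ^ (q * (k+1) + m) = r^(q+m) * (r^q)^k := by
    intro k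
    rw [← pow_mul, ← pow_add]
    congr 1
    ring
  have hterm : ∀ k : ℕ, ‖a (q * (k + 1) + m)‖ * r ^ (q * (k + 1) + m)
      ≤ (1 - b^2) * r^(q+m) * (r^q)^k := by
    intro k
    rw [hexp k, ← mul_assoc]
    apply mul_le_mul_of_nonneg_right _ (pow_nonneg hrq0 k)
    apply mul_le_mul_of_nonneg_right _ (pow_nonneg hr0 (q+m))
    exact schur_coeff hf hfb (by positivity)
  have hsummable : Summable (fun k : ℕ => ‖a (q * (k + 1) + m)‖ * r ^ (q * (k + 1) + m)) :=
    Summable.of_nonneg_of_le (fun k => by positivity) hterm hgeo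
  have hT : (∑' k : ℕ, ‖a (q * (k + 1) + m)‖ * r ^ (q * (k + 1) + m))
      ≤ (1 - b^2) * r^(q+m) * (1 - r^q)⁻¹ := by
    calc (∑' k : ℕ, ‖a (q * (k + 1) + m)‖ * r ^ (q * (k + 1) + m))
        ≤ ∑' k : ℕ, (1 - b^2) * r^(q+m) * (r^q)^k := Summable.tsum_le_tsum hterm hsummable hgeo
    _ = (1 - b^2) * r^(q+m) * (1 - r^q)⁻¹ := by
        rw [tsum_mul_left, tsum_geometric_of_lt_one hrq0 hrq1]
  -- Ψ inequality
  have hq1 : 2*lam*(r^(q+m)/(1-r^q)) ≤ p*((1-u)/(1+u)) := by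
    have hh := hpsineg r hr0 hrR
    rw [hΨ r] at hh
    rw [hudef]
    linarith
  have key : lam * ((1 - b^2) * r^(q+m) * (1 - r^q)⁻¹)
      ≤ p/2 * ((1 - b^2) * (1 - u) / (1 + u)) := by
    have hhalf : (0:ℝ) ≤ (1 - b^2)/2 := by linarith
    have h := mul_le_mul_of_nonneg_left hq1 hhalf
    calc lam * ((1 - b^2) * r^(q+m) * (1 - r^q)⁻¹)
        = (1 - b^2)/2 * (2*lam*(r^(q+m)/(1-r^q))) := by ring
    _ ≤ (1 - b^2)/2 * (p*((1-u)/(1+u))) := h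
    _ = p/2 * ((1 - b^2) * (1 - u) / (1 + u)) := by ring
  have hlT : lam * (∑' k : ℕ, ‖a (q * (k + 1) + m)‖ * r ^ (q * (k + 1) + m))
      ≤ p/2 * ((1 - b^2) * (1 - u) / (1 + u)) :=
    (mul_le_mul_of_nonneg_left hT hlam.le).trans key
  linarith
end

section
/- Let p ∈ (0,2], m, q ∈ ℕ with q ≥ 2 and 0 < m < q, and λ ∈ (0,∞). Define Ψ₅(r) = 2λ·r^{q+m}/(1−r^q) − p(1−r^m)/(1+r^m) and let R be the minimal positive root of Ψ₅(r) = 0 in [0,1]. Suppose Ψ₅(r) > 0 on some interval (R, R+ε), ε > 0. Then for every r ∈ (R, R+ε) there exist f ∈ ℬ (with coefficients a_n), ω ∈ ℬ_m, and z ∈ 𝔻 with |z| = r such that |f(ω(z))|^p + λ·Σ_{k=1}^∞ |a_{qk+m}|·r^{qk+m} > 1; in fact one may take ω(z) = z^m and f(z) = (z+a)/(1+az) with a ∈ [0,1) sufficiently close to 1. -/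
set_option maxHeartbeats 1000000

open Real Filter

/-- Key elementary inequality: `1 - x^p ≤ p (1-x)/x` for `x ∈ (0,1]`, `p > 0`. -/
lemma aux_rpow {x p : ℝ} (hx : 0 < x) (hp : 0 < p) :
    1 - x ^ p ≤ p * (1 - x) / x := by
  have hxp : 0 < x ^ p := Real.rpow_pos_of_pos hx p
  have h1 : Real.log (x ^ p) ≤ x ^ p - 1 := Real.log_le_sub_one_of_pos hxp
  have h2 : Real.log x⁻¹ ≤ x⁻¹ - 1 := Real.log_le_sub_one_of_pos (by positivity)
  have h3 : Real.log (x ^ p) = p * Real.log x := Real.log_rpow hx p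
  rw [Real.log_inv] at h2
  have h4 : -Real.log x ≤ (1 - x) / x := by
    have : x⁻¹ - 1 = (1 - x) / x := by field_simp
    linarith
  calc 1 - x ^ p ≤ p * (-Real.log x) := by linarith
    _ ≤ p * ((1 - x) / x) := mul_le_mul_of_nonneg_left h4 hp.le
    _ = p * (1 - x) / x := by ring

/-- Iterated derivative of a monomial. -/
lemma aux_iteratedDeriv_pow (n : ℕ) : ∀ k : ℕ, iteratedDeriv k (fun z : ℂ => z ^ n)
    = fun z => (n.descFactorial k : ℂ) * z ^ (n - k) := by
  intro k
  induction k with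
  | zero => simp
  | succ k ih =>
    rw [iteratedDeriv_succ, ih]
    funext z
    rcases le_or_gt n k with h | h
    · have h1 : n - k = 0 := Nat.sub_eq_zero_of_le h
      have h2 : n.descFactorial (k+1) = 0 :=
        Nat.descFactorial_eq_zero_iff_lt.2 (Nat.lt_succ_of_le h)
      simp [h1, h2]
    · have hd : (deriv fun z : ℂ => (n.descFactorial k : ℂ) * z ^ (n - k)) z
          = (n.descFactorial k : ℂ) * ((n - k : ℕ) * z ^ (n - k - 1)) := by
        rw [deriv_const_mul _ (differentiable_pow _ |>.differentiableAt)]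
        simp [deriv_pow]
      rw [hd, Nat.descFactorial_succ]
      have he : n - (k+1) = n - k - 1 := by omega
      rw [he]
      push_cast
      ring

/-- Möbius maps are self-maps of the disk. -/
lemma aux_mobius {t : ℝ} (ht0 : 0 ≤ t) (ht1 : t < 1) {w : ℂ} (hw : ‖w‖ < 1) :
    ‖(w + (t:ℂ)) / (1 + (t:ℂ) * w)‖ ≤ 1 := by
  have hnsq : Complex.normSq w < 1 := by
    rw [← Complex.sq_norm]; nlinarith [norm_nonneg w]
  have hden0 : ‖1 + (t:ℂ) * w‖ ≠ 0 := by
    intro h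
    have h1 : (1 : ℂ) + (t:ℂ) * w = 0 := by
      simpa using norm_eq_zero.mp h
    have h2 : ‖(t:ℂ) * w‖ = 1 := by
      have : (t:ℂ) * w = -1 := by linear_combination h1
      rw [this]; simp
    have : t * ‖w‖ < 1 := by
      nlinarith [norm_nonneg w]
    rw [norm_mul, Complex.norm_real, Real.norm_eq_abs, abs_of_nonneg ht0] at h2
    linarith
  have hden : 0 < ‖1 + (t:ℂ) * w‖ :=
    lt_of_le_of_ne (norm_nonneg _) (Ne.symm hden0)
  rw [norm_div, div_le_one hden]
  have hsq : ‖w + (t:ℂ)‖ ^ 2 ≤ ‖1 + (t:ℂ) * w‖ ^ 2 := by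
    rw [Complex.sq_norm, Complex.sq_norm]
    simp only [Complex.normSq_apply, Complex.add_re, Complex.add_im, Complex.mul_re,
      Complex.mul_im, Complex.one_re, Complex.one_im, Complex.ofReal_re, Complex.ofReal_im]
    have hw2 : w.re * w.re + w.im * w.im < 1 := by
      simpa [Complex.normSq_apply] using hnsq
    nlinarith [mul_nonneg (by nlinarith : (0:ℝ) ≤ 1 - t^2)
      (by nlinarith : (0:ℝ) ≤ 1 - (w.re * w.re + w.im * w.im))]
  nlinarith [norm_nonneg (w + (t:ℂ)), norm_nonneg (1 + (t:ℂ) * w)]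

/-- Theorem 6 of the paper, sharpness part.
Let `Ψ₅(r) = 2λ r^{q+m}/(1−r^q) − p(1−r^m)/(1+r^m)` and let `R` be its minimal positive
root in `[0,1]`. If `Ψ₅ > 0` on some interval `(R, R+ε)`, then for every `r` in that
interval there exist `f ∈ ℬ`, `ω ∈ ℬ_m` and `z` with `|z| = r` such that
`|f(ω(z))|^p + λ Σ_{k≥1} |a_{qk+m}| r^{qk+m} > 1`. -/
theorem stmt_11
    (p : ℝ) (hp0 : 0 < p) (hp2 : p ≤ 2)
    (m q : ℕ) (hq : 2 ≤ q) (hm : 0 < m) (hmq : m < q)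
    (lam : ℝ) (hlam : 0 < lam)
    -- Ψ₅ and its minimal positive root R in [0,1]
    (Ψ : ℝ → ℝ)
    (hΨ : ∀ r : ℝ, Ψ r = 2 * lam * (r ^ (q + m) / (1 - r ^ q))
            - p * ((1 - r ^ m) / (1 + r ^ m)))
    (R : ℝ) (hRpos : 0 < R) (hR1 : R ≤ 1) (hroot : Ψ R = 0)
    (hmin : ∀ r : ℝ, 0 < r → r ≤ 1 → Ψ r = 0 → R ≤ r)
    -- Ψ₅ > 0 on the interval (R, R + ε) ⊆ (R, 1)
    (ε : ℝ) (hε : 0 < ε) (hRε : R + ε ≤ 1)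
    (hΨpos : ∀ r : ℝ, R < r → r < R + ε → 0 < Ψ r) :
    ∀ r : ℝ, R < r → r < R + ε →
      ∃ (f : ℂ → ℂ) (a : ℕ → ℂ) (ω : ℂ → ℂ) (z : ℂ),
        (∀ w ∈ Metric.ball (0:ℂ) 1, HasSum (fun n => a n * w ^ n) (f w)) ∧
        (∀ w ∈ Metric.ball (0:ℂ) 1, ‖f w‖ ≤ 1) ∧
        DifferentiableOn ℂ ω (Metric.ball (0:ℂ) 1) ∧
        (∀ w ∈ Metric.ball (0:ℂ) 1, ‖ω w‖ ≤ 1) ∧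
        (∀ k < m, iteratedDeriv k ω 0 = 0) ∧
        iteratedDeriv m ω 0 ≠ 0 ∧
        z ∈ Metric.ball (0:ℂ) 1 ∧ ‖z‖ = r ∧
        1 < ‖f (ω z)‖ ^ p
          + lam * ∑' k : ℕ, ‖a (q * (k + 1) + m)‖ * r ^ (q * (k + 1) + m) := by
  intro r hr1 hr2
  have hr0 : 0 < r := hRpos.trans hr1
  have hrlt1 : r < 1 := lt_of_lt_of_le hr2 hRε
  set c : ℝ := r ^ m with hc
  have hc0 : 0 < c := pow_pos hr0 m
  have hc1 : c < 1 := pow_lt_one₀ hr0.le hrlt1 hm.ne'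
  have hrq1 : r ^ q < 1 := pow_lt_one₀ hr0.le hrlt1 (by omega)
  -- the auxiliary function of t
  set G : ℝ → ℝ := fun t =>
    lam * (1 + t) * t ^ (q + m - 1) * r ^ (q + m) / (1 - (t * r) ^ q)
      - p * ((1 - c) / (c + t)) with hGdef
  have hG1 : G 1 = Ψ r := by
    rw [hΨ r, hGdef]
    simp only [one_mul, one_pow, mul_one]
    rw [hc]
    ring
  have hG1pos : 0 < G 1 := hG1 ▸ hΨpos r hr1 hr2
  have hGc : ContinuousAt G 1 := by
    apply ContinuousAt.sub
    · apply ContinuousAt.div (by fun_prop) (by fun_prop)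
      simp only [one_mul]
      intro h
      rw [sub_eq_zero] at h
      exact absurd h.symm (ne_of_lt hrq1)
    · apply ContinuousAt.mul continuousAt_const
      apply ContinuousAt.div (by fun_prop) (by fun_prop)
      positivity
  -- choose t ∈ (0,1) with G t > 0
  have hev : ∀ᶠ t in nhdsWithin (1:ℝ) (Set.Iio 1), 0 < G t ∧ 0 < t ∧ t < 1 := by
    have e1 : ∀ᶠ t in nhds (1:ℝ), 0 < G t :=
      hGc.eventually_const_lt hG1pos
    have e2 : ∀ᶠ t in nhds (1:ℝ), 0 < t := eventually_gt_nhds (by norm_num)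
    have e3 : ∀ᶠ t in nhdsWithin (1:ℝ) (Set.Iio 1), t < 1 :=
      eventually_mem_nhdsWithin
    filter_upwards [(e1.and e2).filter_mono nhdsWithin_le_nhds, e3] with t h1 h2
    exact ⟨h1.1, h1.2, h2⟩
  obtain ⟨t, htG, ht0, ht1⟩ := hev.exists
  -- definitions
  refine ⟨fun w => (w + (t:ℂ)) / (1 + (t:ℂ) * w),
    fun n => if n = 0 then (t : ℂ) else ((1 - t^2 : ℝ) : ℂ) * ((-t : ℝ) : ℂ) ^ (n - 1),
    fun w => w ^ m, (r : ℂ), ?_, ?_, ?_, ?_, ?_, ?_, ?_, ?_, ?_⟩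
  · -- power series
    intro w hw
    rw [Metric.mem_ball, dist_zero_right] at hw
    have hw' : ‖w‖ < 1 := hw
    have htw : ‖-((t:ℂ) * w)‖ < 1 := by
      rw [norm_neg]
      simp only [norm_mul, Complex.norm_real, Real.norm_eq_abs, abs_of_nonneg ht0.le]
      nlinarith [norm_nonneg w]
    have hden0 : (1 : ℂ) + (t:ℂ) * w ≠ 0 := by
      intro h
      have : ‖-((t:ℂ) * w)‖ = 1 := by
        have : -((t:ℂ) * w) = 1 := by linear_combination -h
        rw [this]; simp
      linarith
    have hgeo := hasSum_geometric_of_norm_lt_one htw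
    have hmul := hgeo.mul_left (((1 - t^2 : ℝ) : ℂ) * w)
    have hfun : (fun n : ℕ => (if n + 1 = 0 then (t : ℂ) else
        ((1 - t^2 : ℝ) : ℂ) * ((-t : ℝ) : ℂ) ^ (n + 1 - 1)) * w ^ (n + 1))
        = fun n : ℕ => (((1 - t^2 : ℝ) : ℂ) * w) * (-((t:ℂ) * w)) ^ n := by
      funext n
      simp only [Nat.succ_ne_zero, if_false, Nat.add_sub_cancel]
      rw [show -((t:ℂ) * w) = ((-t : ℝ) : ℂ) * w by push_cast; ring, mul_pow, pow_succ]
      ring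
    have hsum : HasSum
        (fun n : ℕ => (if n + 1 = 0 then (t : ℂ) else
          ((1 - t^2 : ℝ) : ℂ) * ((-t : ℝ) : ℂ) ^ (n + 1 - 1)) * w ^ (n + 1))
        (((1 - t^2 : ℝ) : ℂ) * w * (1 - -((t:ℂ) * w))⁻¹) := by
      rw [hfun]; exact hmul
    have := (hasSum_nat_add_iff (f := fun n : ℕ => (if n = 0 then (t : ℂ) else
      ((1 - t^2 : ℝ) : ℂ) * ((-t : ℝ) : ℂ) ^ (n - 1)) * w ^ n) 1).mp hsum
    simp only [Finset.range_one, Finset.sum_singleton, if_pos rfl, pow_zero, mul_one] at this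
    convert this using 1
    · rfl
    rw [sub_neg_eq_add]
    field_simp
    push_cast
    have hden1 : (1:ℂ) + w * (t:ℂ) ≠ 0 := by rw [mul_comm]; exact hden0
    field_simp
    ring
  · -- |f| ≤ 1
    intro w hw
    rw [Metric.mem_ball, dist_zero_right] at hw
    exact aux_mobius ht0.le ht1 hw
  · exact (differentiable_pow m).differentiableOn
  · intro w hw
    rw [Metric.mem_ball, dist_zero_right] at hw
    rw [norm_pow]
    exact pow_le_one₀ (norm_nonneg w) hw.le
  · intro k hk
    rw [aux_iteratedDeriv_pow m k]
    have : m - k ≠ 0 := by omega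
    simp [zero_pow this]
  · rw [aux_iteratedDeriv_pow m m]
    simp [Nat.descFactorial_self, Nat.factorial_ne_zero]
  · rw [Metric.mem_ball, dist_zero_right]
    simpa [Complex.norm_real, abs_of_nonneg hr0.le] using hrlt1
  · simp [abs_of_nonneg hr0.le]
  · -- the main inequality
    have htr1 : t * r < 1 := by nlinarith
    set s : ℝ := (t * r) ^ q with hs
    have hs0 : 0 ≤ s := by positivity
    have hs1 : s < 1 := pow_lt_one₀ (by positivity) htr1 (by omega)
    set x : ℝ := (c + t) / (1 + t * c) with hx
    have hden : 0 < 1 + t * c := by nlinarith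
    have hx0 : 0 < x := by positivity
    -- value of f (ω z)
    have hωz : ((r : ℂ)) ^ m = ((c : ℝ) : ℂ) := by rw [hc]; push_cast; ring
    have hfval : ((((r:ℂ)) ^ m + (t:ℂ)) / (1 + (t:ℂ) * ((r:ℂ)) ^ m)) = ((x : ℝ) : ℂ) := by
      rw [hωz, hx]
      push_cast
      ring
    have habs : ‖(((r:ℂ)) ^ m + (t:ℂ)) / (1 + (t:ℂ) * ((r:ℂ)) ^ m)‖ = x := by
      rw [hfval, Complex.norm_real, Real.norm_eq_abs, abs_of_nonneg hx0.le]
    -- the series value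
    set C : ℝ := (1 - t^2) * t ^ (q + m - 1) * r ^ (q + m) with hC
    have hterm : ∀ k : ℕ,
        ‖(if q * (k + 1) + m = 0 then (t : ℂ) else
          ((1 - t^2 : ℝ) : ℂ) * ((-t : ℝ) : ℂ) ^ (q * (k + 1) + m - 1))‖
          * r ^ (q * (k + 1) + m) = C * s ^ k := by
      intro k
      have hne : q * (k + 1) + m ≠ 0 := by positivity
      rw [if_neg hne, norm_mul, norm_pow, Complex.norm_real, Real.norm_eq_abs, Complex.norm_real,
        Real.norm_eq_abs,
        abs_of_nonneg (by nlinarith : (0:ℝ) ≤ 1 - t^2), abs_neg, abs_of_nonneg ht0.le]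
      have he1 : q * (k + 1) + m - 1 = q * k + (q + m - 1) := by
        rw [Nat.mul_succ]; omega
      have he2 : q * (k + 1) + m = q * k + (q + m) := by
        rw [Nat.mul_succ]; omega
      rw [he1, he2, hC, hs, pow_add, pow_add, pow_mul, pow_mul, mul_pow]
      ring
    have hgeoS : HasSum (fun k : ℕ => C * s ^ k) (C * (1 - s)⁻¹) :=
      (hasSum_geometric_of_lt_one hs0 hs1).mul_left C
    have htsum : (∑' k : ℕ,
        ‖(if q * (k + 1) + m = 0 then (t : ℂ) else
          ((1 - t^2 : ℝ) : ℂ) * ((-t : ℝ) : ℂ) ^ (q * (k + 1) + m - 1))‖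
          * r ^ (q * (k + 1) + m)) = C * (1 - s)⁻¹ := by
      rw [tsum_congr hterm]
      exact hgeoS.tsum_eq
    rw [habs, htsum]
    -- now pure real arithmetic
    have hkey : p * ((1 - c) / (c + t)) <
        lam * (1 + t) * t ^ (q + m - 1) * r ^ (q + m) / (1 - s) := by
      have := htG
      rw [hGdef] at this
      simp only [← hs] at this
      linarith
    have hx1 : x ≤ 1 := by
      rw [hx, div_le_one hden]
      nlinarith
    have haux := aux_rpow hx0 hp0
    have hct : 0 < c + t := by positivity
    have hfrac : p * (1 - x) / x = (1 - t) * (p * ((1 - c) / (c + t))) := by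
      rw [hx]
      field_simp
      ring
    have hCval : lam * (C * (1 - s)⁻¹)
        = (1 - t) * (lam * (1 + t) * t ^ (q + m - 1) * r ^ (q + m) / (1 - s)) := by
      rw [hC]
      field_simp
      ring
    have hmul2 : (1 - t) * (p * ((1 - c) / (c + t)))
        < (1 - t) * (lam * (1 + t) * t ^ (q + m - 1) * r ^ (q + m) / (1 - s)) := by
      apply mul_lt_mul_of_pos_left hkey
      linarith
    rw [← hfrac, ← hCval] at hmul2
    linarith
end

section
/- Let m ∈ ℕ and p ∈ (0,2]. Let φ₀, N : [0,1) → ℝ be nonnegative continuous functions, and for r ∈ [0,1) and a ∈ [0,1] set D_{p,m}(a) = [((a + r^m)/(1 + a r^m))^p − 1]·φ₀(r) + (1 − a²)·N(r). Set Ψ_{p,m}(r) = p·((1 − r^m)/(1 + r^m))·φ₀(r) − 2N(r), and let R be the minimal root of Ψ_{p,m}(r) = 0 in (0,1). If Ψ_{p,m}(r) ≥ 0 for all r ∈ [0,R], then D_{p,m}(a) ≤ 0 for every a ∈ [0,1] and every r ∈ [0,R]. -/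
set_option maxHeartbeats 1000000 in
/-- Lemma 3 of the paper.
For nonnegative continuous `φ₀, N` on `[0,1)`, set
`D_{p,m}(a) = [((a+r^m)/(1+ar^m))^p − 1]·φ₀(r) + (1−a²)·N(r)` and
`Ψ_{p,m}(r) = p((1−r^m)/(1+r^m))φ₀(r) − 2N(r)`, with `R` the minimal root of
`Ψ_{p,m} = 0` in `(0,1)`. If `Ψ_{p,m} ≥ 0` on `[0,R]` then `D_{p,m}(a) ≤ 0`
for all `a ∈ [0,1]` and `r ∈ [0,R]`. -/
theorem stmt_12
    (m : ℕ) (hm : 1 ≤ m) (p : ℝ) (hp0 : 0 < p) (hp2 : p ≤ 2)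
    (φ₀ N : ℝ → ℝ)
    (hφ₀c : ContinuousOn φ₀ (Set.Ico (0:ℝ) 1))
    (hφ₀nn : ∀ r ∈ Set.Ico (0:ℝ) 1, 0 ≤ φ₀ r)
    (hNc : ContinuousOn N (Set.Ico (0:ℝ) 1))
    (hNnn : ∀ r ∈ Set.Ico (0:ℝ) 1, 0 ≤ N r)
    (Ψ : ℝ → ℝ)
    (hΨ : ∀ r : ℝ, Ψ r = p * ((1 - r ^ m) / (1 + r ^ m)) * φ₀ r - 2 * N r)
    (R : ℝ) (hR : R ∈ Set.Ioo (0:ℝ) 1) (hroot : Ψ R = 0)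
    (hmin : ∀ r ∈ Set.Ioo (0:ℝ) 1, Ψ r = 0 → R ≤ r)
    (hΨnn : ∀ r ∈ Set.Icc (0:ℝ) R, 0 ≤ Ψ r) :
    ∀ a ∈ Set.Icc (0:ℝ) 1, ∀ r ∈ Set.Icc (0:ℝ) R,
      (((a + r ^ m) / (1 + a * r ^ m)) ^ p - 1) * φ₀ r + (1 - a ^ 2) * N r ≤ 0 := by
  rintro a ⟨ha0, ha1⟩ r ⟨hr0, hrR⟩
  have hr1 : r < 1 := lt_of_le_of_lt hrR hR.2
  have hrI : r ∈ Set.Ico (0:ℝ) 1 := ⟨hr0, hr1⟩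
  set t : ℝ := r ^ m with ht
  have ht0 : 0 ≤ t := pow_nonneg hr0 m
  have ht1 : t < 1 := pow_lt_one₀ hr0 hr1 (by omega)
  have hden : (0:ℝ) < 1 + a * t := by positivity
  have hdent : (0:ℝ) < 1 + t := by positivity
  clear_value t
  set x : ℝ := (a + t) / (1 + a * t) with hx
  clear_value x
  have hx0 : 0 ≤ x := by
    rw [hx]; exact div_nonneg (by linarith) hden.le
  have hx1 : x ≤ 1 := by
    rw [hx, div_le_one hden]; nlinarith
  -- Bernoulli: x^p = (1 + (x^2 - 1))^(p/2) ≤ 1 + (p/2)*(x^2-1)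
  have hbern : x ^ p ≤ 1 + (p/2) * (x^2 - 1) := by
    have h1 : x ^ p = (1 + (x^2 - 1)) ^ (p/2) := by
      rw [show (1:ℝ) + (x^2-1) = x^2 by ring, ← Real.rpow_natCast x 2,
        ← Real.rpow_mul hx0]
      congr 1; ring
    rw [h1]
    have := rpow_one_add_le_one_add_mul_self (s := x^2 - 1)
      (by nlinarith) (p := p/2) (by linarith) (by linarith)
    linarith
  -- 2 N r ≤ p ((1-t)/(1+t)) φ₀ r
  have hΨr := hΨnn r ⟨hr0, hrR⟩
  rw [hΨ r, ← ht] at hΨr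
  have hkey : 2 * N r ≤ p * ((1 - t) / (1 + t)) * φ₀ r := by linarith
  have hφ : 0 ≤ φ₀ r := hφ₀nn r hrI
  have hN : 0 ≤ N r := hNnn r hrI
  have ha2 : 0 ≤ 1 - a ^ 2 := by nlinarith
  -- (1-a²)(1-t)/(1+t) ≤ 1 - x²
  have hx2 : (1 - a^2) * ((1 - t) / (1 + t)) ≤ 1 - x^2 := by
    have h1x2 : 1 - x^2 = (1 - a^2) * (1 - t^2) / (1 + a*t)^2 := by
      rw [hx]
      field_simp
      ring
    rw [h1x2, ← mul_div_assoc, div_le_div_iff₀ hdent (by positivity)]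
    have h2 : (1 + a*t)^2 ≤ (1+t)^2 := by nlinarith
    have h3 : 0 ≤ (1 - a^2) * (1 - t) := by nlinarith
    nlinarith [mul_nonneg h3 (mul_nonneg ht0 (sub_nonneg.2 ha1))]
  -- combine
  have hNle : N r ≤ p/2 * ((1-t)/(1+t)) * φ₀ r := by linarith
  have hstep1 : (1 - a^2) * N r ≤ (1 - a^2) * (p/2 * ((1-t)/(1+t)) * φ₀ r) :=
    mul_le_mul_of_nonneg_left hNle ha2
  have hstep2 : (x ^ p - 1) * φ₀ r ≤ (p/2 * (x^2 - 1)) * φ₀ r :=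
    mul_le_mul_of_nonneg_right (by linarith) hφ
  have hstep3 : (1 - a^2) * ((1 - t) / (1 + t)) * φ₀ r ≤ (1 - x^2) * φ₀ r :=
    mul_le_mul_of_nonneg_right hx2 hφ
  have hp2' : (0:ℝ) ≤ p/2 := by linarith
  have hstep3' := mul_le_mul_of_nonneg_left hstep3 hp2'
  linarith [hstep1, hstep2, hstep3']
end

section
/- Let f(z) = Σ_{n=1}^∞ a_n z^n be a Schwarz function (analytic on 𝔻, |f(z)| ≤ 1, f(0) = 0). Let m ∈ ℕ and let ω : 𝔻 → ℂ be analytic with |ω(z)| ≤ 1 and ω(0) = ω'(0) = ⋯ = ω^{(m−1)}(0) = 0. Then for every z ∈ 𝔻 with |z| = r < 1, one has |f′(ω(z)) − a₁| ≤ (1 − |a₁|²)·r^m(2 − r^m)/(1 − r^m)², where f′ is the complex derivative of f. -/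
open Metric Complex Set

noncomputable section
local notation "conj'" => (starRingEnd ℂ)

lemma normSq_identity (c u : ℂ) :
    Complex.normSq (1 - conj' c * u) - Complex.normSq (u - c)
      = (1 - Complex.normSq c) * (1 - Complex.normSq u) := by
  simp [Complex.normSq_apply, Complex.sub_re, Complex.sub_im, Complex.mul_re, Complex.mul_im]
  ring

lemma moeb_ne {c u : ℂ} (hc : ‖c‖ < 1) (hu : ‖u‖ ≤ 1) :
    1 - conj' c * u ≠ 0 := by
  intro h
  have h1 : conj' c * u = 1 := by linear_combination -h
  have := congrArg norm h1
  rw [norm_mul, Complex.norm_conj, norm_one] at this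
  nlinarith [norm_nonneg u, norm_nonneg c]

lemma moeb_abs_le {c u : ℂ} (hc : ‖c‖ < 1) (hu : ‖u‖ ≤ 1) :
    ‖(u - c) / (1 - conj' c * u)‖ ≤ 1 := by
  rw [norm_div, div_le_one (norm_pos_iff.mpr (moeb_ne hc hu))]
  rw [Complex.norm_def, Complex.norm_def]
  apply Real.sqrt_le_sqrt
  have key := normSq_identity c u
  have h1 : Complex.normSq c ≤ 1 := by rw [← Complex.sq_norm]; nlinarith [norm_nonneg c]
  have h2 : Complex.normSq u ≤ 1 := by rw [← Complex.sq_norm]; nlinarith [norm_nonneg u]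
  nlinarith

lemma moeb_abs_lt {c u : ℂ} (hc : ‖c‖ < 1) (hu : ‖u‖ < 1) :
    ‖(u - c) / (1 - conj' c * u)‖ < 1 := by
  rw [norm_div, div_lt_one (norm_pos_iff.mpr (moeb_ne hc hu.le))]
  rw [Complex.norm_def, Complex.norm_def]
  apply Real.sqrt_lt_sqrt (Complex.normSq_nonneg _)
  have key := normSq_identity c u
  have h1 : Complex.normSq c < 1 := by rw [← Complex.sq_norm]; nlinarith [norm_nonneg c]
  have h2 : Complex.normSq u < 1 := by rw [← Complex.sq_norm]; nlinarith [norm_nonneg u]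
  nlinarith

lemma moeb_diffAt {c u : ℂ} (h : 1 - conj' c * u ≠ 0) :
    DifferentiableAt ℂ (fun v => (v - c) / (1 - conj' c * v)) u := by
  apply DifferentiableAt.div
  · exact differentiableAt_id.sub_const c
  · exact (differentiableAt_const _).sub (differentiableAt_id.const_mul _)
  · exact h

/-- Schwarz core lemma via dslope -/
lemma schwarz_dslope {g : ℂ → ℂ} (hd : DifferentiableOn ℂ g (ball 0 1))
    (hb : ∀ z ∈ ball (0:ℂ) 1, ‖g z‖ ≤ 1) (h0 : g 0 = 0)
    {z : ℂ} (hz : z ∈ ball (0:ℂ) 1) : ‖dslope g 0 z‖ ≤ 1 := by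
  refine le_of_forall_pos_le_add fun ε hε => ?_
  have maps : Set.MapsTo g (ball 0 1) (ball (g 0) (1 + ε)) := by
    intro x hx
    rw [h0, mem_ball, dist_zero_right]
    exact lt_of_le_of_lt (hb x hx) (by linarith)
  have := Complex.norm_dslope_le_div_of_mapsTo_ball hd (maps.mono_right ball_subset_closedBall) hz
  rw [div_one] at this
  exact this

lemma schwarz_le {g : ℂ → ℂ} (hd : DifferentiableOn ℂ g (ball 0 1))
    (hb : ∀ z ∈ ball (0:ℂ) 1, ‖g z‖ ≤ 1) (h0 : g 0 = 0)
    {z : ℂ} (hz : z ∈ ball (0:ℂ) 1) : ‖g z‖ ≤ ‖z‖ := by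
  have hgz : g z = z * dslope g 0 z := by
    have := sub_smul_dslope g 0 z
    rw [sub_zero, h0, sub_zero, smul_eq_mul] at this
    exact this.symm
  rw [hgz, norm_mul]
  calc ‖z‖ * ‖dslope g 0 z‖ ≤ ‖z‖ * 1 :=
        mul_le_mul_of_nonneg_left (schwarz_dslope hd hb h0 hz) (norm_nonneg z)
    _ = ‖z‖ := mul_one _

lemma dslope_diffOn {g : ℂ → ℂ} (hd : DifferentiableOn ℂ g (ball 0 1)) :
    DifferentiableOn ℂ (dslope g 0) (ball 0 1) := by
  intro x hx
  rcases eq_or_ne x 0 with rfl | hne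
  · obtain ⟨p, hp⟩ := (hd.analyticOnNhd isOpen_ball) 0 (by simp)
    exact hp.has_fpower_series_dslope_fslope.analyticAt.differentiableAt.differentiableWithinAt
  · exact (differentiableWithinAt_dslope_of_ne hne).2 (hd x hx)

lemma iteratedDeriv_coeff {g : ℂ → ℂ} {p : FormalMultilinearSeries ℂ ℂ ℂ}
    (hp : HasFPowerSeriesAt g p 0) (k : ℕ) :
    iteratedDeriv k g 0 = k.factorial • p.coeff k := by
  obtain ⟨r, hr⟩ := hp
  have := hr.factorial_smul (1 : ℂ) k
  rw [iteratedDeriv_eq_iteratedFDeriv]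
  rw [← this]
  rfl


lemma pow_bound : ∀ (m : ℕ) (g : ℂ → ℂ), DifferentiableOn ℂ g (ball 0 1) →
    (∀ z ∈ ball (0:ℂ) 1, ‖g z‖ ≤ 1) →
    (∀ k < m, iteratedDeriv k g 0 = 0) →
    ∀ z ∈ ball (0:ℂ) 1, ‖g z‖ ≤ ‖z‖ ^ m := by
  intro m
  induction m with
  | zero => intro g _ hb _ z hz; simpa using hb z hz
  | succ m ih =>
    intro g hd hb h0 z hz
    obtain ⟨p, hp⟩ := (hd.analyticOnNhd isOpen_ball) 0 (by simp)
    have hg0 : g 0 = 0 := by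
      have := h0 0 (Nat.succ_pos m)
      rwa [iteratedDeriv_zero] at this
    have hcoeff : ∀ k < m + 1, p.coeff k = 0 := by
      intro k hk
      have h2 : (k.factorial : ℂ) * p.coeff k = 0 := by
        rw [← nsmul_eq_mul, ← iteratedDeriv_coeff hp k]
        exact h0 k hk
      have hfac : (k.factorial : ℂ) ≠ 0 := Nat.cast_ne_zero.2 k.factorial_ne_zero
      exact (mul_eq_zero.mp h2).resolve_left hfac
    set g₁ := dslope g 0 with hg₁
    have hd₁ : DifferentiableOn ℂ g₁ (ball 0 1) := dslope_diffOn hd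
    have hb₁ : ∀ z ∈ ball (0:ℂ) 1, ‖g₁ z‖ ≤ 1 :=
      fun z hz => schwarz_dslope hd hb hg0 hz
    have h0₁ : ∀ k < m, iteratedDeriv k g₁ 0 = 0 := by
      intro k hk
      have hp₁ : HasFPowerSeriesAt g₁ p.fslope 0 := hp.has_fpower_series_dslope_fslope
      rw [iteratedDeriv_coeff hp₁ k, FormalMultilinearSeries.coeff_fslope,
        hcoeff (k+1) (by omega), smul_zero]
    have hgz : g z = z * g₁ z := by
      have := sub_smul_dslope g 0 z
      rw [sub_zero, hg0, sub_zero, smul_eq_mul] at this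
      exact this.symm
    rw [hgz, norm_mul, pow_succ, mul_comm (‖z‖ ^ m)]
    exact mul_le_mul (le_refl _) (ih g₁ hd₁ hb₁ h0₁ z hz) (norm_nonneg _)
      (norm_nonneg _)


set_option maxHeartbeats 1000000 in

lemma arith (A b t s sp D : ℝ) (hA0 : 0 ≤ A) (hA1 : A ≤ 1) (hb0 : 0 ≤ b) (hb1 : b ≤ 1)
    (ht0 : 0 ≤ t) (hsp0 : 0 ≤ sp) (hsps : sp ≤ s) (hs1 : s < 1) (hD0 : 0 ≤ D)
    (H1 : t ≤ sp * ((1 - A^2) + A * t))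
    (H2 : D * (1 - sp^2) ≤ 1 - b^2)
    (H3 : A ≤ b + t) :
    t + sp * D ≤ (1 - A^2) * (s * (2 - s) / (1 - s)^2) := by
  have hs0 : 0 ≤ s := hsp0.trans hsps
  have hsp1 : sp < 1 := lt_of_le_of_lt hsps hs1
  have hA2 : (0:ℝ) ≤ 1 - A^2 := by nlinarith
  have X1 : t * (1 - s * A) ≤ s * (1 - A^2) := by
    nlinarith [mul_nonneg (sub_nonneg.2 hsps) (mul_nonneg hA0 ht0),
      mul_nonneg (sub_nonneg.2 hsps) hA2]
  have hb2 : A^2 ≤ b^2 + 2*A*t := by nlinarith [sq_nonneg (A - b)]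
  have e1 : sp * D * (1 - s^2) ≤ s * D * (1 - sp^2) := by nlinarith [mul_nonneg hD0 (mul_nonneg hs0 hsp0)]
  have e2 : s * D * (1 - sp^2) ≤ s * (1 - b^2) := by nlinarith
  have e4 : sp * D * (1 - s^2) ≤ s * (1 - A^2) + 2*A*s*t := by nlinarith
  have hsA : 0 < 1 - s * A := by nlinarith
  have e6 : sp * D * (1 - s^2) * (1 - s*A) ≤ s * (1 - A^2) * (1 + s*A) := by
    nlinarith [mul_le_mul_of_nonneg_right e4 hsA.le,
      mul_le_mul_of_nonneg_left X1 (mul_nonneg (mul_nonneg (by norm_num : (0:ℝ) ≤ 2) hA0) hs0)]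
  have e7 : (1 + s*A) * (1 - s)^2 ≤ (1 - s*A) * (1 - s^2) := by
    nlinarith [mul_nonneg (mul_nonneg hs0 (by linarith : (0:ℝ) ≤ 1 - s)) (by linarith : (0:ℝ) ≤ 1 - A)]
  have hc : 0 < (1 - s^2) * (1 - s*A) := by nlinarith
  have X2 : sp * D * (1 - s)^2 ≤ s * (1 - A^2) := by
    have h1 : sp * D * (1-s)^2 * ((1 - s^2) * (1 - s*A)) ≤ s * (1 - A^2) * ((1 - s^2) * (1 - s*A)) := by
      calc sp * D * (1-s)^2 * ((1 - s^2) * (1 - s*A))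
          = sp * D * (1 - s^2) * (1 - s*A) * (1-s)^2 := by ring
        _ ≤ s * (1 - A^2) * (1 + s*A) * (1-s)^2 :=
            mul_le_mul_of_nonneg_right e6 (sq_nonneg _)
        _ = s * (1 - A^2) * ((1 + s*A) * (1-s)^2) := by ring
        _ ≤ s * (1 - A^2) * ((1 - s*A) * (1 - s^2)) :=
            mul_le_mul_of_nonneg_left e7 (mul_nonneg hs0 hA2)
        _ = s * (1 - A^2) * ((1 - s^2) * (1 - s*A)) := by ring
    exact le_of_mul_le_mul_right h1 hc
  have hden : (0:ℝ) < (1 - s)^2 := pow_pos (by linarith) 2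
  have hrw : (1 - A^2) * (s * (2 - s) / (1 - s)^2) = ((1 - A^2) * (s * (2 - s))) / (1 - s)^2 := by
    ring
  rw [hrw, le_div_iff₀ hden]
  nlinarith [mul_le_mul_of_nonneg_right X1 (by linarith : (0:ℝ) ≤ 1 - s),
    mul_nonneg (mul_nonneg ht0 hs0) (mul_nonneg (by linarith : (0:ℝ) ≤ 1 - s) (by linarith : (0:ℝ) ≤ 1 - A))]


set_option maxHeartbeats 1000000 in
/-- an estimate from the proof of Theorem 4.
For a Schwarz function `f(z) = Σ_{n≥1} a_n z^n` and `ω` analytic on `𝔻` with `|ω| ≤ 1`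
and `ω(0) = ⋯ = ω^{(m−1)}(0) = 0`, one has for `|z| = r < 1`:
`|f′(ω(z)) − a₁| ≤ (1 − |a₁|²)·r^m(2 − r^m)/(1 − r^m)²`. -/
theorem stmt_16
    (f : ℂ → ℂ) (a : ℕ → ℂ) (ha0 : a 0 = 0)
    (hf : ∀ z ∈ Metric.ball (0:ℂ) 1, HasSum (fun n => a n * z ^ n) (f z))
    (hfb : ∀ z ∈ Metric.ball (0:ℂ) 1, ‖f z‖ ≤ 1)
    (m : ℕ) (hm : 1 ≤ m)
    (ω : ℂ → ℂ)
    (hωd : DifferentiableOn ℂ ω (Metric.ball (0:ℂ) 1))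
    (hωb : ∀ z ∈ Metric.ball (0:ℂ) 1, ‖ω z‖ ≤ 1)
    (hω0 : ∀ k < m, iteratedDeriv k ω 0 = 0) :
    ∀ (z : ℂ) (r : ℝ), z ∈ Metric.ball (0:ℂ) 1 → ‖z‖ = r →
      ‖deriv f (ω z) - a 1‖ ≤
        (1 - ‖a 1‖ ^ 2) * (r ^ m * (2 - r ^ m) / (1 - r ^ m) ^ 2) := by
  have tri : ∀ x y : ℂ, ‖x - y‖ ≤ ‖x‖ + ‖y‖ := fun x y => by
    simpa [sub_eq_add_neg] using norm_add_le x (-y)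
  have hball : Metric.eball (0:ℂ) 1 = Metric.ball (0:ℂ) 1 := by
    rw [show (1:ENNReal) = ENNReal.ofReal 1 by simp, emetric_ball]
  -- power series of f on the ball
  set q := (FormalMultilinearSeries.ofScalars ℂ a : FormalMultilinearSeries ℂ ℂ ℂ) with hqdef
  have hqapp : ∀ (y : ℂ) (n : ℕ), (q n fun _ => y) = a n * y ^ n := by
    intro y n
    rw [hqdef, FormalMultilinearSeries.ofScalars_apply_eq, smul_eq_mul]
  have hrad : 1 ≤ q.radius := by
    apply ENNReal.le_of_forall_nnreal_lt
    intro r hr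
    have hr1 : (r:ℝ) < 1 := by exact_mod_cast hr
    have hmem : ((r:ℝ) : ℂ) ∈ Metric.ball (0:ℂ) 1 := by
      rw [mem_ball_zero_iff, Complex.norm_real]
      simpa [_root_.abs_of_nonneg r.coe_nonneg] using hr1
    have hsum : Summable fun n => ‖a n * ((r:ℝ):ℂ)^n‖ := summable_norm_iff.2 (hf _ hmem).summable
    apply q.le_radius_of_summable
    convert hsum using 2 with n
    rw [norm_mul, norm_pow, Complex.norm_real, Real.norm_of_nonneg r.coe_nonneg,
      hqdef, FormalMultilinearSeries.ofScalars_norm]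
  have hq01 : HasFPowerSeriesOnBall f q 0 1 :=
    { r_le := hrad
      r_pos := one_pos
      hasSum := by
        intro y hy
        rw [hball] at hy
        simp only [hqapp, zero_add]
        exact hf y hy }
  have hfd : DifferentiableOn ℂ f (ball 0 1) := by
    have := hq01.differentiableOn
    rwa [hball] at this
  have hfat : HasFPowerSeriesAt f q 0 := hq01.hasFPowerSeriesAt
  have hf0 : f 0 = 0 := by
    have h1 := hfat.coeff_zero (fun _ => 1)
    have h2 : (q 0) (fun _ => (1:ℂ)) = a 0 := by rw [hqapp]; simp
    rw [h2, ha0] at h1; exact h1.symm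
  have hderiv0 : deriv f 0 = a 1 := by
    rw [hfat.deriv, hqapp]; simp
  set h := (dslope f 0 : ℂ → ℂ) with hhdef
  have hh0 : h 0 = a 1 := by rw [hhdef, dslope_same]; exact hderiv0
  have hhd : DifferentiableOn ℂ h (ball 0 1) := dslope_diffOn hfd
  have hhb : ∀ x ∈ ball (0:ℂ) 1, ‖h x‖ ≤ 1 := fun x hx => schwarz_dslope hfd hfb hf0 hx
  have hfzh : ∀ x : ℂ, f x = x * h x := by
    intro x
    have := sub_smul_dslope f 0 x
    rw [sub_zero, hf0, sub_zero, smul_eq_mul] at this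
    exact this.symm
  have hderivf : ∀ x ∈ ball (0:ℂ) 1, deriv f x = h x + x * deriv h x := by
    intro x hx
    have hhx : HasDerivAt h (deriv h x) x :=
      ((hhd x hx).differentiableAt (isOpen_ball.mem_nhds hx)).hasDerivAt
    have hmul : HasDerivAt (fun y => y * h y) (1 * h x + x * deriv h x) x :=
      (hasDerivAt_id x).mul hhx
    have hfeq : f = fun y => y * h y := funext hfzh
    have hfx : HasDerivAt f (1 * h x + x * deriv h x) x := by rw [hfeq]; exact hmul
    rw [hfx.deriv]; ring
  intro z r hz hr
  have hr0 : 0 ≤ r := hr ▸ norm_nonneg z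
  have hr1 : r < 1 := by rw [← hr]; rwa [mem_ball_zero_iff] at hz
  have hs1 : r ^ m < 1 := pow_lt_one₀ hr0 hr1 (by omega)
  set w := (ω z : ℂ) with hwdef
  have hw_le : ‖w‖ ≤ r ^ m := by
    have := pow_bound m ω hωd hωb hω0 z hz
    rwa [hr] at this
  have hwball : w ∈ ball (0:ℂ) 1 := by
    rw [mem_ball_zero_iff]
    exact lt_of_le_of_lt hw_le hs1
  by_cases hstrict : ∀ x ∈ ball (0:ℂ) 1, ‖h x‖ < 1
  · -- main case
    set A := ‖a 1‖ with hAdef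
    have hA1 : A < 1 := by rw [hAdef, ← hh0]; exact hstrict 0 (mem_ball_self one_pos)
    have hA0 : (0:ℝ) ≤ A := norm_nonneg (a 1)
    set b : ℂ := h w with hbdef
    set t := ‖b - a 1‖ with htdef
    set D := ‖deriv h w‖ with hDdef
    set sp := ‖w‖ with hspdef
    -- ψ part : H1
    set ψ := (fun x => (h x - a 1) / (1 - conj' (a 1) * h x) : ℂ → ℂ) with hψdef
    have hψd : DifferentiableOn ℂ ψ (ball 0 1) := by
      intro x hx
      have h1 : DifferentiableWithinAt ℂ h (ball 0 1) x := hhd x hx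
      exact (h1.sub_const _).div ((differentiableWithinAt_const _).sub (h1.const_mul _))
        (moeb_ne hA1 (hhb x hx))
    have hψb : ∀ x ∈ ball (0:ℂ) 1, ‖ψ x‖ ≤ 1 := fun x hx =>
      moeb_abs_le hA1 (hhb x hx)
    have hψ0 : ψ 0 = 0 := by rw [hψdef]; simp [hh0]
    have hψw : ‖ψ w‖ ≤ sp := schwarz_le hψd hψb hψ0 hwball
    have H1 : t ≤ sp * ((1 - A^2) + A * t) := by
      have hdne : 1 - conj' (a 1) * h w ≠ 0 := moeb_ne hA1 (hhb w hwball)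
      have hd1 : t = ‖ψ w‖ * ‖1 - conj' (a 1) * h w‖ := by
        rw [← norm_mul]
        congr 1
        rw [hψdef]
        field_simp
        rw [htdef, hbdef, mul_div_cancel_right₀ _ (by rwa [mul_comm] at hdne)]
      have hid : 1 - conj' (a 1) * h w = (((1 - A^2 : ℝ)) : ℂ) - conj' (a 1) * (h w - a 1) := by
        have hcc : conj' (a 1) * a 1 = ((A : ℝ) : ℂ)^2 := by
          rw [mul_comm, Complex.mul_conj, Complex.normSq_eq_norm_sq, ← hAdef]
          push_cast
          ring
        push_cast
        linear_combination -hcc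
      have hden_le : ‖1 - conj' (a 1) * h w‖ ≤ (1 - A^2) + A * t := by
        rw [hid]
        refine le_trans (tri _ _) ?_
        have e1 : ‖(((1 - A^2 : ℝ)) : ℂ)‖ = 1 - A^2 := by
          rw [Complex.norm_real, Real.norm_eq_abs]; exact _root_.abs_of_nonneg (by nlinarith)
        have e2 : ‖conj' (a 1) * (h w - a 1)‖ = A * t := by
          rw [norm_mul, Complex.norm_conj]
        rw [e1, e2]
      calc t = ‖ψ w‖ * ‖1 - conj' (a 1) * h w‖ := hd1
        _ ≤ sp * ((1 - A^2) + A * t) :=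
            mul_le_mul hψw hden_le (norm_nonneg _) (norm_nonneg _)
    -- φ part : H2 (Schwarz–Pick for the derivative)
    have hb1 : ‖b‖ < 1 := hstrict w hwball
    set N := (fun ζ => (ζ - (-w)) / (1 - conj' (-w) * ζ) : ℂ → ℂ) with hNdef
    have hwabs : ‖-w‖ < 1 := by
      rw [norm_neg]; rwa [mem_ball_zero_iff] at hwball
    have hNmaps : ∀ ζ ∈ ball (0:ℂ) 1, N ζ ∈ ball (0:ℂ) 1 := by
      intro ζ hζ
      rw [mem_ball_zero_iff]
      exact moeb_abs_lt hwabs (by rwa [mem_ball_zero_iff] at hζ)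
    have hN0 : N 0 = w := by rw [hNdef]; simp
    set MO := (fun u => (u - b) / (1 - conj' b * u) : ℂ → ℂ) with hMOdef
    set φ := (fun ζ => MO (h (N ζ)) : ℂ → ℂ) with hφdef
    have hφd : DifferentiableOn ℂ φ (ball 0 1) := by
      intro ζ hζ
      have hNd : DifferentiableWithinAt ℂ N (ball 0 1) ζ := by
        apply DifferentiableWithinAt.div
        · exact differentiableWithinAt_id.sub_const _
        · exact (differentiableWithinAt_const _).sub (differentiableWithinAt_id.const_mul _)
        · exact moeb_ne hwabs (le_of_lt (by rwa [mem_ball_zero_iff] at hζ))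
      have hhN : DifferentiableWithinAt ℂ (fun ζ => h (N ζ)) (ball 0 1) ζ := by
        have hNat : DifferentiableAt ℂ h (N ζ) :=
          (hhd _ (hNmaps ζ hζ)).differentiableAt (isOpen_ball.mem_nhds (hNmaps ζ hζ))
        exact hNat.comp_differentiableWithinAt ζ hNd
      apply DifferentiableWithinAt.div
      · exact hhN.sub_const _
      · exact (differentiableWithinAt_const _).sub (hhN.const_mul _)
      · exact moeb_ne hb1 (hhb _ (hNmaps ζ hζ))
    have hφb : ∀ ζ ∈ ball (0:ℂ) 1, ‖φ ζ‖ ≤ 1 := fun ζ hζ =>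
      moeb_abs_le hb1 (hhb _ (hNmaps ζ hζ))
    have hφ0 : φ 0 = 0 := by rw [hφdef]; simp [hN0, hMOdef, hbdef]
    -- derivatives
    have hNder : HasDerivAt N (1 - ((normSq w : ℝ) : ℂ)) 0 := by
      have d1 : HasDerivAt (fun ζ : ℂ => ζ - (-w)) 1 0 := (hasDerivAt_id 0).sub_const _
      have d2 : HasDerivAt (fun ζ : ℂ => 1 - conj' (-w) * ζ) (-(conj' (-w))) 0 := by
        simpa using ((hasDerivAt_id (0:ℂ)).const_mul (conj' (-w))).const_sub 1
      have hden0 : (1 : ℂ) - conj' (-w) * 0 ≠ 0 := by simp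
      have := d1.div d2 hden0
      refine (this : HasDerivAt N _ 0).congr_deriv ?_
      simp only [mul_zero, sub_zero, zero_sub, map_neg, mul_neg, neg_neg, neg_mul, one_mul]
      rw [show w * conj' w = ((normSq w : ℝ) : ℂ) from Complex.mul_conj w]
      ring
    have hMOder : HasDerivAt MO ((1 - ((normSq b : ℝ) : ℂ))⁻¹) b := by
      have d1 : HasDerivAt (fun u : ℂ => u - b) 1 b := (hasDerivAt_id b).sub_const _
      have d2 : HasDerivAt (fun u : ℂ => 1 - conj' b * u) (-(conj' b)) b := by
        simpa using ((hasDerivAt_id b).const_mul (conj' b)).const_sub 1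
      have hdenb : (1 : ℂ) - conj' b * b ≠ 0 := moeb_ne hb1 hb1.le
      have hnsb : conj' b * b = ((normSq b : ℝ) : ℂ) := by
        rw [mul_comm]; exact Complex.mul_conj b
      have := d1.div d2 hdenb
      refine (this : HasDerivAt MO _ b).congr_deriv ?_
      rw [← hnsb]
      field_simp
      ring
    have hhw' : HasDerivAt h (deriv h w) w :=
      ((hhd w hwball).differentiableAt (isOpen_ball.mem_nhds hwball)).hasDerivAt
    have c1 : HasDerivAt (fun ζ => h (N ζ)) (deriv h w * (1 - ((normSq w : ℝ) : ℂ))) 0 := by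
      have hh_at : HasDerivAt h (deriv h w) (N 0) := by rw [hN0]; exact hhw'
      exact hh_at.comp 0 hNder
    have c2 : HasDerivAt φ ((1 - ((normSq b : ℝ) : ℂ))⁻¹ *
        (deriv h w * (1 - ((normSq w : ℝ) : ℂ)))) 0 := by
      have hMO_at : HasDerivAt MO ((1 - ((normSq b : ℝ) : ℂ))⁻¹) ((fun ζ => h (N ζ)) 0) := by
        have heval : (fun ζ => h (N ζ)) 0 = b := by show h (N 0) = b; rw [hN0]
        rw [heval]; exact hMOder
      exact hMO_at.comp 0 c1
    have hφd0 : ‖deriv φ 0‖ ≤ 1 := by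
      rw [← dslope_same]
      exact schwarz_dslope hφd hφb hφ0 (mem_ball_self one_pos)
    rw [c2.deriv] at hφd0
    have hnsw1 : normSq w < 1 := by
      rw [← Complex.sq_norm]
      exact pow_lt_one₀ (norm_nonneg w) (lt_of_le_of_lt hw_le hs1) two_ne_zero
    have hnsb1 : normSq b < 1 := by
      rw [← Complex.sq_norm]
      exact pow_lt_one₀ (norm_nonneg b) hb1 two_ne_zero
    have H2 : D * (1 - sp^2) ≤ 1 - (‖b‖)^2 := by
      have habs : ‖(1 - ((normSq b : ℝ) : ℂ))⁻¹ *
          (deriv h w * (1 - ((normSq w : ℝ) : ℂ)))‖ =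
          (1 - normSq b)⁻¹ * (D * (1 - normSq w)) := by
        rw [norm_mul, norm_inv, norm_mul]
        congr 2
        · rw [(show (1:ℂ) - ((normSq b : ℝ) : ℂ) = (((1 - normSq b : ℝ)) : ℂ) from by push_cast; ring),
            Complex.norm_real, Real.norm_eq_abs]
          exact _root_.abs_of_nonneg (by linarith)
        · rw [(show (1:ℂ) - ((normSq w : ℝ) : ℂ) = (((1 - normSq w : ℝ)) : ℂ) from by push_cast; ring),
            Complex.norm_real, Real.norm_eq_abs]
          exact _root_.abs_of_nonneg (by linarith)
      rw [habs] at hφd0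
      have hpos : 0 < 1 - normSq b := by linarith
      have := (inv_mul_le_iff₀ hpos).mp hφd0
      have e1 : sp^2 = normSq w := Complex.sq_norm w
      have e2 : (‖b‖)^2 = normSq b := Complex.sq_norm b
      have e3 : D = ‖deriv h w‖ := hDdef
      nlinarith [this]
    have H3 : A ≤ ‖b‖ + t := by
      calc A = ‖b - (b - a 1)‖ := by rw [hAdef]; congr 1; ring
        _ ≤ ‖b‖ + ‖b - a 1‖ := tri _ _
        _ = ‖b‖ + t := by rw [htdef]
    have hmain : ‖deriv f w - a 1‖ ≤ t + sp * D := by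
      rw [hderivf w hwball]
      have heq : h w + w * deriv h w - a 1 = (b - a 1) + w * deriv h w := by
        rw [hbdef]; ring
      rw [heq]
      refine le_trans (norm_add_le _ _) ?_
      rw [norm_mul, ← htdef, ← hspdef, ← hDdef]
    refine le_trans hmain ?_
    exact arith A (‖b‖) t (r^m) sp D (norm_nonneg _) hA1.le
      (norm_nonneg _) (hhb w hwball) (norm_nonneg _) (norm_nonneg _)
      hw_le hs1 (norm_nonneg _) H1 H2 H3
  · -- constant case
    push_neg at hstrict
    obtain ⟨x₀, hx₀, hx₀1⟩ := hstrict
    have heq1 : ‖h x₀‖ = 1 := le_antisymm (hhb x₀ hx₀) hx₀1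
    have hmax : IsMaxOn (norm ∘ h) (ball (0:ℂ) 1) x₀ := by
      rw [isMaxOn_iff]
      intro y hy
      show ‖h y‖ ≤ ‖h x₀‖
      rw [heq1]
      exact hhb y hy
    have hconst := Complex.eqOn_of_isPreconnected_of_isMaxOn_norm
      (convex_ball (0:ℂ) 1).isPreconnected isOpen_ball hhd hx₀ hmax
    have ha1 : a 1 = h x₀ := by rw [← hh0]; exact hconst (mem_ball_self one_pos)
    have hhw : h w = h x₀ := hconst hwball
    have hdh : deriv h w = 0 := by
      have hev : h =ᶠ[nhds w] (fun _ => h x₀) :=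
        Filter.eventuallyEq_of_mem (isOpen_ball.mem_nhds hwball) (fun y hy => hconst hy)
      rw [hev.deriv_eq]; exact deriv_const w _
    have hzero : deriv f w - a 1 = 0 := by
      rw [hderivf w hwball, hhw, hdh, ha1]; ring
    rw [hzero, norm_zero]
    have habs1 : ‖a 1‖ = 1 := by rw [ha1, heq1]
    rw [habs1]
    have : ((1:ℝ) - 1^2) * (r^m * (2 - r^m) / (1 - r^m)^2) = 0 := by ring
    rw [this]

end
end

section
/- Let f(z) = Σ_{n=1}^∞ a_n z^n be a Schwarz function (analytic on 𝔻, |f(z)| ≤ 1, f(0) = 0). Then for every n ≥ 1, one has |a_{n+1}| ≤ 1 − |a₁|². -/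
open Metric Complex Finset
open scoped ENNReal NNReal Real Topology

noncomputable def stmt17Series (b : ℕ → ℂ) : FormalMultilinearSeries ℂ ℂ ℂ :=
  fun n => ContinuousMultilinearMap.mkPiRing ℂ (Fin n) (b n)

lemma stmt17Series_coeff (b : ℕ → ℂ) (n : ℕ) : (stmt17Series b).coeff n = b n := by
  simp [stmt17Series, FormalMultilinearSeries.coeff, ContinuousMultilinearMap.mkPiRing_apply]

lemma stmt17Series_norm (b : ℕ → ℂ) (n : ℕ) : ‖stmt17Series b n‖ = ‖b n‖ :=
  ContinuousMultilinearMap.norm_mkPiRing ..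

lemma stmt17_hasFPB (u : ℂ → ℂ) (b : ℕ → ℂ)
    (hu : ∀ z ∈ ball (0:ℂ) 1, HasSum (fun k => b k * z ^ k) (u z)) :
    HasFPowerSeriesOnBall u (stmt17Series b) 0 1 := by
  constructor
  · refine ENNReal.le_of_forall_nnreal_lt fun r hr => ?_
    have hr1 : (r : ℝ) < 1 := by exact_mod_cast hr
    have hz : ((r : ℝ) : ℂ) ∈ ball (0:ℂ) 1 := by
      simp [Complex.norm_of_nonneg r.coe_nonneg, hr1]
    have hs : Summable fun k => b k * ((r : ℝ) : ℂ) ^ k := (hu _ hz).summable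
    have hs' : Summable fun k => ‖b k * ((r : ℝ) : ℂ) ^ k‖ := summable_norm_iff.mpr hs
    apply (stmt17Series b).le_radius_of_summable_norm
    convert hs' using 2 with k
    rw [stmt17Series_norm, norm_mul, norm_pow, Complex.norm_real, Real.norm_eq_abs,
      _root_.abs_of_nonneg r.coe_nonneg]
  · exact one_pos
  · intro y hy
    have hy' : y ∈ ball (0:ℂ) 1 := by
      rw [EMetric.mem_ball, edist_zero_right] at hy
      simpa [mem_ball_zero_iff] using NNReal.coe_lt_coe.mpr (by simpa [enorm_eq_nnnorm] using hy : ‖y‖₊ < 1)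
    have := hu y hy'
    simp only [zero_add]
    convert this using 2 with k
    · rfl
    simp [stmt17Series, ContinuousMultilinearMap.mkPiRing_apply, smul_eq_mul, mul_comm]

lemma stmt17_ball_eq : Metric.eball (0:ℂ) 1 = ball (0:ℂ) 1 := by
  rw [show (1 : ℝ≥0∞) = ((1:ℝ≥0) : ℝ≥0∞) by norm_num, Metric.emetric_ball_nnreal]
  norm_num

lemma stmt17_diffOn (u : ℂ → ℂ) (b : ℕ → ℂ)
    (hu : ∀ z ∈ ball (0:ℂ) 1, HasSum (fun k => b k * z ^ k) (u z)) :
    DifferentiableOn ℂ u (ball (0:ℂ) 1) := by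
  have := (stmt17_hasFPB u b hu).differentiableOn
  rwa [stmt17_ball_eq] at this

lemma stmt17_coeff_le (u : ℂ → ℂ) (b : ℕ → ℂ)
    (hu : ∀ z ∈ ball (0:ℂ) 1, HasSum (fun k => b k * z ^ k) (u z))
    (hub : ∀ z ∈ ball (0:ℂ) 1, ‖u z‖ ≤ 1) (k : ℕ) :
    ‖b k‖ ≤ 1 := by
  have hd := stmt17_diffOn u b hu
  have key : ∀ r : ℝ≥0, 0 < r → (r : ℝ) < 1 → ‖b k‖ * (r : ℝ) ^ k ≤ 1 := by
    intro r hr0 hr1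
    have hsub : closedBall (0:ℂ) r ⊆ ball (0:ℂ) 1 := closedBall_subset_ball hr1
    have h2 : HasFPowerSeriesOnBall u (cauchyPowerSeries u 0 r) 0 r := by
      refine (hd.mono hsub).hasFPowerSeriesOnBall ?_
      exact_mod_cast hr0
    have heq : stmt17Series b = cauchyPowerSeries u 0 r :=
      (stmt17_hasFPB u b hu).hasFPowerSeriesAt.eq_formalMultilinearSeries h2.hasFPowerSeriesAt
    have hb : ‖b k‖ = ‖cauchyPowerSeries u 0 r k‖ := by rw [← heq, stmt17Series_norm]
    have hle := norm_cauchyPowerSeries_le u 0 (r : ℝ) k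
    have hint : (∫ θ : ℝ in (0)..2 * Real.pi, ‖u (circleMap 0 r θ)‖) ≤ 2 * Real.pi := by
      have hcont : Continuous fun θ : ℝ => ‖u (circleMap 0 r θ)‖ := by
        refine (hd.continuousOn.comp_continuous (continuous_circleMap 0 r) ?_).norm
        intro θ
        simp [mem_ball_zero_iff, norm_circleMap_zero, _root_.abs_of_nonneg r.coe_nonneg, hr1]
      calc (∫ θ : ℝ in (0)..2 * Real.pi, ‖u (circleMap 0 r θ)‖)
          ≤ ∫ _ : ℝ in (0)..2 * Real.pi, (1:ℝ) := by
            apply intervalIntegral.integral_mono_on Real.two_pi_pos.le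
              (hcont.intervalIntegrable _ _) (intervalIntegrable_const)
            intro θ _
            apply hub
            simp [mem_ball_zero_iff, norm_circleMap_zero, _root_.abs_of_nonneg r.coe_nonneg, hr1]
        _ = 2 * Real.pi := by simp
    have h1 : ‖b k‖ ≤ ((r:ℝ)⁻¹) ^ k := by
      rw [hb]
      refine hle.trans ?_
      have hb2 : (2 * Real.pi)⁻¹ * (∫ θ : ℝ in (0)..2 * Real.pi, ‖u (circleMap 0 r θ)‖) ≤ 1 := by
        have h3 := mul_le_mul_of_nonneg_left hint
          (by positivity : (0:ℝ) ≤ (2 * Real.pi)⁻¹)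
        rwa [inv_mul_cancel₀ Real.two_pi_pos.ne'] at h3
      calc ((2 * Real.pi)⁻¹ * ∫ θ : ℝ in (0)..2 * Real.pi, ‖u (circleMap 0 r θ)‖) * |(r:ℝ)|⁻¹ ^ k
          ≤ 1 * |(r:ℝ)|⁻¹ ^ k := by gcongr
        _ = ((r:ℝ)⁻¹) ^ k := by rw [one_mul, _root_.abs_of_nonneg r.coe_nonneg]
    calc ‖b k‖ * (r:ℝ) ^ k ≤ ((r:ℝ)⁻¹) ^ k * (r:ℝ) ^ k := by
          gcongr
      _ = 1 := by
          rw [← mul_pow, inv_mul_cancel₀ (by exact_mod_cast hr0.ne' : ((r:ℝ)) ≠ 0), one_pow]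
  -- pass to the limit r → 1⁻
  have htend : Filter.Tendsto (fun r : ℝ => ‖b k‖ * r ^ k) (nhdsWithin 1 (Set.Iio 1))
      (nhds (‖b k‖)) := by
    have : Filter.Tendsto (fun r : ℝ => ‖b k‖ * r ^ k) (nhds 1)
        (nhds (‖b k‖ * 1 ^ k)) := by
      exact (continuous_const.mul (continuous_pow k)).tendsto 1
    simpa using this.mono_left nhdsWithin_le_nhds
  refine le_of_tendsto htend ?_
  filter_upwards [Ioo_mem_nhdsLT_of_mem (by norm_num : (1:ℝ) ∈ Set.Ioc (0:ℝ) 1)] with r hr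
  have hr0 : 0 < r := hr.1
  exact key ⟨r, hr0.le⟩ (by exact_mod_cast hr0) hr.2

lemma stmt17_schwarz (u : ℂ → ℂ)
    (hd : DifferentiableOn ℂ u (ball (0:ℂ) 1))
    (hub : ∀ z ∈ ball (0:ℂ) 1, ‖u z‖ ≤ 1)
    (h0 : u 0 = 0) {z : ℂ} (hz : z ∈ ball (0:ℂ) 1) :
    ‖u z‖ ≤ ‖z‖ := by
  refine le_of_forall_pos_le_add fun ε hε => ?_
  have hmaps : Set.MapsTo u (ball (0:ℂ) 1) (closedBall (u 0) (1 + ε)) := by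
    intro w hw
    rw [h0, mem_closedBall_zero_iff]
    exact (hub w hw).trans (by linarith)
  have := dist_le_div_mul_dist_of_mapsTo_ball hd hmaps hz
  rw [h0, dist_zero_right, dist_zero_right, div_one] at this
  have hz1 : ‖z‖ ≤ 1 := by
    rw [mem_ball_zero_iff] at hz
    exact hz.le
  calc ‖u z‖ ≤ (1 + ε) * ‖z‖ := by simpa using this
    _ = ‖z‖ + ε * ‖z‖ := by ring
    _ ≤ ‖z‖ + ε := by nlinarith

lemma stmt17_mobius_abs {u v : ℂ} (hu : ‖u‖ ≤ 1) (hv : ‖v‖ ≤ 1) :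
    ‖u - v‖ ≤ ‖1 - (starRingEnd ℂ) v * u‖ := by
  have hnu : Complex.normSq u ≤ 1 := by
    rw [← Complex.sq_norm]; nlinarith [norm_nonneg u]
  have hnv : Complex.normSq v ≤ 1 := by
    rw [← Complex.sq_norm]; nlinarith [norm_nonneg v]
  have key : (Complex.normSq (1 - (starRingEnd ℂ) v * u) : ℝ) - Complex.normSq (u - v)
      = (1 - Complex.normSq u) * (1 - Complex.normSq v) := by
    have : ((Complex.normSq (1 - (starRingEnd ℂ) v * u) : ℂ)) - (Complex.normSq (u - v) : ℂ)
        = ((1 - Complex.normSq u : ℝ) : ℂ) * ((1 - Complex.normSq v : ℝ) : ℂ) := by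
      rw [← Complex.mul_conj, ← Complex.mul_conj]
      push_cast
      rw [← Complex.mul_conj, ← Complex.mul_conj]
      simp only [map_sub, map_mul, map_one, Complex.conj_conj]
      ring
    have := congrArg Complex.re this
    simpa using this
  rw [Complex.norm_def, Complex.norm_def]
  apply Real.sqrt_le_sqrt
  nlinarith [Complex.normSq_nonneg (u - v)]

lemma stmt17_key (H : ℂ → ℂ) (d : ℕ → ℂ)
    (hH : ∀ w ∈ ball (0:ℂ) 1, HasSum (fun k => d k * w ^ k) (H w))
    (hHb : ∀ w ∈ ball (0:ℂ) 1, ‖H w‖ ≤ 1)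
    (h0 : ‖d 0‖ < 1) :
    ‖d 1‖ ≤ 1 - ‖d 0‖ ^ 2 := by
  have hball : (0:ℂ) ∈ ball (0:ℂ) 1 := by simp
  have hp := stmt17_hasFPB H d hH
  have hd := stmt17_diffOn H d hH
  have hH0 : H 0 = d 0 := by
    have h1 : HasSum (fun k => d k * (0:ℂ) ^ k) (d 0) := by
      have := hasSum_single (f := fun k => d k * (0:ℂ) ^ k) 0
        (fun k hk => by simp [zero_pow hk])
      simpa using this
    exact (hH 0 hball).unique h1
  set c : ℂ := (starRingEnd ℂ) (d 0) with hc
  have habs : ∀ w ∈ ball (0:ℂ) 1, ‖c * H w‖ < 1 := by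
    intro w hw
    rw [norm_mul, hc, Complex.norm_conj]
    calc ‖d 0‖ * ‖H w‖ ≤ ‖d 0‖ * 1 :=
          mul_le_mul_of_nonneg_left (hHb w hw) (norm_nonneg _)
      _ < 1 := by simpa using h0
  have hdenom : ∀ w ∈ ball (0:ℂ) 1, 1 - c * H w ≠ 0 := by
    intro w hw hzero
    rw [sub_eq_zero] at hzero
    have := habs w hw
    rw [← hzero] at this
    simp at this
  -- the Möbius transform of H
  set h : ℂ → ℂ := fun w => (H w - d 0) * (1 - c * H w)⁻¹ with hh
  have hdh : DifferentiableOn ℂ h (ball (0:ℂ) 1) := by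
    apply DifferentiableOn.mul (hd.sub_const _)
    exact DifferentiableOn.inv ((differentiableOn_const _).sub (hd.const_mul c)) hdenom
  have hhb : ∀ w ∈ ball (0:ℂ) 1, ‖h w‖ ≤ 1 := by
    intro w hw
    rw [hh]
    simp only [norm_mul, norm_inv]
    rw [← div_eq_mul_inv, div_le_one (norm_pos_iff.mpr (hdenom w hw))]
    exact stmt17_mobius_abs (hHb w hw) h0.le
  have hh0 : h 0 = 0 := by simp [hh, hH0]
  -- bound on the derivative of h at 0 via the Schwarz lemma
  have hderiv_le : ‖deriv h 0‖ ≤ 1 := by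
    refine le_of_forall_pos_le_add fun ε hε => ?_
    have hmaps : Set.MapsTo h (ball (0:ℂ) 1) (closedBall (h 0) (1 + ε)) := by
      intro w hw
      rw [hh0, mem_closedBall_zero_iff]
      exact (hhb w hw).trans (by linarith)
    have := Complex.norm_deriv_le_div_of_mapsTo_ball hdh hmaps one_pos
    rw [div_one] at this
    calc ‖deriv h 0‖ ≤ 1 + ε := this
      _ ≤ 1 + ε := le_rfl
  -- compute the derivative of h at 0
  have hHd : HasDerivAt H (d 1) 0 := by
    have h1 : DifferentiableAt ℂ H 0 :=
      (hd.differentiableAt (isOpen_ball.mem_nhds hball))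
    have h2 : deriv H 0 = d 1 := by
      rw [hp.hasFPowerSeriesAt.deriv]
      exact stmt17Series_coeff d 1
    have := h1.hasDerivAt
    rwa [h2] at this
  have hden0 : (1 : ℂ) - c * H 0 ≠ 0 := hdenom 0 hball
  have hhd : HasDerivAt h
      ((d 1) * (1 - c * H 0)⁻¹ +
        (H 0 - d 0) * (-(-(c * d 1)) / (1 - c * H 0) ^ 2)) 0 := by
    have h1 : HasDerivAt (fun w => H w - d 0) (d 1) 0 := hHd.sub_const _
    have h2 : HasDerivAt (fun w => 1 - c * H w) (-(c * d 1)) 0 := by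
      simpa using (hHd.const_mul c).const_sub 1
    have h3 : HasDerivAt (fun w => (1 - c * H w)⁻¹)
        (-(-(c * d 1)) / (1 - c * H 0) ^ 2) 0 := h2.inv hden0
    have h4 := h1.mul h3
    simp only [neg_neg] at h4 ⊢
    exact h4
  have hD : deriv h 0 = d 1 * (1 - c * d 0)⁻¹ := by
    rw [hhd.deriv, hH0]
    ring
  -- translate the bound into the desired inequality
  have hcd : (1 : ℂ) - c * d 0 = ((1 - Complex.normSq (d 0) : ℝ) : ℂ) := by
    rw [hc, mul_comm, Complex.mul_conj]
    push_cast
    ring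
  have hpos : (0:ℝ) < 1 - Complex.normSq (d 0) := by
    rw [← Complex.sq_norm]
    nlinarith [norm_nonneg (d 0)]
  have habsD : ‖deriv h 0‖
      = ‖d 1‖ / (1 - Complex.normSq (d 0)) := by
    rw [hD, hcd, norm_mul, norm_inv, Complex.norm_real, Real.norm_eq_abs,
      _root_.abs_of_pos hpos, div_eq_mul_inv]
  have : ‖d 1‖ / (1 - Complex.normSq (d 0)) ≤ 1 := by
    rw [← habsD]; exact hderiv_le
  have h4 := (div_le_one hpos).mp this
  calc ‖d 1‖ ≤ 1 - Complex.normSq (d 0) := h4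
    _ = 1 - ‖d 0‖ ^ 2 := by rw [← Complex.sq_norm]

lemma stmt17_root_sum (n : ℕ) (hn : 1 ≤ n) (k : ℕ) :
    ∑ j ∈ Finset.range n, (Complex.exp (2 * Real.pi * I / n)) ^ (k * j)
      = if n ∣ k then (n : ℂ) else 0 := by
  have hn0 : (n : ℂ) ≠ 0 := Nat.cast_ne_zero.mpr (by omega)
  have h2pi : (2 * (Real.pi : ℂ) * I) ≠ 0 :=
    mul_ne_zero (mul_ne_zero two_ne_zero (by exact_mod_cast Real.pi_ne_zero)) Complex.I_ne_zero
  set ω : ℂ := Complex.exp (2 * Real.pi * I / n) with hω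
  have hpow : ∀ m : ℕ, ω ^ m = Complex.exp (m * (2 * Real.pi * I / n)) := by
    intro m
    rw [hω, ← Complex.exp_nat_mul]
  have hmul : ∀ m : ℕ, ω ^ (m * n) = 1 := by
    intro m
    rw [hpow]
    have : ((m * n : ℕ) : ℂ) * (2 * Real.pi * I / n) = (m : ℤ) * (2 * Real.pi * I) := by
      push_cast
      field_simp
    rw [this]
    exact Complex.exp_int_mul_two_pi_mul_I (m : ℤ)
  have hxn : (ω ^ k) ^ n = 1 := by
    rw [← pow_mul, mul_comm k n, mul_comm n k]
    exact hmul k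
  by_cases hdvd : n ∣ k
  · obtain ⟨m, rfl⟩ := hdvd
    simp only [if_pos (dvd_mul_right n m)]
    have : ∀ j ∈ Finset.range n, ω ^ (n * m * j) = 1 := by
      intro j _
      rw [show n * m * j = (m * j) * n by ring, hmul]
    rw [Finset.sum_congr rfl this]
    simp
  · have hx1 : ω ^ k ≠ 1 := by
      intro hx
      rw [hpow] at hx
      obtain ⟨m, hm⟩ := Complex.exp_eq_one_iff.mp hx
      have hm' : (k : ℂ) * (2 * Real.pi * I) = ((m : ℂ) * n) * (2 * Real.pi * I) := by
        field_simp at hm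
        linear_combination (2 * (Real.pi : ℂ) * I) * hm
      have h4 : (k : ℂ) = (m : ℂ) * n := mul_right_cancel₀ h2pi hm'
      have hk : (k : ℤ) = m * n := by exact_mod_cast h4
      exact hdvd (Int.ofNat_dvd.mp ⟨m, by rw [hk]; ring⟩)
    have : ∀ j ∈ Finset.range n, ω ^ (k * j) = (ω ^ k) ^ j := by
      intro j _; rw [← pow_mul]
    rw [Finset.sum_congr rfl this, geom_sum_eq hx1, hxn]
    simp [hdvd]

lemma stmt17_avg_summable (c : ℕ → ℂ) (hc : ∀ k, ‖c k‖ ≤ 1)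
    (n : ℕ) {w : ℂ} (hw : w ∈ ball (0:ℂ) 1) :
    Summable (fun k => c (k * n) * w ^ k) := by
  rw [mem_ball_zero_iff] at hw
  refine Summable.of_norm (Summable.of_nonneg_of_le (fun k => norm_nonneg _)
    (fun k => ?_) (summable_geometric_of_lt_one (norm_nonneg w) hw))
  rw [norm_mul, norm_pow]
  have h1 : ‖c (k * n)‖ ≤ 1 := by exact hc _
  have := mul_le_mul_of_nonneg_right h1 (pow_nonneg (norm_nonneg w) k)
  simpa using this

lemma stmt17_avg_bound (G : ℂ → ℂ) (c : ℕ → ℂ)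
    (hG : ∀ z ∈ ball (0:ℂ) 1, HasSum (fun k => c k * z ^ k) (G z))
    (hc : ∀ k, ‖c k‖ ≤ 1)
    (hGb : ∀ z ∈ ball (0:ℂ) 1, ‖G z‖ ≤ 1)
    (n : ℕ) (hn : 1 ≤ n) {w : ℂ} (hw : w ∈ ball (0:ℂ) 1) :
    ‖∑' k, c (k * n) * w ^ k‖ ≤ 1 := by
  have hn0 : (n : ℂ) ≠ 0 := Nat.cast_ne_zero.mpr (by omega)
  set T : ℂ := ∑' k, c (k * n) * w ^ k with hTdef
  have hT : HasSum (fun k => c (k * n) * w ^ k) T :=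
    (stmt17_avg_summable c hc n hw).hasSum
  by_cases hw0 : w = 0
  · have h1 : HasSum (fun k => c (k * n) * w ^ k) (c 0) := by
      subst hw0
      have := hasSum_single (f := fun k => c (k * n) * (0:ℂ) ^ k) 0
        (fun k hk => by simp [zero_pow hk])
      simpa using this
    rw [hT.unique h1]
    exact hc 0
  -- choose an n-th root z of w
  · set z : ℂ := w ^ ((n : ℂ)⁻¹) with hz
    have hzn : z ^ n = w := Complex.cpow_nat_inv_pow w (by omega)
    have habsz : ‖z‖ < 1 := by
      by_contra h
      push_neg at h
      have h1 : (1:ℝ) ≤ ‖z‖ ^ n := one_le_pow₀ h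
      rw [← norm_pow, hzn] at h1
      rw [mem_ball_zero_iff] at hw
      linarith
    set ω : ℂ := Complex.exp (2 * Real.pi * I / n) with hω
    have hωabs : ‖ω‖ = 1 := by
      rw [hω, Complex.norm_exp]
      have : (2 * (Real.pi:ℂ) * I / n).re = 0 := by
        have h1 : (2 * (Real.pi:ℂ) * I / n) = ((2 * Real.pi / n : ℝ) : ℂ) * I := by
          push_cast; ring
        rw [h1]
        simp [Complex.mul_re]
      rw [this, Real.exp_zero]
    have hmem : ∀ j : ℕ, ω ^ j * z ∈ ball (0:ℂ) 1 := by
      intro j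
      rw [mem_ball_zero_iff, norm_mul, norm_pow, hωabs, one_pow, one_mul]
      exact habsz
    set S : ℂ := ∑ j ∈ Finset.range n, G (ω ^ j * z) with hS
    have habsS : ‖S‖ ≤ n := by
      rw [hS]
      calc ‖∑ j ∈ Finset.range n, G (ω ^ j * z)‖
          ≤ ∑ j ∈ Finset.range n, ‖G (ω ^ j * z)‖ := by
            simpa using norm_sum_le (Finset.range n) (fun j => G (ω ^ j * z))
        _ ≤ ∑ _j ∈ Finset.range n, (1:ℝ) := by
            apply Finset.sum_le_sum
            intro j _
            exact hGb _ (hmem j)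
        _ = n := by simp
    have hSsum : HasSum (fun k => ∑ j ∈ Finset.range n, c k * (ω ^ j * z) ^ k) S :=
      hasSum_sum fun j _ => hG _ (hmem j)
    have hterm : ∀ k, (∑ j ∈ Finset.range n, c k * (ω ^ j * z) ^ k)
        = c k * z ^ k * (if n ∣ k then (n : ℂ) else 0) := by
      intro k
      rw [← stmt17_root_sum n hn k, Finset.mul_sum]
      apply Finset.sum_congr rfl
      intro j _
      rw [mul_pow, ← pow_mul, Nat.mul_comm j k]
      ring
    have hSsum' : HasSum (fun k => c k * z ^ k * (if n ∣ k then (n : ℂ) else 0)) S := by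
      simpa only [hterm] using hSsum
    have hinj : Function.Injective (fun m : ℕ => m * n) := fun a b h => by
      have : a * n = b * n := h
      exact Nat.eq_of_mul_eq_mul_right (by omega) this
    have hzero : ∀ k ∉ Set.range (fun m : ℕ => m * n),
        c k * z ^ k * (if n ∣ k then (n : ℂ) else 0) = 0 := by
      intro k hk
      have : ¬ n ∣ k := by
        intro ⟨m, hm⟩
        exact hk ⟨m, by simpa [hm] using Nat.mul_comm m n⟩
      rw [if_neg this, mul_zero]
    have htrans : HasSum (fun m => c (m * n) * z ^ (m * n) *
        (if n ∣ m * n then (n : ℂ) else 0)) S :=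
      (Function.Injective.hasSum_iff hinj hzero).mpr hSsum'
    have heq : ∀ m : ℕ, c (m * n) * z ^ (m * n) * (if n ∣ m * n then (n : ℂ) else 0)
        = (n : ℂ) * (c (m * n) * w ^ m) := by
      intro m
      rw [if_pos (dvd_mul_left n m), Nat.mul_comm m n, pow_mul, hzn]
      ring
    have htrans' : HasSum (fun m => (n : ℂ) * (c (m * n) * w ^ m)) S := by
      simpa only [heq] using htrans
    have hmulT : HasSum (fun m => (n : ℂ) * (c (m * n) * w ^ m)) ((n : ℂ) * T) :=
      hT.mul_left _
    have hST : S = (n : ℂ) * T := htrans'.unique hmulT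
    have habsn : ‖(n : ℂ)‖ = (n : ℝ) := by
      rw [Complex.norm_natCast]
    have h6 : ‖(n:ℂ) * T‖ = (n:ℝ) * ‖T‖ := by
      rw [norm_mul, habsn]
    have h7 : (n:ℝ) * ‖T‖ ≤ (n:ℝ) := by
      rw [← h6, ← hST]; exact habsS
    have h8 : (n:ℝ) * ‖T‖ ≤ (n:ℝ) * 1 := by rwa [mul_one]
    have hnpos : (0:ℝ) < (n : ℝ) := by exact_mod_cast (by omega : 0 < n)
    exact le_of_mul_le_mul_left h8 hnpos

lemma stmt17_main (f : ℂ → ℂ) (a : ℕ → ℂ) (ha0 : a 0 = 0)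
    (hf : ∀ z ∈ Metric.ball (0:ℂ) 1, HasSum (fun n => a n * z ^ n) (f z))
    (hfb : ∀ z ∈ Metric.ball (0:ℂ) 1, ‖f z‖ ≤ 1)
    (hlt : ‖a 1‖ < 1)
    (n : ℕ) (hn : 1 ≤ n) :
    ‖a (n + 1)‖ ≤ 1 - ‖a 1‖ ^ 2 := by
  have hball : (0:ℂ) ∈ ball (0:ℂ) 1 := by simp
  have hcoef : ∀ m, ‖a m‖ ≤ 1 := stmt17_coeff_le f a hf hfb
  have hf0 : f 0 = 0 := by
    have h1 : HasSum (fun m => a m * (0:ℂ) ^ m) (a 0) := by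
      have := hasSum_single (f := fun m => a m * (0:ℂ) ^ m) 0
        (fun m hm => by simp [zero_pow hm])
      simpa using this
    rw [(hf 0 hball).unique h1, ha0]
  have hd := stmt17_diffOn f a hf
  have hSch : ∀ z ∈ ball (0:ℂ) 1, ‖f z‖ ≤ ‖z‖ :=
    fun z hz => stmt17_schwarz f hd hfb hf0 hz
  -- the function G = f z / z with coefficients c k = a (k+1)
  set c : ℕ → ℂ := fun k => a (k + 1) with hcdef
  set G : ℂ → ℂ := fun z => if z = 0 then a 1 else z⁻¹ * f z with hGdef
  have hG : ∀ z ∈ ball (0:ℂ) 1, HasSum (fun k => c k * z ^ k) (G z) := by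
    intro z hz
    by_cases hz0 : z = 0
    · subst hz0
      have h1 : HasSum (fun k => c k * (0:ℂ) ^ k) (c 0) := by
        have := hasSum_single (f := fun k => c k * (0:ℂ) ^ k) 0
          (fun k hk => by simp [zero_pow hk])
        simpa using this
      simpa [hGdef, hcdef] using h1
    · have h1 : HasSum (fun m => a (m + 1) * z ^ (m + 1)) (f z) := by
        have h2 := (hasSum_nat_add_iff (f := fun m => a m * z ^ m) (g := f z) 1).mpr ?_
        · exact h2
        · rw [Finset.range_one, Finset.sum_singleton, ha0, zero_mul, add_zero]
          exact hf z hz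
      have h3 : HasSum (fun m => z⁻¹ * (a (m + 1) * z ^ (m + 1))) (z⁻¹ * f z) :=
        h1.mul_left _
      have h4 : ∀ m : ℕ, z⁻¹ * (a (m + 1) * z ^ (m + 1)) = c m * z ^ m := by
        intro m
        rw [hcdef]
        field_simp
        ring
      rw [hGdef]
      simp only [if_neg hz0]
      simpa only [h4] using h3
  have hGb : ∀ z ∈ ball (0:ℂ) 1, ‖G z‖ ≤ 1 := by
    intro z hz
    by_cases hz0 : z = 0
    · subst hz0
      simpa [hGdef] using hcoef 1
    · rw [hGdef]
      simp only [if_neg hz0]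
      rw [norm_mul, norm_inv]
      have hpos := norm_pos_iff.mpr hz0
      calc (‖z‖)⁻¹ * ‖f z‖
          ≤ (‖z‖)⁻¹ * ‖z‖ := by
            gcongr
            exact hSch z hz
        _ = 1 := inv_mul_cancel₀ hpos.ne'
  have hc : ∀ k, ‖c k‖ ≤ 1 := stmt17_coeff_le G c hG hGb
  -- the averaged function H with coefficients d k = c (k * n)
  set d : ℕ → ℂ := fun k => c (k * n) with hddef
  set H : ℂ → ℂ := fun w => ∑' k, d k * w ^ k with hHdef
  have hH : ∀ w ∈ ball (0:ℂ) 1, HasSum (fun k => d k * w ^ k) (H w) :=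
    fun w hw => (stmt17_avg_summable c hc n hw).hasSum
  have hHb : ∀ w ∈ ball (0:ℂ) 1, ‖H w‖ ≤ 1 :=
    fun w hw => stmt17_avg_bound G c hG hc hGb n hn hw
  have hd0 : d 0 = a 1 := by simp [hddef, hcdef]
  have hd1 : d 1 = a (n + 1) := by simp [hddef, hcdef]
  have h0 : ‖d 0‖ < 1 := by rwa [hd0]
  have := stmt17_key H d hH hHb h0
  rwa [hd0, hd1] at this

/-- coefficient estimate used in the proofs of Theorems 3 and 4.
For a Schwarz function `f(z) = Σ_{n≥1} a_n z^n`, one has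
`|a_{n+1}| ≤ 1 − |a₁|²` for every `n ≥ 1`. -/
theorem stmt_17
    (f : ℂ → ℂ) (a : ℕ → ℂ) (ha0 : a 0 = 0)
    (hf : ∀ z ∈ Metric.ball (0:ℂ) 1, HasSum (fun n => a n * z ^ n) (f z))
    (hfb : ∀ z ∈ Metric.ball (0:ℂ) 1, ‖f z‖ ≤ 1) :
    ∀ n : ℕ, 1 ≤ n → ‖a (n + 1)‖ ≤ 1 - ‖a 1‖ ^ 2 := by
  intro n hn
  have hcoef : ∀ m, ‖a m‖ ≤ 1 := stmt17_coeff_le f a hf hfb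
  have key : ∀ r : ℝ, 0 < r → r < 1 →
      ‖a (n + 1)‖ * r ^ (n + 1) ≤ 1 - ‖a 1‖ ^ 2 * r ^ 2 := by
    intro r hr0 hr1
    set fr : ℂ → ℂ := fun z => f ((r : ℂ) * z) with hfrdef
    set ar : ℕ → ℂ := fun m => a m * (r : ℂ) ^ m with hardef
    have har0 : ar 0 = 0 := by simp [hardef, ha0]
    have hmem : ∀ z ∈ ball (0:ℂ) 1, (r : ℂ) * z ∈ ball (0:ℂ) 1 := by
      intro z hz
      rw [mem_ball_zero_iff] at hz ⊢
      rw [norm_mul, Complex.norm_real, Real.norm_eq_abs, _root_.abs_of_pos hr0]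
      nlinarith [norm_nonneg z]
    have hfr : ∀ z ∈ ball (0:ℂ) 1, HasSum (fun m => ar m * z ^ m) (fr z) := by
      intro z hz
      have := hf _ (hmem z hz)
      rw [hfrdef]
      convert this using 2 with m
      rw [hardef]
      simp only [mul_pow]
      ring
    have hfrb : ∀ z ∈ ball (0:ℂ) 1, ‖fr z‖ ≤ 1 :=
      fun z hz => hfb _ (hmem z hz)
    have hlt : ‖ar 1‖ < 1 := by
      rw [hardef]
      simp only [pow_one, norm_mul, Complex.norm_real, Real.norm_eq_abs, _root_.abs_of_pos hr0]
      nlinarith [hcoef 1, norm_nonneg (a 1)]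
    have := stmt17_main fr ar har0 hfr hfrb hlt n hn
    rw [hardef] at this
    simp only [norm_mul, norm_pow, Complex.norm_real, Real.norm_eq_abs, _root_.abs_of_pos hr0] at this
    calc ‖a (n + 1)‖ * r ^ (n + 1)
        ≤ 1 - (‖a 1‖ * r) ^ 2 := by
          convert this using 2
          ring
      _ = 1 - ‖a 1‖ ^ 2 * r ^ 2 := by ring
  have htend1 : Filter.Tendsto (fun r : ℝ => ‖a (n + 1)‖ * r ^ (n + 1))
      (nhdsWithin 1 (Set.Iio 1)) (nhds (‖a (n + 1)‖)) := by
    have : Filter.Tendsto (fun r : ℝ => ‖a (n + 1)‖ * r ^ (n + 1)) (nhds 1)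
        (nhds (‖a (n + 1)‖ * 1 ^ (n + 1))) :=
      (continuous_const.mul (continuous_pow (n + 1))).tendsto 1
    simpa using this.mono_left nhdsWithin_le_nhds
  have htend2 : Filter.Tendsto (fun r : ℝ => 1 - ‖a 1‖ ^ 2 * r ^ 2)
      (nhdsWithin 1 (Set.Iio 1)) (nhds (1 - ‖a 1‖ ^ 2)) := by
    have : Filter.Tendsto (fun r : ℝ => 1 - ‖a 1‖ ^ 2 * r ^ 2) (nhds 1)
        (nhds (1 - ‖a 1‖ ^ 2 * 1 ^ 2)) :=
      (continuous_const.sub (continuous_const.mul (continuous_pow 2))).tendsto 1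
    simpa using this.mono_left nhdsWithin_le_nhds
  refine le_of_tendsto_of_tendsto htend1 htend2 ?_
  filter_upwards [Ioo_mem_nhdsLT_of_mem (by norm_num : (1:ℝ) ∈ Set.Ioc (0:ℝ) 1)] with r hr
  exact key r hr.1 hr.2
end
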